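/- arXiv:2603.23312 — 6 statements merged into one kernel-verified Lean document; each statement's English description precedes it below -/
import Mathlib

section
/- Let t0 ≥ 0, T > t0, φᵏ ⇀ φ⁰ weak-* in L^∞([−θ,0], ℝⁿ), and x : [t0,T] → ℝⁿ measurable and essentially bounded. Define 𝗑ᵏ = φᵏ ⋄_{t0} x (concatenation). Then for every ε > 0 there exists w ∈ ℕ such that ‖𝗑ᵏ_{t0+q} − 𝗑⁰_{t0+q}‖_* < ε for all q ∈ [0, T−t0] and all k ≥ w; i.e., the shifted segments converge weak-* uniformly over the shift parameter q. -/
open MeasureTheory Set Filter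
open scoped ENNReal NNReal

/-- Segment at time `t0 + q` (as a function of `s ∈ [−θ,0]`) of the concatenation
`ψ ⋄_{t0} x`: it equals `ψ (q+s)` when `t0+q+s < t0` and `x (t0+q+s)` otherwise. -/
noncomputable def seg7 (n : ℕ) (t0 : ℝ) (x ψ : ℝ → (Fin n → ℝ)) (q s : ℝ) : Fin n → ℝ :=
  if q + s < 0 then ψ (q + s) else x (t0 + q + s)

section AuxStmt7

variable {n : ℕ}

lemma aux_ae_bound {μ : Measure ℝ} {f : ℝ → Fin n → ℝ} (hf : MemLp f ⊤ μ) :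
    ∀ᵐ s ∂μ, ‖f s‖ ≤ (eLpNorm f ⊤ μ).toReal := by
  have hne : eLpNormEssSup f μ ≠ ⊤ := by
    rw [← eLpNorm_exponent_top]; exact hf.2.ne
  filter_upwards [ae_le_eLpNormEssSup (f := f) (μ := μ)] with s hs
  have h2 := ENNReal.toReal_mono hne hs
  simpa [eLpNorm_exponent_top] using h2

lemma aux_pair_aesm {μ : Measure ℝ} {h f : ℝ → Fin n → ℝ} (hh : AEStronglyMeasurable h μ)
    (hf : AEStronglyMeasurable f μ) :
    AEStronglyMeasurable (fun s => ∑ j, h s j * f s j) μ :=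
  Finset.aestronglyMeasurable_fun_sum _ fun j _ =>
    ((continuous_apply j).comp_aestronglyMeasurable hh).mul
      ((continuous_apply j).comp_aestronglyMeasurable hf)

lemma aux_pair_ptbound {h f : ℝ → Fin n → ℝ} {C : ℝ} (s : ℝ) (hC : ‖f s‖ ≤ C) (hC0 : 0 ≤ C) :
    ‖∑ j, h s j * f s j‖ ≤ (n * C) * ‖h s‖ := by
  calc ‖∑ j, h s j * f s j‖ ≤ ∑ j, ‖h s j * f s j‖ := norm_sum_le _ _
    _ ≤ ∑ _j : Fin n, C * ‖h s‖ := by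
        refine Finset.sum_le_sum fun j _ => ?_
        rw [norm_mul]
        have h1 : ‖h s j‖ ≤ ‖h s‖ := norm_le_pi_norm (h s) j
        have h2 : ‖f s j‖ ≤ C := le_trans (norm_le_pi_norm (f s) j) hC
        calc ‖h s j‖ * ‖f s j‖ ≤ ‖h s‖ * C :=
              mul_le_mul h1 h2 (norm_nonneg _) (norm_nonneg _)
          _ = C * ‖h s‖ := mul_comm _ _
    _ = (n * C) * ‖h s‖ := by
        rw [Finset.sum_const, Finset.card_univ, Fintype.card_fin, nsmul_eq_mul]; ring

lemma aux_pair_integrable {μ : Measure ℝ} {h f : ℝ → Fin n → ℝ} (hh : Integrable h μ)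
    (hf : MemLp f ⊤ μ) :
    Integrable (fun s => ∑ j, h s j * f s j) μ := by
  refine Integrable.mono' (hh.norm.const_mul (n * (eLpNorm f ⊤ μ).toReal))
    (aux_pair_aesm hh.1 hf.1) ?_
  filter_upwards [aux_ae_bound hf] with s hs
  exact aux_pair_ptbound s hs ENNReal.toReal_nonneg

lemma aux_pair_bound {μ : Measure ℝ} {h f : ℝ → Fin n → ℝ} (hh : Integrable h μ)
    (hf : MemLp f ⊤ μ) :
    |∫ s, ∑ j, h s j * f s j ∂μ| ≤ (n * (eLpNorm f ⊤ μ).toReal) * ∫ s, ‖h s‖ ∂μ := by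
  calc |∫ s, ∑ j, h s j * f s j ∂μ| ≤ ∫ s, ‖∑ j, h s j * f s j‖ ∂μ := by
        rw [← Real.norm_eq_abs]; exact norm_integral_le_integral_norm _
    _ ≤ ∫ s, (n * (eLpNorm f ⊤ μ).toReal) * ‖h s‖ ∂μ := by
        refine integral_mono_ae (aux_pair_integrable hh hf).norm (hh.norm.const_mul _) ?_
        filter_upwards [aux_ae_bound hf] with s hs
        exact aux_pair_ptbound s hs ENNReal.toReal_nonneg
    _ = (n * (eLpNorm f ⊤ μ).toReal) * ∫ s, ‖h s‖ ∂μ := integral_const_mul _ _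

lemma aux_pair_sub {μ : Measure ℝ} {h1 h2 f : ℝ → Fin n → ℝ} (hh1 : Integrable h1 μ)
    (hh2 : Integrable h2 μ) (hf : MemLp f ⊤ μ) :
    (∫ s, ∑ j, (h1 s j - h2 s j) * f s j ∂μ)
      = (∫ s, ∑ j, h1 s j * f s j ∂μ) - ∫ s, ∑ j, h2 s j * f s j ∂μ := by
  rw [← integral_sub (aux_pair_integrable hh1 hf) (aux_pair_integrable hh2 hf)]
  refine integral_congr_ae (Eventually.of_forall fun s => ?_)
  show ∑ j, (h1 s j - h2 s j) * f s j = (∑ j, h1 s j * f s j) - ∑ j, h2 s j * f s j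
  rw [← Finset.sum_sub_distrib]
  exact Finset.sum_congr rfl fun j _ => by ring

noncomputable def pairCLM (n : ℕ) (μ : Measure ℝ) (f : ℝ → Fin n → ℝ) (hf : MemLp f ⊤ μ) :
    (Lp (Fin n → ℝ) 1 μ) →L[ℝ] ℝ :=
  LinearMap.mkContinuous
    { toFun := fun h => ∫ s, ∑ j, (h : ℝ → Fin n → ℝ) s j * f s j ∂μ
      map_add' := fun h1 h2 => by
        rw [← integral_add (aux_pair_integrable (L1.integrable_coeFn h1) hf)
          (aux_pair_integrable (L1.integrable_coeFn h2) hf)]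
        refine integral_congr_ae ?_
        filter_upwards [Lp.coeFn_add h1 h2] with s hs
        rw [hs]
        show ∑ j, ((h1 : ℝ → Fin n → ℝ) s + (h2 : ℝ → Fin n → ℝ) s) j * f s j
          = (∑ j, (h1 : ℝ → Fin n → ℝ) s j * f s j) + ∑ j, (h2 : ℝ → Fin n → ℝ) s j * f s j
        rw [← Finset.sum_add_distrib]
        exact Finset.sum_congr rfl fun j _ => by simp [Pi.add_apply]; ring
      map_smul' := fun c h => by
        simp only [RingHom.id_apply, smul_eq_mul]
        rw [← integral_const_mul]
        refine integral_congr_ae ?_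
        filter_upwards [Lp.coeFn_smul c h] with s hs
        rw [hs]
        show ∑ j, (c • (h : ℝ → Fin n → ℝ) s) j * f s j = c * ∑ j, (h : ℝ → Fin n → ℝ) s j * f s j
        rw [Finset.mul_sum]
        exact Finset.sum_congr rfl fun j _ => by simp [Pi.smul_apply, smul_eq_mul]; ring }
    (n * (eLpNorm f ⊤ μ).toReal)
    (fun h => by
      have hb := aux_pair_bound (L1.integrable_coeFn h) hf
      rw [Real.norm_eq_abs]
      calc |∫ s, ∑ j, (h : ℝ → Fin n → ℝ) s j * f s j ∂μ|
          ≤ (n * (eLpNorm f ⊤ μ).toReal) * ∫ s, ‖(h : ℝ → Fin n → ℝ) s‖ ∂μ := hb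
        _ = (n * (eLpNorm f ⊤ μ).toReal) * ‖h‖ := by rw [L1.norm_eq_integral_norm])

lemma pairCLM_apply (n : ℕ) (μ : Measure ℝ) (f : ℝ → Fin n → ℝ) (hf : MemLp f ⊤ μ)
    (h : Lp (Fin n → ℝ) 1 μ) :
    pairCLM n μ f hf h = ∫ s, ∑ j, (h : ℝ → Fin n → ℝ) s j * f s j ∂μ := rfl

lemma pairCLM_toL1 (n : ℕ) (μ : Measure ℝ) (f : ℝ → Fin n → ℝ) (hf : MemLp f ⊤ μ)
    {h : ℝ → Fin n → ℝ} (hh : Integrable h μ) :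
    pairCLM n μ f hf (hh.toL1 h) = ∫ s, ∑ j, h s j * f s j ∂μ := by
  rw [pairCLM_apply]
  refine integral_congr_ae ?_
  filter_upwards [hh.coeFn_toL1] with s hs
  rw [hs]

lemma aux_BS (μ : Measure ℝ) (φ : ℕ → ℝ → Fin n → ℝ) (φ0 : ℝ → Fin n → ℝ)
    (hm : ∀ k, MemLp (φ k) ⊤ μ) (hm0 : MemLp φ0 ⊤ μ)
    (hconv : ∀ h : ℝ → (Fin n → ℝ), Integrable h μ →
      Tendsto (fun k => ∫ s, ∑ j, h s j * φ k s j ∂μ) atTop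
        (nhds (∫ s, ∑ j, h s j * φ0 s j ∂μ))) :
    ∃ B : ℝ, 0 ≤ B ∧ ∀ (h : ℝ → Fin n → ℝ), Integrable h μ → ∀ k,
      |(∫ s, ∑ j, h s j * φ k s j ∂μ) - ∫ s, ∑ j, h s j * φ0 s j ∂μ|
        ≤ B * ∫ s, ‖h s‖ ∂μ := by
  have hpt : ∀ f : Lp (Fin n → ℝ) 1 μ, ∃ C, ∀ k, ‖pairCLM n μ (φ k) (hm k) f‖ ≤ C := by
    intro f
    obtain ⟨C, hC⟩ := ((hconv _ (L1.integrable_coeFn f)).norm).bddAbove_range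
    refine ⟨C, fun k => ?_⟩
    have : ‖∫ s, ∑ j, (f : ℝ → Fin n → ℝ) s j * φ k s j ∂μ‖ ∈
        Set.range fun k => ‖∫ s, ∑ j, (f : ℝ → Fin n → ℝ) s j * φ k s j ∂μ‖ := ⟨k, rfl⟩
    exact hC this
  obtain ⟨C', hC'⟩ := banach_steinhaus hpt
  have hC'0 : 0 ≤ C' := le_trans (norm_nonneg _) (hC' 0)
  refine ⟨C' + n * (eLpNorm φ0 ⊤ μ).toReal, by positivity, fun h hh k => ?_⟩
  have h1 : |∫ s, ∑ j, h s j * φ k s j ∂μ| ≤ C' * ∫ s, ‖h s‖ ∂μ := by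
    have e := pairCLM_toL1 n μ (φ k) (hm k) hh
    calc |∫ s, ∑ j, h s j * φ k s j ∂μ| = ‖pairCLM n μ (φ k) (hm k) (hh.toL1 h)‖ := by
          rw [e, Real.norm_eq_abs]
      _ ≤ ‖pairCLM n μ (φ k) (hm k)‖ * ‖hh.toL1 h‖ := ContinuousLinearMap.le_opNorm _ _
      _ ≤ C' * ‖hh.toL1 h‖ := mul_le_mul_of_nonneg_right (hC' k) (norm_nonneg _)
      _ = C' * ∫ s, ‖h s‖ ∂μ := by rw [L1.norm_of_fun_eq_integral_norm]
  have h2 := aux_pair_bound hh hm0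
  have hnn : 0 ≤ ∫ s, ‖h s‖ ∂μ := integral_nonneg fun s => norm_nonneg _
  calc |(∫ s, ∑ j, h s j * φ k s j ∂μ) - ∫ s, ∑ j, h s j * φ0 s j ∂μ|
      ≤ |∫ s, ∑ j, h s j * φ k s j ∂μ| + |∫ s, ∑ j, h s j * φ0 s j ∂μ| := abs_sub _ _
    _ ≤ C' * ∫ s, ‖h s‖ ∂μ + (n * (eLpNorm φ0 ⊤ μ).toReal) * ∫ s, ‖h s‖ ∂μ := add_le_add h1 h2
    _ = (C' + n * (eLpNorm φ0 ⊤ μ).toReal) * ∫ s, ‖h s‖ ∂μ := by ring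

lemma aux_trans (F : ℝ → Fin n → ℝ) (hF : Integrable F (volume : Measure ℝ)) :
    Tendsto (fun d : ℝ => ∫ t, ‖F (t - d) - F t‖) (nhds 0) (nhds 0) := by
  set FL : Lp (Fin n → ℝ) 1 (volume : Measure ℝ) :=
    (memLp_one_iff_integrable.mpr hF).toLp F with hFL
  set cm : C(ℝ × ℝ, ℝ) := ⟨fun p => p.2 - p.1, by fun_prop⟩ with hcm
  have hmp : ∀ d : ℝ, MeasurePreserving (cm.curry d) volume volume := fun d =>
    measurePreserving_sub_right volume d
  have hcont : Continuous fun d : ℝ =>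
      Lp.compMeasurePreserving (cm.curry d) (hmp d) FL :=
    Continuous.compMeasurePreservingLp continuous_const cm.curry.continuous hmp ENNReal.one_ne_top
  set Ψ : ℝ → Lp (Fin n → ℝ) 1 (volume : Measure ℝ) :=
    fun d => Lp.compMeasurePreserving (cm.curry d) (hmp d) FL with hΨ
  have key : ∀ d : ℝ, (∫ t, ‖F (t - d) - F t‖) = ‖Ψ d - Ψ 0‖ := by
    intro d
    rw [L1.norm_eq_integral_norm]
    refine integral_congr_ae ?_
    have e1 : ∀ e : ℝ, (Ψ e : ℝ → Fin n → ℝ) =ᵐ[volume] fun t => F (t - e) := by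
      intro e
      have h1 := Lp.coeFn_compMeasurePreserving FL (hmp e)
      have h2 : (FL : ℝ → Fin n → ℝ) =ᵐ[volume] F := (memLp_one_iff_integrable.mpr hF).coeFn_toLp
      have h3 : ((FL : ℝ → Fin n → ℝ) ∘ (cm.curry e)) =ᵐ[volume] (F ∘ (cm.curry e)) :=
        (hmp e).quasiMeasurePreserving.ae_eq_comp h2
      exact h1.trans h3
    filter_upwards [Lp.coeFn_sub (Ψ d) (Ψ 0), e1 d, e1 0] with t h1 h2 h3
    rw [h1]
    show ‖F (t - d) - F t‖ = ‖(Ψ d : ℝ → Fin n → ℝ) t - (Ψ 0 : ℝ → Fin n → ℝ) t‖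
    rw [h2, h3, sub_zero]
  have h0 : Tendsto (fun d : ℝ => ‖Ψ d - Ψ 0‖) (nhds 0) (nhds 0) := by
    have : Tendsto Ψ (nhds 0) (nhds (Ψ 0)) := hcont.tendsto 0
    have h2 : Tendsto (fun d : ℝ => Ψ d - Ψ 0) (nhds 0) (nhds (Ψ 0 - Ψ 0)) :=
      this.sub tendsto_const_nhds
    simpa using h2.norm
  exact h0.congr fun d => (key d).symm

lemma aux_shrink (F : ℝ → Fin n → ℝ) (hF : Integrable F (volume : Measure ℝ)) (c : ℝ)
    {δ : ℝ} (hδ : 0 < δ) :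
    ∃ d > 0, (∫ t in Icc (c - d) (c + d), ‖F t‖) < δ := by
  have hlim : Tendsto (fun m : ℕ =>
      ∫ t, (Icc (c - 1/((m:ℝ)+1)) (c + 1/((m:ℝ)+1))).indicator (fun t => ‖F t‖) t) atTop (nhds 0) := by
    have h0 : (0 : ℝ) = ∫ _t : ℝ, (0 : ℝ) := by simp
    rw [h0]
    refine tendsto_integral_of_dominated_convergence (fun t => ‖F t‖)
      (fun m => (hF.1.norm.indicator measurableSet_Icc)) hF.norm ?_ ?_
    · intro m
      refine Eventually.of_forall fun t => ?_
      by_cases ht : t ∈ Icc (c - 1/((m:ℝ)+1)) (c + 1/((m:ℝ)+1))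
      · rw [indicator_of_mem ht]; simp
      · rw [indicator_of_notMem ht]; simp
    · have hae : ∀ᵐ t : ℝ, t ≠ c := by
        have : (volume : Measure ℝ) {c} = 0 := measure_singleton c
        filter_upwards [measure_eq_zero_iff_ae_notMem.mp this] with t ht
        simpa using ht
      filter_upwards [hae] with t ht
      obtain ⟨m0, hm0⟩ := exists_nat_one_div_lt (abs_pos.mpr (sub_ne_zero.mpr ht))
      refine tendsto_const_nhds.congr' ?_
      filter_upwards [eventually_ge_atTop m0] with m hm
      have hnot : t ∉ Icc (c - 1/((m:ℝ)+1)) (c + 1/((m:ℝ)+1)) := by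
        intro hmem
        have h1 : 1/((m:ℝ)+1) ≤ 1/((m0:ℝ)+1) := by
          apply one_div_le_one_div_of_le (by positivity)
          exact_mod_cast Nat.succ_le_succ hm
        have h2 : |t - c| ≤ 1/((m:ℝ)+1) := by
          rw [abs_le]; constructor <;> [linarith [hmem.1]; linarith [hmem.2]]
        linarith
      rw [indicator_of_notMem hnot]
  obtain ⟨m, hm⟩ := (hlim.eventually_lt_const hδ).exists
  refine ⟨1/((m:ℝ)+1), by positivity, ?_⟩
  rw [← integral_indicator measurableSet_Icc]
  exact hm

end AuxStmt7

/-- If `φᵏ ⇀ φ⁰` weak-* in `L^∞([−θ,0],ℝⁿ)` and `x` is measurable and essentially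
bounded on `[t0,T]`, then the segments of the concatenations `φᵏ ⋄_{t0} x` converge
weak-* (in the metrizing norm `‖·‖_*`) to those of `φ⁰ ⋄_{t0} x`, uniformly over the
shift `q ∈ [0, T−t0]`. -/

theorem stmt_7 (n : ℕ) (θ : ℝ) (hθ : 0 < θ) (t0 T : ℝ) (ht0 : 0 ≤ t0) (hT : t0 < T)
    (g : ℕ → ℝ → (Fin n → ℝ))
    (hgi : ∀ i, Integrable (g i) (volume.restrict (Set.Icc (-θ) 0)))
    (hgb : ∀ i, (∫ s in Set.Icc (-θ) 0, ‖g i s‖) ≤ 1)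
    (hdense : ∀ h : ℝ → (Fin n → ℝ), Integrable h (volume.restrict (Set.Icc (-θ) 0)) →
      (∫ s in Set.Icc (-θ) 0, ‖h s‖) ≤ 1 → ∀ ε > 0, ∃ i,
        (∫ s in Set.Icc (-θ) 0, ‖h s - g i s‖) < ε)
    (φ : ℕ → ℝ → (Fin n → ℝ)) (φ0 : ℝ → (Fin n → ℝ))
    (hm : ∀ k, MemLp (φ k) ⊤ (volume.restrict (Set.Icc (-θ) 0)))
    (hm0 : MemLp φ0 ⊤ (volume.restrict (Set.Icc (-θ) 0)))
    (hconv : ∀ h : ℝ → (Fin n → ℝ), Integrable h (volume.restrict (Set.Icc (-θ) 0)) →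
      Tendsto (fun k => ∫ s in Set.Icc (-θ) 0, ∑ j, h s j * φ k s j) atTop
        (nhds (∫ s in Set.Icc (-θ) 0, ∑ j, h s j * φ0 s j)))
    (x : ℝ → (Fin n → ℝ))
    (hxm : AEStronglyMeasurable x (volume.restrict (Set.Icc t0 T)))
    (hxb : eLpNorm x ⊤ (volume.restrict (Set.Icc t0 T)) < ⊤) :
    ∀ ε > 0, ∃ w : ℕ, ∀ q ∈ Set.Icc (0 : ℝ) (T - t0), ∀ k ≥ w,
      (∑' i : ℕ, (1 / 2 : ℝ) ^ (i + 1) *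
        |∫ s in Set.Icc (-θ) 0, ∑ j, g i s j *
          (seg7 n t0 x (φ k) q s j - seg7 n t0 x φ0 q s j)|) < ε := by
  classical
  intro ε hε
  set μθ : Measure ℝ := volume.restrict (Set.Icc (-θ) 0) with hμθ
  obtain ⟨B, hB0, hB⟩ := aux_BS μθ φ φ0 hm hm0 hconv
  set G : ℕ → ℝ → Fin n → ℝ := fun i => (Icc (-θ) 0).indicator (g i) with hGdef
  have hGint : ∀ i, Integrable (G i) (volume : Measure ℝ) := fun i =>
    MeasureTheory.IntegrableOn.integrable_indicator (hgi i) measurableSet_Icc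
  set H : ℕ → ℝ → ℝ → Fin n → ℝ :=
    fun i q => (Ico (q - θ) 0).indicator (fun t => G i (t - q)) with hHdef
  have hHint : ∀ i q, Integrable (H i q) (volume : Measure ℝ) := fun i q =>
    (((hGint i).comp_sub_right q).indicator measurableSet_Ico)
  have hHintμ : ∀ i q, Integrable (H i q) μθ := fun i q => (hHint i q).restrict
  -- L¹ norm of H is at most 1
  have hHnorm : ∀ i q, (∫ t, ‖H i q t‖) ≤ 1 := by
    intro i q
    have e1 : (fun t => ‖H i q t‖)
        = fun t => (Ico (q - θ) 0).indicator (fun t => ‖G i (t - q)‖) t := by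
      funext t; simp only [hHdef]; exact norm_indicator_eq_indicator_norm _ _
    rw [e1, integral_indicator measurableSet_Ico]
    calc (∫ t in Ico (q - θ) 0, ‖G i (t - q)‖) ≤ ∫ t, ‖G i (t - q)‖ :=
          setIntegral_le_integral ((hGint i).comp_sub_right q).norm
            (Eventually.of_forall fun t => norm_nonneg _)
      _ = ∫ t, ‖G i t‖ := integral_sub_right_eq_self (fun t => ‖G i t‖) q
      _ = ∫ t in Icc (-θ) 0, ‖g i t‖ := by
          rw [← integral_indicator measurableSet_Icc]
          congr 1; funext t; simp only [hGdef]
          exact norm_indicator_eq_indicator_norm (g i) t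
      _ ≤ 1 := hgb i
  have hHnormμ : ∀ i q, (∫ s, ‖H i q s‖ ∂μθ) ≤ 1 := fun i q =>
    le_trans (setIntegral_le_integral (hHint i q).norm
      (Eventually.of_forall fun t => norm_nonneg _)) (hHnorm i q)
  -- rewriting the segment pairing
  have Peq : ∀ (i : ℕ), ∀ q ∈ Set.Icc (0 : ℝ) (T - t0), ∀ k,
      (∫ s, (∑ j, g i s j *
          (seg7 n t0 x (φ k) q s j - seg7 n t0 x φ0 q s j)) ∂μθ)
        = (∫ s, ∑ j, H i q s j * φ k s j ∂μθ) - ∫ s, ∑ j, H i q s j * φ0 s j ∂μθ := by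
    intro i q hq k
    obtain ⟨hq0, hq1⟩ := hq
    set Gf : ℝ → ℝ := fun t => ∑ j, H i q t j * (φ k t j - φ0 t j) with hGf
    have step1 : ∀ s ∈ Set.Icc (-θ) 0,
        (∑ j, g i s j * (seg7 n t0 x (φ k) q s j - seg7 n t0 x φ0 q s j)) = Gf (s + q) := by
      intro s hs
      by_cases hc : q + s < 0
      · have hmem : s + q ∈ Ico (q - θ) 0 := ⟨by linarith [hs.1], by linarith⟩
        have hH1 : H i q (s + q) = G i s := by
          simp only [hHdef]
          rw [indicator_of_mem hmem, show s + q - q = s from by ring]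
        have hGs : G i s = g i s := by simp only [hGdef]; exact indicator_of_mem hs _
        simp only [hGf]
        show (∑ j, g i s j * (seg7 n t0 x (φ k) q s j - seg7 n t0 x φ0 q s j))
          = ∑ j, H i q (s + q) j * (φ k (s + q) j - φ0 (s + q) j)
        rw [hH1, hGs]
        refine Finset.sum_congr rfl fun j _ => ?_
        simp only [seg7, if_pos hc]
        rw [add_comm q s]
      · push_neg at hc
        have hnmem : s + q ∉ Ico (q - θ) 0 := fun hmem => absurd hmem.2 (by linarith)
        have hH0 : H i q (s + q) = 0 := by
          simp only [hHdef]
          exact indicator_of_notMem hnmem _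
        simp only [hGf]
        show (∑ j, g i s j * (seg7 n t0 x (φ k) q s j - seg7 n t0 x φ0 q s j))
          = ∑ j, H i q (s + q) j * (φ k (s + q) j - φ0 (s + q) j)
        rw [hH0]
        simp [seg7, if_neg (not_lt.mpr hc)]
    calc (∫ s, (∑ j, g i s j *
            (seg7 n t0 x (φ k) q s j - seg7 n t0 x φ0 q s j)) ∂μθ)
        = ∫ s in Set.Icc (-θ) 0, Gf (s + q) := by
          rw [hμθ]; exact setIntegral_congr_fun measurableSet_Icc step1
      _ = ∫ s, (Icc (-θ) 0).indicator (fun s => Gf (s + q)) s :=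
          (integral_indicator measurableSet_Icc).symm
      _ = ∫ s, ((Icc (q - θ) q).indicator Gf) (s + q) := by
          congr 1; funext s
          by_cases hs : s ∈ Icc (-θ) 0
          · have h2 : s + q ∈ Icc (q - θ) q := ⟨by linarith [hs.1], by linarith [hs.2]⟩
            rw [indicator_of_mem hs, indicator_of_mem h2]
          · have h2 : s + q ∉ Icc (q - θ) q := fun hmem =>
              hs ⟨by linarith [hmem.1], by linarith [hmem.2]⟩
            rw [indicator_of_notMem hs, indicator_of_notMem h2]
      _ = ∫ t, (Icc (q - θ) q).indicator Gf t := integral_add_right_eq_self _ q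
      _ = ∫ t, (Icc (-θ) 0).indicator Gf t := by
          congr 1; funext t
          by_cases h1 : t ∈ Ico (q - θ) 0
          · have e1 : t ∈ Icc (q - θ) q := ⟨h1.1, by linarith [h1.2]⟩
            have e2 : t ∈ Icc (-θ) 0 := ⟨by linarith [h1.1], le_of_lt h1.2⟩
            rw [indicator_of_mem e1, indicator_of_mem e2]
          · have hGf0 : Gf t = 0 := by
              simp only [hGf]
              have h0 : H i q t = 0 := by simp only [hHdef]; exact indicator_of_notMem h1 _
              rw [h0]; simp
            simp [indicator_apply, hGf0]
      _ = ∫ t in Icc (-θ) 0, Gf t := integral_indicator measurableSet_Icc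
      _ = (∫ s, ∑ j, H i q s j * φ k s j ∂μθ) - ∫ s, ∑ j, H i q s j * φ0 s j ∂μθ := by
          have hsub : (Gf : ℝ → ℝ)
              = fun s => (∑ j, H i q s j * φ k s j) - ∑ j, H i q s j * φ0 s j := by
            funext s; simp only [hGf]
            rw [← Finset.sum_sub_distrib]
            exact Finset.sum_congr rfl fun j _ => by ring
          rw [show (∫ t in Icc (-θ) 0, Gf t) = ∫ t, Gf t ∂μθ from rfl, hsub]
          exact integral_sub (aux_pair_integrable (hHintμ i q) (hm k))
            (aux_pair_integrable (hHintμ i q) hm0)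
  -- uniform bound on the pairings
  have Pbound : ∀ i q k,
      |(∫ s, ∑ j, H i q s j * φ k s j ∂μθ) - ∫ s, ∑ j, H i q s j * φ0 s j ∂μθ| ≤ B := by
    intro i q k
    calc |(∫ s, ∑ j, H i q s j * φ k s j ∂μθ) - ∫ s, ∑ j, H i q s j * φ0 s j ∂μθ|
        ≤ B * ∫ s, ‖H i q s‖ ∂μθ := hB _ (hHintμ i q) k
      _ ≤ B * 1 := mul_le_mul_of_nonneg_left (hHnormμ i q) hB0
      _ = B := mul_one B
  -- uniform-in-q convergence for each fixed i
  have head : ∀ i : ℕ, ∀ ε' > (0:ℝ), ∃ w : ℕ, ∀ q ∈ Set.Icc (0:ℝ) (T - t0), ∀ k ≥ w,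
      |(∫ s, ∑ j, H i q s j * φ k s j ∂μθ) - ∫ s, ∑ j, H i q s j * φ0 s j ∂μθ| < ε' := by
    intro i ε' hε'
    set δ : ℝ := ε' / (2 * (B + 1)) with hδdef
    have hδ : 0 < δ := by positivity
    have cont : ∀ q₀ : ℝ, ∃ d > (0:ℝ), ∀ q : ℝ, |q - q₀| < d →
        (∫ t, ‖H i q t - H i q₀ t‖) < δ := by
      intro q₀
      have htr := aux_trans (G i) (hGint i)
      rw [Metric.tendsto_nhds_nhds] at htr
      obtain ⟨d1, hd1pos, hd1⟩ := htr (δ/2) (by positivity)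
      obtain ⟨d2, hd2pos, hd2⟩ := aux_shrink (fun t => G i (t - q₀))
        ((hGint i).comp_sub_right q₀) (q₀ - θ) (show (0:ℝ) < δ/2 by positivity)
      refine ⟨min d1 d2, lt_min hd1pos hd2pos, fun q hqd => ?_⟩
      have hqd1 : |q - q₀| < d1 := lt_of_lt_of_le hqd (min_le_left _ _)
      have hqd2 : |q - q₀| ≤ d2 := le_of_lt (lt_of_lt_of_le hqd (min_le_right _ _))
      have habs := abs_lt.mp (lt_of_lt_of_le hqd (min_le_right _ _))
      have hpt : ∀ t, ‖H i q t - H i q₀ t‖ ≤ ‖G i (t - q) - G i (t - q₀)‖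
          + (Icc (q₀ - θ - d2) (q₀ - θ + d2)).indicator (fun t => ‖G i (t - q₀)‖) t := by
        intro t
        have hind_nn : 0 ≤ (Icc (q₀ - θ - d2) (q₀ - θ + d2)).indicator
            (fun t => ‖G i (t - q₀)‖) t := indicator_nonneg (fun t _ => norm_nonneg _) t
        have e1 : ∀ q1 : ℝ, t ∈ Ico (q1 - θ) 0 → H i q1 t = G i (t - q1) := fun q1 hm1 => by
          simp only [hHdef]; exact indicator_of_mem hm1 _
        have e2 : ∀ q1 : ℝ, t ∉ Ico (q1 - θ) 0 → H i q1 t = 0 := fun q1 hm1 => by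
          simp only [hHdef]; exact indicator_of_notMem hm1 _
        by_cases h1 : t ∈ Ico (q - θ) 0 <;> by_cases h2 : t ∈ Ico (q₀ - θ) 0
        · rw [e1 q h1, e1 q₀ h2]
          exact le_add_of_le_of_nonneg le_rfl hind_nn
        · rw [e1 q h1, e2 q₀ h2, sub_zero]
          have hmem : t ∈ Icc (q₀ - θ - d2) (q₀ - θ + d2) := by
            have ht0 : t < 0 := h1.2
            have htq : q - θ ≤ t := h1.1
            have hlt : t < q₀ - θ := by
              by_contra hcon
              exact h2 ⟨le_of_not_gt hcon, ht0⟩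
            constructor <;> [linarith; linarith]
          rw [indicator_of_mem hmem]
          calc ‖G i (t - q)‖ = ‖(G i (t - q) - G i (t - q₀)) + G i (t - q₀)‖ := by
                rw [sub_add_cancel]
            _ ≤ ‖G i (t - q) - G i (t - q₀)‖ + ‖G i (t - q₀)‖ := norm_add_le _ _
        · rw [e2 q h1, e1 q₀ h2, zero_sub, norm_neg]
          have hmem : t ∈ Icc (q₀ - θ - d2) (q₀ - θ + d2) := by
            have ht0 : t < 0 := h2.2
            have htq : q₀ - θ ≤ t := h2.1
            have hlt : t < q - θ := by
              by_contra hcon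
              exact h1 ⟨le_of_not_gt hcon, ht0⟩
            constructor <;> [linarith; linarith]
          rw [indicator_of_mem hmem]
          exact le_add_of_nonneg_left (norm_nonneg _)
        · rw [e2 q h1, e2 q₀ h2, sub_zero, norm_zero]
          exact add_nonneg (norm_nonneg _) hind_nn
      have hint1 : Integrable (fun t => ‖G i (t - q) - G i (t - q₀)‖) (volume : Measure ℝ) :=
        (((hGint i).comp_sub_right q).sub ((hGint i).comp_sub_right q₀)).norm
      have hint2 : Integrable ((Icc (q₀ - θ - d2) (q₀ - θ + d2)).indicator
          (fun t => ‖G i (t - q₀)‖)) (volume : Measure ℝ) :=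
        (((hGint i).comp_sub_right q₀).norm).indicator measurableSet_Icc
      have hterm1 : (∫ t, ‖G i (t - q) - G i (t - q₀)‖) < δ/2 := by
        have e1 : (∫ t, ‖G i (t - q) - G i (t - q₀)‖)
            = ∫ t, ‖G i (t - (q - q₀)) - G i t‖ := by
          rw [← integral_sub_right_eq_self (fun t => ‖G i (t - (q - q₀)) - G i t‖) q₀]
          congr 1; funext t
          rw [show t - q₀ - (q - q₀) = t - q from by ring]
        have h2 := hd1 (show dist (q - q₀) 0 < d1 by rwa [Real.dist_eq, sub_zero])
        rw [Real.dist_eq, sub_zero] at h2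
        rw [e1]
        calc (∫ t, ‖G i (t - (q - q₀)) - G i t‖)
            ≤ |∫ t, ‖G i (t - (q - q₀)) - G i t‖| := le_abs_self _
          _ < δ/2 := h2
      have hterm2 : (∫ t, (Icc (q₀ - θ - d2) (q₀ - θ + d2)).indicator
          (fun t => ‖G i (t - q₀)‖) t) < δ/2 := by
        rw [integral_indicator measurableSet_Icc]
        exact hd2
      calc (∫ t, ‖H i q t - H i q₀ t‖)
          ≤ ∫ t, (‖G i (t - q) - G i (t - q₀)‖
              + (Icc (q₀ - θ - d2) (q₀ - θ + d2)).indicator (fun t => ‖G i (t - q₀)‖) t) :=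
            integral_mono ((hHint i q).sub (hHint i q₀)).norm (hint1.add hint2) hpt
        _ = (∫ t, ‖G i (t - q) - G i (t - q₀)‖)
              + ∫ t, (Icc (q₀ - θ - d2) (q₀ - θ + d2)).indicator
                (fun t => ‖G i (t - q₀)‖) t := integral_add hint1 hint2
        _ < δ/2 + δ/2 := add_lt_add hterm1 hterm2
        _ = δ := by ring
    choose d hdpos hd using cont
    obtain ⟨tset, htsub, hcover⟩ := (isCompact_Icc (a := (0:ℝ)) (b := T - t0)).elim_nhds_subcover
      (fun q₀ => Metric.ball q₀ (d q₀)) (fun q₀ _ => Metric.ball_mem_nhds q₀ (hdpos q₀))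
    have hw : ∀ q₀ : ℝ, ∃ w : ℕ, ∀ k ≥ w,
        |(∫ s, ∑ j, H i q₀ s j * φ k s j ∂μθ) - ∫ s, ∑ j, H i q₀ s j * φ0 s j ∂μθ| < ε'/2 := by
      intro q₀
      obtain ⟨w, hw⟩ := Metric.tendsto_atTop.mp (hconv (H i q₀) (hHintμ i q₀))
        (ε'/2) (by positivity)
      exact ⟨w, fun k hk => by have := hw k hk; rwa [Real.dist_eq] at this⟩
    choose wq hwq using hw
    refine ⟨tset.sup wq, fun q hqK k hk => ?_⟩
    have hqmem := hcover hqK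
    simp only [Set.mem_iUnion] at hqmem
    obtain ⟨q₀, hq₀t, hqball⟩ := hqmem
    have hk0 : wq q₀ ≤ k := le_trans (Finset.le_sup hq₀t) hk
    have hclose : (∫ t, ‖H i q t - H i q₀ t‖) < δ :=
      hd q₀ q (by rwa [Metric.mem_ball, Real.dist_eq] at hqball)
    have hcloseμ : (∫ s, ‖H i q s - H i q₀ s‖ ∂μθ) ≤ δ :=
      le_of_lt (lt_of_le_of_lt (setIntegral_le_integral ((hHint i q).sub (hHint i q₀)).norm
        (Eventually.of_forall fun t => norm_nonneg _)) hclose)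
    have hdiffint : Integrable (fun s => H i q s - H i q₀ s) μθ :=
      (hHintμ i q).sub (hHintμ i q₀)
    have hBdiff := hB _ hdiffint k
    have hlin1 : (∫ s, ∑ j, (fun s => H i q s - H i q₀ s) s j * φ k s j ∂μθ)
        = (∫ s, ∑ j, H i q s j * φ k s j ∂μθ) - ∫ s, ∑ j, H i q₀ s j * φ k s j ∂μθ := by
      rw [← aux_pair_sub (hHintμ i q) (hHintμ i q₀) (hm k)]
      exact integral_congr_ae (Eventually.of_forall fun s => by simp [Pi.sub_apply])
    have hlin0 : (∫ s, ∑ j, (fun s => H i q s - H i q₀ s) s j * φ0 s j ∂μθ)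
        = (∫ s, ∑ j, H i q s j * φ0 s j ∂μθ) - ∫ s, ∑ j, H i q₀ s j * φ0 s j ∂μθ := by
      rw [← aux_pair_sub (hHintμ i q) (hHintμ i q₀) hm0]
      exact integral_congr_ae (Eventually.of_forall fun s => by simp [Pi.sub_apply])
    rw [hlin1, hlin0] at hBdiff
    have hBδ : B * ∫ s, ‖H i q s - H i q₀ s‖ ∂μθ ≤ ε'/2 := by
      calc B * ∫ s, ‖H i q s - H i q₀ s‖ ∂μθ ≤ B * δ :=
            mul_le_mul_of_nonneg_left hcloseμ hB0
        _ ≤ (B + 1) * δ := by nlinarith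
        _ = ε'/2 := by rw [hδdef]; field_simp
    have hnear := hwq q₀ k hk0
    set Ak := ∫ s, ∑ j, H i q s j * φ k s j ∂μθ with hAk
    set A0 := ∫ s, ∑ j, H i q s j * φ0 s j ∂μθ with hA0
    set Bk := ∫ s, ∑ j, H i q₀ s j * φ k s j ∂μθ with hBk
    set B0 := ∫ s, ∑ j, H i q₀ s j * φ0 s j ∂μθ with hB0'
    calc |Ak - A0| = |((Ak - Bk) - (A0 - B0)) + (Bk - B0)| := by ring_nf
      _ ≤ |(Ak - Bk) - (A0 - B0)| + |Bk - B0| := abs_add_le _ _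
      _ < ε'/2 + ε'/2 := add_lt_add_of_le_of_lt (le_trans hBdiff hBδ) hnear
      _ = ε' := by ring
  -- choose the geometric cutoff
  obtain ⟨N, hN⟩ : ∃ N : ℕ, (1/2:ℝ)^N * B < ε/2 := by
    have h2 : Tendsto (fun N : ℕ => (1/2:ℝ)^N * B) atTop (nhds 0) := by
      have := (tendsto_pow_atTop_nhds_zero_of_lt_one (by norm_num : (0:ℝ) ≤ 1/2)
        (by norm_num : (1/2:ℝ) < 1)).mul_const B
      simpa using this
    exact (h2.eventually_lt_const (by positivity : (0:ℝ) < ε/2)).exists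
  have hws : ∀ i : ℕ, ∃ w : ℕ, ∀ q ∈ Set.Icc (0:ℝ) (T - t0), ∀ k ≥ w,
      |(∫ s, ∑ j, H i q s j * φ k s j ∂μθ) - ∫ s, ∑ j, H i q s j * φ0 s j ∂μθ| < ε/2 :=
    fun i => head i (ε/2) (by positivity)
  choose ws hwsp using hws
  refine ⟨(Finset.range N).sup ws, fun q hq k hk => ?_⟩
  have hrw : (fun i : ℕ => (1 / 2 : ℝ) ^ (i + 1) *
        |∫ s in Set.Icc (-θ) 0, ∑ j, g i s j *
          (seg7 n t0 x (φ k) q s j - seg7 n t0 x φ0 q s j)|)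
      = fun i : ℕ => (1 / 2 : ℝ) ^ (i + 1) *
        |(∫ s, ∑ j, H i q s j * φ k s j ∂μθ) - ∫ s, ∑ j, H i q s j * φ0 s j ∂μθ| := by
    funext i
    rw [show (∫ s in Set.Icc (-θ) 0, ∑ j, g i s j *
        (seg7 n t0 x (φ k) q s j - seg7 n t0 x φ0 q s j))
      = ∫ s, (∑ j, g i s j * (seg7 n t0 x (φ k) q s j - seg7 n t0 x φ0 q s j)) ∂μθ from rfl]
    rw [Peq i q hq k]
  rw [hrw]
  set F : ℕ → ℝ := fun i => (1 / 2 : ℝ) ^ (i + 1) *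
    |(∫ s, ∑ j, H i q s j * φ k s j ∂μθ) - ∫ s, ∑ j, H i q s j * φ0 s j ∂μθ| with hF
  have hFnn : ∀ i, 0 ≤ F i := fun i => mul_nonneg (by positivity) (abs_nonneg _)
  have hFb : ∀ i, F i ≤ (1/2:ℝ)^(i+1) * B := fun i =>
    mul_le_mul_of_nonneg_left (Pbound i q k) (by positivity)
  have hgeom : Summable (fun i : ℕ => (1/2:ℝ)^(i+1) * B) := by
    have : Summable (fun i : ℕ => ((1/2:ℝ) * B) * (1/2)^i) :=
      (summable_geometric_of_lt_one (by norm_num) (by norm_num)).mul_left _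
    exact this.congr fun i => by rw [pow_succ]; ring
  have hFsum : Summable F := Summable.of_nonneg_of_le hFnn hFb hgeom
  rw [← Summable.sum_add_tsum_nat_add N hFsum]
  have hhead : (∑ i ∈ Finset.range N, F i) ≤ ε/2 := by
    calc (∑ i ∈ Finset.range N, F i) ≤ ∑ i ∈ Finset.range N, (1/2:ℝ)^(i+1) * (ε/2) := by
          refine Finset.sum_le_sum fun i hi => ?_
          exact mul_le_mul_of_nonneg_left
            (le_of_lt (hwsp i q hq k (le_trans (Finset.le_sup hi) hk))) (by positivity)
      _ = (∑ i ∈ Finset.range N, (1/2:ℝ)^(i+1)) * (ε/2) := by rw [← Finset.sum_mul]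
      _ ≤ 1 * (ε/2) := by
          refine mul_le_mul_of_nonneg_right ?_ (by positivity)
          have hgs : ∀ M : ℕ, (∑ i ∈ Finset.range M, (1/2:ℝ)^(i+1)) = 1 - (1/2)^M := by
            intro M
            induction M with
            | zero => simp
            | succ m ih => rw [Finset.sum_range_succ, ih]; ring
          rw [hgs N]
          have := pow_nonneg (by norm_num : (0:ℝ) ≤ 1/2) N
          linarith
      _ = ε/2 := one_mul _
  have htail : (∑' i : ℕ, F (i + N)) ≤ (1/2:ℝ)^N * B := by
    have hsum2 : Summable (fun i => F (i + N)) := (summable_nat_add_iff N).mpr hFsum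
    have hsumg : Summable (fun i : ℕ => (1/2:ℝ)^(i + N + 1) * B) :=
      (summable_nat_add_iff N).mpr hgeom
    calc (∑' i : ℕ, F (i + N)) ≤ ∑' i : ℕ, (1/2:ℝ)^(i + N + 1) * B :=
          Summable.tsum_le_tsum (fun i => hFb (i + N)) hsum2 hsumg
      _ = (1/2:ℝ)^N * ∑' i : ℕ, (1/2:ℝ)^(i+1) * B := by
          rw [← tsum_mul_left]
          exact tsum_congr fun i => by
            rw [← mul_assoc, ← pow_add, show N + (i + 1) = i + N + 1 from by omega]
      _ ≤ (1/2:ℝ)^N * B := by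
          have hval : (∑' i : ℕ, (1/2:ℝ)^(i+1) * B) = B := by
            rw [tsum_congr (fun i => show (1/2:ℝ)^(i+1) * B = ((1/2:ℝ)*B) * (1/2)^i from by
              rw [pow_succ]; ring), tsum_mul_left, tsum_geometric_two]
            ring
          rw [hval]
  calc (∑ i ∈ Finset.range N, F i) + ∑' i : ℕ, F (i + N)
      ≤ ε/2 + (1/2:ℝ)^N * B := add_le_add hhead htail
    _ < ε/2 + ε/2 := by linarith
    _ = ε := by ring
end

section
/- Let h ∈ L¹([t0, t0+θ], ℝ^{1×n}) (row vector valued) and R > 0. For t ∈ [t0, t0+θ] and φ ∈ B_R^{L^∞([−θ,0],ℝⁿ)}, define 𝓛*(t,φ) = ∫_{−θ}^0 h*(r) χ(t,r) φ(r) dr, where h*(r) = h(r + t0 + θ) and χ(t,r) = 1 if −θ ≤ r ≤ t − t0 − θ and 0 otherwise. Then 𝓛* is continuous on [t0, t0+θ] × B_R^{L^∞} with the weak-* topology on the ball, and hence uniformly continuous there. -/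
open MeasureTheory Set Filter

namespace Stmt14Aux

variable {n : ℕ} {μ : MeasureTheory.Measure ℝ}

lemma ae_norm_le {φ : ℝ → Fin n → ℝ} {R : ℝ} (hR : 0 ≤ R)
    (hb : eLpNorm φ ⊤ μ ≤ ENNReal.ofReal R) : ∀ᵐ s ∂μ, ‖φ s‖ ≤ R := by
  rw [eLpNorm_exponent_top] at hb
  filter_upwards [ae_le_eLpNormEssSup (f := φ) (μ := μ)] with s hs
  have h2 : (‖φ s‖₊ : ENNReal) ≤ ENNReal.ofReal R := le_trans hs hb
  rw [← ENNReal.ofReal_coe_nnreal, coe_nnnorm] at h2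
  exact (ENNReal.ofReal_le_ofReal_iff hR).mp h2

lemma ptwise_bound {C : ℝ} (u v : Fin n → ℝ) (hv : ‖v‖ ≤ C) :
    |∑ j, u j * v j| ≤ (n : ℝ) * C * ‖u‖ := by
  calc |∑ j, u j * v j| ≤ ∑ j, |u j * v j| := Finset.abs_sum_le_sum_abs _ _
    _ ≤ ∑ _j : Fin n, ‖u‖ * C := by
        refine Finset.sum_le_sum fun j _ => ?_
        rw [abs_mul]
        have h1 : |u j| ≤ ‖u‖ := by simpa [Real.norm_eq_abs] using norm_le_pi_norm u j
        have h2 : |v j| ≤ C := le_trans (by simpa [Real.norm_eq_abs] using norm_le_pi_norm v j) hv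
        exact mul_le_mul h1 h2 (abs_nonneg _) (norm_nonneg _)
    _ = (n : ℝ) * C * ‖u‖ := by
        rw [Finset.sum_const, Finset.card_univ, Fintype.card_fin, nsmul_eq_mul]; ring

lemma pair_integrable {u v : ℝ → Fin n → ℝ} {C : ℝ}
    (hu : Integrable u μ) (hv : AEStronglyMeasurable v μ) (hvb : ∀ᵐ s ∂μ, ‖v s‖ ≤ C) :
    Integrable (fun s => ∑ j, u s j * v s j) μ := by
  refine integrable_finset_sum _ (fun j _ => ?_)
  have huj : Integrable (fun s => u s j) μ := by
    simpa using (ContinuousLinearMap.proj (R := ℝ) (φ := fun _ : Fin n => ℝ) j).integrable_comp hu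
  have hvj : AEStronglyMeasurable (fun s => v s j) μ :=
    (continuous_apply j).comp_aestronglyMeasurable hv
  have hvjb : ∀ᵐ s ∂μ, ‖v s j‖ ≤ C := by
    filter_upwards [hvb] with s hs; exact le_trans (norm_le_pi_norm (v s) j) hs
  have := Integrable.bdd_mul (f := fun s => v s j) (g := fun s => u s j) huj hvj hvjb
  simpa [mul_comm] using this

lemma pair_bound {u v : ℝ → Fin n → ℝ} {C : ℝ}
    (hu : Integrable u μ) (hvb : ∀ᵐ s ∂μ, ‖v s‖ ≤ C) :
    |∫ s, ∑ j, u s j * v s j ∂μ| ≤ (n : ℝ) * C * ∫ s, ‖u s‖ ∂μ := by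
  rw [← Real.norm_eq_abs, ← integral_const_mul]
  refine norm_integral_le_of_norm_le (hu.norm.const_mul _) ?_
  filter_upwards [hvb] with s hs
  rw [Real.norm_eq_abs]
  exact ptwise_bound _ _ hs

lemma pair_diff {u1 u2 v : ℝ → Fin n → ℝ} {C : ℝ}
    (hu1 : Integrable u1 μ) (hu2 : Integrable u2 μ)
    (hv : AEStronglyMeasurable v μ) (hvb : ∀ᵐ s ∂μ, ‖v s‖ ≤ C) :
    |(∫ s, ∑ j, u1 s j * v s j ∂μ) - ∫ s, ∑ j, u2 s j * v s j ∂μ| ≤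
      (n : ℝ) * C * ∫ s, ‖u1 s - u2 s‖ ∂μ := by
  rw [← integral_sub (pair_integrable hu1 hv hvb) (pair_integrable hu2 hv hvb)]
  have hrw : (fun s => (∑ j, u1 s j * v s j) - ∑ j, u2 s j * v s j) =
      fun s => ∑ j, (u1 s - u2 s) j * v s j := by
    funext s
    rw [← Finset.sum_sub_distrib]
    exact Finset.sum_congr rfl fun j _ => by simp [sub_mul]
  rw [hrw]
  exact pair_bound (hu1.sub hu2) hvb

end Stmt14Aux

set_option maxHeartbeats 2000000 in
/-- The truncated functional `𝓛*(t,φ) = ∫_{−θ}^0 h*(r) χ(t,r) φ(r) dr`, with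
`h*(r) = h(r+t0+θ)` and `χ(t,r) = 1` iff `r ≤ t−t0−θ`, is (sequentially) continuous on
`[t0,t0+θ] × B_R^{L^∞}` with the weak-* topology on the ball, and uniformly continuous
there with respect to the metrizing norm `‖·‖_*`. -/
theorem stmt_14 (n : ℕ) (θ t0 R : ℝ) (hθ : 0 < θ) (ht0 : 0 ≤ t0) (hR : 0 < R)
    (h : ℝ → (Fin n → ℝ))
    (hh : Integrable h (volume.restrict (Set.Icc t0 (t0 + θ))))
    (g : ℕ → ℝ → (Fin n → ℝ))
    (hgi : ∀ i, Integrable (g i) (volume.restrict (Set.Icc (-θ) 0)))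
    (hgb : ∀ i, (∫ s in Set.Icc (-θ) 0, ‖g i s‖) ≤ 1)
    (hdense : ∀ u : ℝ → (Fin n → ℝ), Integrable u (volume.restrict (Set.Icc (-θ) 0)) →
      (∫ s in Set.Icc (-θ) 0, ‖u s‖) ≤ 1 → ∀ ε > 0, ∃ i,
        (∫ s in Set.Icc (-θ) 0, ‖u s - g i s‖) < ε) :
    (∀ (t : ℕ → ℝ) (t' : ℝ), (∀ k, t k ∈ Set.Icc t0 (t0 + θ)) → t' ∈ Set.Icc t0 (t0 + θ) →
      Tendsto t atTop (nhds t') →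
      ∀ (φ : ℕ → ℝ → (Fin n → ℝ)) (φ0 : ℝ → (Fin n → ℝ)),
        (∀ k, AEStronglyMeasurable (φ k) (volume.restrict (Set.Icc (-θ) 0))) →
        AEStronglyMeasurable φ0 (volume.restrict (Set.Icc (-θ) 0)) →
        (∀ k, eLpNorm (φ k) ⊤ (volume.restrict (Set.Icc (-θ) 0)) ≤ ENNReal.ofReal R) →
        eLpNorm φ0 ⊤ (volume.restrict (Set.Icc (-θ) 0)) ≤ ENNReal.ofReal R →
        (∀ u : ℝ → (Fin n → ℝ), Integrable u (volume.restrict (Set.Icc (-θ) 0)) →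
          Tendsto (fun k => ∫ s in Set.Icc (-θ) 0, ∑ j, u s j * φ k s j) atTop
            (nhds (∫ s in Set.Icc (-θ) 0, ∑ j, u s j * φ0 s j))) →
        Tendsto (fun k => ∫ r in Set.Icc (-θ) 0,
            if r ≤ t k - t0 - θ then ∑ i, h (r + t0 + θ) i * φ k r i else 0) atTop
          (nhds (∫ r in Set.Icc (-θ) 0,
            if r ≤ t' - t0 - θ then ∑ i, h (r + t0 + θ) i * φ0 r i else 0))) ∧
    ∀ ε > 0, ∃ δ > 0, ∀ t ∈ Set.Icc t0 (t0 + θ), ∀ t' ∈ Set.Icc t0 (t0 + θ),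
      ∀ φ ψ : ℝ → (Fin n → ℝ),
        AEStronglyMeasurable φ (volume.restrict (Set.Icc (-θ) 0)) →
        AEStronglyMeasurable ψ (volume.restrict (Set.Icc (-θ) 0)) →
        eLpNorm φ ⊤ (volume.restrict (Set.Icc (-θ) 0)) ≤ ENNReal.ofReal R →
        eLpNorm ψ ⊤ (volume.restrict (Set.Icc (-θ) 0)) ≤ ENNReal.ofReal R →
        |t - t'| < δ →
        (∑' i : ℕ, (1 / 2 : ℝ) ^ (i + 1) *
          |∫ s in Set.Icc (-θ) 0, ∑ j, g i s j * (φ s j - ψ s j)|) < δ →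
        |(∫ r in Set.Icc (-θ) 0,
            if r ≤ t - t0 - θ then ∑ i, h (r + t0 + θ) i * φ r i else 0) -
          ∫ r in Set.Icc (-θ) 0,
            if r ≤ t' - t0 - θ then ∑ i, h (r + t0 + θ) i * ψ r i else 0| < ε := by
  classical
  set μ := volume.restrict (Set.Icc (-θ : ℝ) 0) with hμdef
  set H : ℝ → Fin n → ℝ := fun r => h (r + t0 + θ) with hHdef
  -- integrability of the translated kernel
  have hstar : Integrable H μ := by
    have h1 : IntervalIntegrable h volume t0 (t0 + θ) :=
      (intervalIntegrable_iff_integrableOn_Icc_of_le (by linarith)).mpr hh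
    have h2 := h1.comp_add_right (t0 + θ)
    have h3 := (intervalIntegrable_iff_integrableOn_Icc_of_le (by linarith : t0 - (t0+θ) ≤ t0 + θ - (t0+θ))).mp h2
    have e1 : t0 - (t0 + θ) = -θ := by ring
    have e2 : t0 + θ - (t0 + θ) = (0:ℝ) := by ring
    rw [e1, e2] at h3
    exact h3.congr (Filter.Eventually.of_forall fun r => congrArg h (add_assoc r t0 θ).symm)
  set u : ℝ → ℝ → Fin n → ℝ := fun t r => if r ≤ t - t0 - θ then H r else 0 with hudef
  have hu_int : ∀ t : ℝ, Integrable (u t) μ := by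
    intro t
    refine (hstar.indicator (measurableSet_Iic (a := t - t0 - θ))).congr
      (Filter.Eventually.of_forall fun r => ?_)
    by_cases hr : r ≤ t - t0 - θ <;>
      simp [hudef, Set.indicator_apply, Set.mem_Iic, hr]
  have hu_norm_le : ∀ t : ℝ, ∀ r : ℝ, ‖u t r‖ ≤ ‖H r‖ := by
    intro t r
    by_cases hr : r ≤ t - t0 - θ <;> simp [hudef, hr]
  -- rewriting the truncated integrals
  have hrw : ∀ (t : ℝ) (φ : ℝ → Fin n → ℝ),
      (∫ r, (if r ≤ t - t0 - θ then ∑ i, h (r + t0 + θ) i * φ r i else 0) ∂μ) =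
        ∫ r, ∑ j, u t r j * φ r j ∂μ := by
    intro t φ
    refine integral_congr_ae (Filter.Eventually.of_forall fun r => ?_)
    by_cases hr : r ≤ t - t0 - θ <;> simp [hudef, hHdef, hr]
  -- the primitive of the (extended) kernel norm
  set HN : ℝ → ℝ := (Set.Icc (-θ : ℝ) 0).indicator (fun r => ‖H r‖) with hHNdef
  have hHN_int : Integrable HN volume :=
    IntegrableOn.integrable_indicator (hstar.norm) measurableSet_Icc
  set P : ℝ → ℝ := fun b => ∫ x in (-θ)..b, HN x with hPdef
  have hPc : Continuous P := hHN_int.continuous_primitive (-θ)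
  -- the L¹ distance between truncations
  have hD : ∀ a b : ℝ, a ≤ b →
      (∫ r, ‖u b r - u a r‖ ∂μ) = P (b - t0 - θ) - P (a - t0 - θ) := by
    intro a b hab
    have hab' : a - t0 - θ ≤ b - t0 - θ := by linarith
    have hpt : (fun r => ‖u b r - u a r‖) =
        fun r => (Set.Ioc (a - t0 - θ) (b - t0 - θ)).indicator (fun x => ‖H x‖) r := by
      funext r
      by_cases h1 : r ≤ a - t0 - θ
      · have h2 : r ≤ b - t0 - θ := le_trans h1 hab'
        simp [hudef, h1, h2, Set.indicator_apply, Set.mem_Ioc, not_lt.mpr h1]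
      · by_cases h2 : r ≤ b - t0 - θ
        · simp [hudef, h1, h2, Set.indicator_apply, Set.mem_Ioc, lt_of_not_ge h1]
        · simp [hudef, h1, h2, Set.indicator_apply, Set.mem_Ioc]
    have hPdiff : P (b - t0 - θ) - P (a - t0 - θ)
        = ∫ x in Set.Ioc (a - t0 - θ) (b - t0 - θ), HN x := by
      simp only [hPdef]
      rw [intervalIntegral.integral_interval_sub_left hHN_int.intervalIntegrable
        hHN_int.intervalIntegrable]
      exact intervalIntegral.integral_of_le hab'
    rw [hpt, hPdiff, integral_indicator measurableSet_Ioc, hμdef,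
      Measure.restrict_restrict measurableSet_Ioc, hHNdef,
      integral_indicator measurableSet_Icc,
      Measure.restrict_restrict measurableSet_Icc, Set.inter_comm]
  have hDabs : ∀ a b : ℝ,
      (∫ r, ‖u a r - u b r‖ ∂μ) ≤ |P (a - t0 - θ) - P (b - t0 - θ)| := by
    intro a b
    rcases le_total a b with hab | hab
    · have e := hD a b hab
      calc (∫ r, ‖u a r - u b r‖ ∂μ) = ∫ r, ‖u b r - u a r‖ ∂μ := by
            simp_rw [norm_sub_rev]
        _ = P (b - t0 - θ) - P (a - t0 - θ) := e
        _ ≤ |P (b - t0 - θ) - P (a - t0 - θ)| := le_abs_self _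
        _ = |P (a - t0 - θ) - P (b - t0 - θ)| := abs_sub_comm _ _
    · rw [hD b a hab]
      exact le_abs_self _
  refine ⟨?_, ?_⟩
  · intro t t' htk ht' htt φ φ0 hφm hφ0m hφb hφ0b hweak
    simp only [hrw]
    have hφbR : ∀ k, ∀ᵐ s ∂μ, ‖φ k s‖ ≤ R := fun k => Stmt14Aux.ae_norm_le hR.le (hφb k)
    have hconv := hweak (u t') (hu_int t')
    set E : ℕ → ℝ := fun k =>
      (∫ r, ∑ j, u (t k) r j * φ k r j ∂μ) - ∫ r, ∑ j, u t' r j * φ k r j ∂μ with hEdef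
    have hEb : ∀ k, ‖E k‖ ≤ (n : ℝ) * R * |P (t k - t0 - θ) - P (t' - t0 - θ)| := by
      intro k
      rw [Real.norm_eq_abs]
      simp only [hEdef]
      refine le_trans (Stmt14Aux.pair_diff (hu_int _) (hu_int _) (hφm k) (hφbR k)) ?_
      exact mul_le_mul_of_nonneg_left (hDabs _ _) (by positivity)
    have hP0 : Tendsto (fun k => (n : ℝ) * R * |P (t k - t0 - θ) - P (t' - t0 - θ)|)
        atTop (nhds 0) := by
      have h1 : Tendsto (fun k => t k - t0 - θ) atTop (nhds (t' - t0 - θ)) :=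
        (htt.sub_const t0).sub_const θ
      have h2 : Tendsto (fun k => P (t k - t0 - θ)) atTop (nhds (P (t' - t0 - θ))) :=
        (hPc.tendsto _).comp h1
      have h3 := (h2.sub_const (P (t' - t0 - θ))).abs
      rw [sub_self, abs_zero] at h3
      simpa using h3.const_mul ((n : ℝ) * R)
    have hE0 : Tendsto E atTop (nhds 0) := squeeze_zero_norm hEb hP0
    have hfe : (fun k => ∫ r, ∑ j, u (t k) r j * φ k r j ∂μ)
        = fun k => (∫ r, ∑ j, u t' r j * φ k r j ∂μ) + E k := by
      funext k; simp only [hEdef]; ring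
    rw [hfe]
    simpa using hconv.add hE0
  · intro ε hε
    set M : ℝ := ∫ r, ‖H r‖ ∂μ with hMdef
    have hM0 : 0 ≤ M := integral_nonneg fun r => norm_nonneg _
    have hM1 : (0:ℝ) < M + 1 := by linarith
    set A : ℝ := (n : ℝ) * R * 2 + 1 with hAdef
    have hnR : (0:ℝ) ≤ (n : ℝ) * R := by positivity
    have hA0 : (0:ℝ) < A := by positivity
    set εP : ℝ := ε / (8 * A) with hεPdef
    have hεP0 : 0 < εP := by positivity
    set ε' : ℝ := ε / (8 * A * (M + 1)) with hε'def
    have hε'0 : 0 < ε' := by positivity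
    have hPuc := (isCompact_Icc (a := -θ - 1) (b := (1:ℝ))).uniformContinuousOn_of_continuous
      hPc.continuousOn
    obtain ⟨δ1, hδ10, hδ1⟩ := Metric.uniformContinuousOn_iff.mp hPuc εP hεP0
    set δ1' : ℝ := min δ1 1 with hδ1'def
    have hδ1'0 : 0 < δ1' := lt_min hδ10 one_pos
    set w : ℝ → ℝ → Fin n → ℝ := fun τ => (M + 1)⁻¹ • u τ with hwdef
    have hw_int : ∀ τ, Integrable (w τ) μ := fun τ => (hu_int τ).smul _
    have hu_normM : ∀ τ : ℝ, (∫ r, ‖u τ r‖ ∂μ) ≤ M := by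
      intro τ
      rw [hMdef]
      exact integral_mono (hu_int τ).norm hstar.norm fun r => hu_norm_le τ r
    have hw_norm : ∀ τ, (∫ r, ‖w τ r‖ ∂μ) ≤ 1 := by
      intro τ
      have h1 : (fun r => ‖w τ r‖) = fun r => (M + 1)⁻¹ * ‖u τ r‖ := by
        funext r
        simp only [hwdef, Pi.smul_apply]
        rw [norm_smul, Real.norm_eq_abs, abs_of_pos (inv_pos.mpr hM1)]
      rw [h1, integral_const_mul]
      calc (M + 1)⁻¹ * ∫ r, ‖u τ r‖ ∂μ ≤ (M + 1)⁻¹ * (M + 1) := by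
            refine mul_le_mul_of_nonneg_left ?_ (inv_pos.mpr hM1).le
            linarith [hu_normM τ]
        _ = 1 := inv_mul_cancel₀ hM1.ne'
    have hIdx : ∀ τ : ℝ, ∃ i, (∫ r, ‖w τ r - g i r‖ ∂μ) < ε' := fun τ =>
      hdense (w τ) (hw_int τ) (hw_norm τ) ε' hε'0
    choose I hI using hIdx
    obtain ⟨sF, hsF⟩ := (isCompact_Icc (a := t0) (b := t0 + θ)).elim_finite_subcover
      (fun τ : ℝ => Metric.ball τ δ1') (fun τ => Metric.isOpen_ball)
      (fun x _ => Set.mem_iUnion.mpr ⟨x, Metric.mem_ball_self hδ1'0⟩)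
    set N : ℕ := sF.sup I with hNdef
    set B : ℝ := (M + 1) * 2 ^ (N + 1) with hBdef
    have hB0 : 0 < B := by positivity
    refine ⟨min δ1' (ε / (8 * B)), lt_min hδ1'0 (by positivity), ?_⟩
    intro t ht t' ht' φ ψ hφm hψm hφb hψb htt' hsum
    simp only [hrw]
    have hφR : ∀ᵐ s ∂μ, ‖φ s‖ ≤ R := Stmt14Aux.ae_norm_le hR.le hφb
    have hψR : ∀ᵐ s ∂μ, ‖ψ s‖ ≤ R := Stmt14Aux.ae_norm_le hR.le hψb
    have hw0m : AEStronglyMeasurable (fun s => φ s - ψ s) μ := hφm.sub hψm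
    have hw0b : ∀ᵐ s ∂μ, ‖φ s - ψ s‖ ≤ 2 * R := by
      filter_upwards [hφR, hψR] with s h1 h2
      calc ‖φ s - ψ s‖ ≤ ‖φ s‖ + ‖ψ s‖ := norm_sub_le _ _
        _ ≤ 2 * R := by linarith
    -- choose a center τ near t'
    have ht'mem := hsF ht'
    rw [Set.mem_iUnion] at ht'mem
    obtain ⟨τ, hτmem⟩ := ht'mem
    rw [Set.mem_iUnion] at hτmem
    obtain ⟨hτs, hτball⟩ := hτmem
    have hτdist : |t' - τ| < δ1' := by
      have h1 := Metric.mem_ball.mp hτball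
      rwa [Real.dist_eq] at h1
    -- memberships in the compact where P is uniformly continuous
    have hmemI : ∀ a : ℝ, a ∈ Set.Icc t0 (t0 + θ) →
        a - t0 - θ ∈ Set.Icc (-θ - 1) (1:ℝ) := by
      intro a ha
      exact ⟨by linarith [ha.1], by linarith [ha.2]⟩
    have hτIcc : τ - t0 - θ ∈ Set.Icc (-θ - 1) (1:ℝ) := by
      have h1 := (abs_lt.mp hτdist).1
      have h2 := (abs_lt.mp hτdist).2
      have h3 : δ1' ≤ 1 := min_le_right _ _
      exact ⟨by linarith [ht'.1], by linarith [ht'.2]⟩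
    have htt'1 : |t - t'| < δ1 :=
      lt_of_lt_of_le htt' ((min_le_left _ _).trans (min_le_left _ _))
    have hτ1 : |t' - τ| < δ1 := lt_of_lt_of_le hτdist (min_le_left _ _)
    -- T1
    have hT1 : |(∫ r, ∑ j, u t r j * φ r j ∂μ) - ∫ r, ∑ j, u t' r j * φ r j ∂μ| ≤ ε / 8 := by
      refine le_trans (Stmt14Aux.pair_diff (hu_int t) (hu_int t') hφm hφR) ?_
      have hPd : |P (t - t0 - θ) - P (t' - t0 - θ)| < εP := by
        have h1 := hδ1 _ (hmemI t ht) _ (hmemI t' ht') (by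
          rw [Real.dist_eq]
          have : t - t0 - θ - (t' - t0 - θ) = t - t' := by ring
          rwa [this])
        rwa [Real.dist_eq] at h1
      have h2 := le_trans (hDabs t t') hPd.le
      calc (n : ℝ) * R * ∫ r, ‖u t r - u t' r‖ ∂μ ≤ (n : ℝ) * R * εP :=
            mul_le_mul_of_nonneg_left h2 hnR
        _ ≤ A * εP := mul_le_mul_of_nonneg_right (by rw [hAdef]; linarith) hεP0.le
        _ = ε / 8 := by rw [hεPdef]; field_simp
    -- T2
    have hT2 : |(∫ r, ∑ j, u t' r j * (φ r j - ψ r j) ∂μ) -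
        ∫ r, ∑ j, u τ r j * (φ r j - ψ r j) ∂μ| ≤ ε / 8 := by
      refine le_trans (Stmt14Aux.pair_diff (hu_int t') (hu_int τ) hw0m hw0b) ?_
      have hPd : |P (t' - t0 - θ) - P (τ - t0 - θ)| < εP := by
        have h1 := hδ1 _ (hmemI t' ht') _ hτIcc (by
          rw [Real.dist_eq]
          have : t' - t0 - θ - (τ - t0 - θ) = t' - τ := by ring
          rwa [this])
        rwa [Real.dist_eq] at h1
      have h2 := le_trans (hDabs t' τ) hPd.le
      calc (n : ℝ) * (2 * R) * ∫ r, ‖u t' r - u τ r‖ ∂μ ≤ (n : ℝ) * (2 * R) * εP := by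
            refine mul_le_mul_of_nonneg_left h2 (by positivity)
        _ ≤ A * εP := mul_le_mul_of_nonneg_right (by rw [hAdef]; linarith) hεP0.le
        _ = ε / 8 := by rw [hεPdef]; field_simp
    -- T3
    set ug : ℝ → Fin n → ℝ := (M + 1) • g (I τ) with hugdef
    have hug_int : Integrable ug μ := (hgi (I τ)).smul (M + 1)
    have hT3 : |(∫ r, ∑ j, u τ r j * (φ r j - ψ r j) ∂μ) -
        ∫ r, ∑ j, ug r j * (φ r j - ψ r j) ∂μ| ≤ ε / 8 := by
      refine le_trans (Stmt14Aux.pair_diff (hu_int τ) hug_int hw0m hw0b) ?_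
      have hpt : (fun r => ‖u τ r - ug r‖) = fun r => (M + 1) * ‖w τ r - g (I τ) r‖ := by
        funext r
        have he : u τ r - ug r = (M + 1) • (w τ r - g (I τ) r) := by
          simp only [hwdef, hugdef, Pi.smul_apply]
          rw [smul_sub, smul_smul, mul_inv_cancel₀ hM1.ne', one_smul]
        rw [he, norm_smul, Real.norm_eq_abs, abs_of_pos hM1]
      have hint : (∫ r, ‖u τ r - ug r‖ ∂μ) ≤ (M + 1) * ε' := by
        rw [hpt, integral_const_mul]
        exact mul_le_mul_of_nonneg_left (hI τ).le hM1.le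
      calc (n : ℝ) * (2 * R) * ∫ r, ‖u τ r - ug r‖ ∂μ
          ≤ (n : ℝ) * (2 * R) * ((M + 1) * ε') :=
            mul_le_mul_of_nonneg_left hint (by positivity)
        _ ≤ A * ((M + 1) * ε') := by
            refine mul_le_mul_of_nonneg_right (by rw [hAdef]; linarith) (by positivity)
        _ = ε / 8 := by rw [hε'def]; field_simp
    -- T4
    have hug_eq : (∫ r, ∑ j, ug r j * (φ r j - ψ r j) ∂μ)
        = (M + 1) * ∫ r, ∑ j, g (I τ) r j * (φ r j - ψ r j) ∂μ := by
      rw [← integral_const_mul]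
      refine integral_congr_ae (Filter.Eventually.of_forall fun r => ?_)
      simp only [hugdef, Pi.smul_apply, smul_eq_mul, Finset.mul_sum, mul_assoc]
    have hsummable : Summable (fun i : ℕ => (1 / 2 : ℝ) ^ (i + 1) *
        |∫ s, ∑ j, g i s j * (φ s j - ψ s j) ∂μ|) := by
      refine Summable.of_nonneg_of_le (fun i => by positivity) (fun i => ?_)
        ((summable_geometric_two).mul_right ((1 / 2 : ℝ) * ((n : ℝ) * (2 * R))))
      have h1 : |∫ s, ∑ j, g i s j * (φ s j - ψ s j) ∂μ| ≤ (n : ℝ) * (2 * R) := by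
        refine le_trans (Stmt14Aux.pair_bound (hgi i) hw0b) ?_
        calc (n : ℝ) * (2 * R) * ∫ s, ‖g i s‖ ∂μ ≤ (n : ℝ) * (2 * R) * 1 :=
              mul_le_mul_of_nonneg_left (hgb i) (by positivity)
          _ = (n : ℝ) * (2 * R) := by ring
      calc (1 / 2 : ℝ) ^ (i + 1) * |∫ s, ∑ j, g i s j * (φ s j - ψ s j) ∂μ|
          ≤ (1 / 2 : ℝ) ^ (i + 1) * ((n : ℝ) * (2 * R)) :=
            mul_le_mul_of_nonneg_left h1 (by positivity)
        _ = (1 / 2 : ℝ) ^ i * ((1 / 2 : ℝ) * ((n : ℝ) * (2 * R))) := by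
            rw [pow_succ]; ring
    have hterm := hsummable.le_tsum (I τ) (fun j _ => by positivity)
    have hIN : I τ ≤ N := Finset.le_sup hτs
    have hpowle : (1 / 2 : ℝ) ^ (N + 1) ≤ (1 / 2 : ℝ) ^ (I τ + 1) :=
      pow_le_pow_of_le_one (by norm_num) (by norm_num) (Nat.succ_le_succ hIN)
    have hQabs : (0:ℝ) ≤ |∫ s, ∑ j, g (I τ) s j * (φ s j - ψ s j) ∂μ| := abs_nonneg _
    have hS : (1 / 2 : ℝ) ^ (N + 1) * |∫ s, ∑ j, g (I τ) s j * (φ s j - ψ s j) ∂μ|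
        < ε / (8 * B) := by
      have h1 : (1 / 2 : ℝ) ^ (N + 1) * |∫ s, ∑ j, g (I τ) s j * (φ s j - ψ s j) ∂μ|
          ≤ (1 / 2 : ℝ) ^ (I τ + 1) * |∫ s, ∑ j, g (I τ) s j * (φ s j - ψ s j) ∂μ| :=
        mul_le_mul_of_nonneg_right hpowle hQabs
      have h2 := lt_of_lt_of_le hsum (min_le_right δ1' (ε / (8 * B)))
      exact lt_of_le_of_lt (le_trans h1 hterm) h2
    have hT4 : |∫ r, ∑ j, ug r j * (φ r j - ψ r j) ∂μ| ≤ ε / 8 := by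
      rw [hug_eq, abs_mul, abs_of_pos hM1]
      have hpow2 : ((2:ℝ)) ^ (N + 1) * (1 / 2 : ℝ) ^ (N + 1) = 1 := by
        rw [← mul_pow]; norm_num
      have h3 : |∫ s, ∑ j, g (I τ) s j * (φ s j - ψ s j) ∂μ|
          ≤ (2:ℝ) ^ (N + 1) * (ε / (8 * B)) := by
        have h4 := mul_le_mul_of_nonneg_left hS.le (by positivity :
          (0:ℝ) ≤ (2:ℝ) ^ (N + 1))
        calc |∫ s, ∑ j, g (I τ) s j * (φ s j - ψ s j) ∂μ|
            = (2:ℝ) ^ (N + 1) * ((1 / 2 : ℝ) ^ (N + 1) *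
              |∫ s, ∑ j, g (I τ) s j * (φ s j - ψ s j) ∂μ|) := by
              rw [← mul_assoc, hpow2, one_mul]
          _ ≤ (2:ℝ) ^ (N + 1) * (ε / (8 * B)) := h4
      calc (M + 1) * |∫ s, ∑ j, g (I τ) s j * (φ s j - ψ s j) ∂μ|
          ≤ (M + 1) * ((2:ℝ) ^ (N + 1) * (ε / (8 * B))) :=
            mul_le_mul_of_nonneg_left h3 hM1.le
        _ = B * (ε / (8 * B)) := by rw [hBdef]; ring
        _ = ε / 8 := by
            rw [hBdef]
            field_simp
    -- splitting the pairing
    have hsplit : (∫ r, ∑ j, u t' r j * φ r j ∂μ) - (∫ r, ∑ j, u t' r j * ψ r j ∂μ)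
        = ∫ r, ∑ j, u t' r j * (φ r j - ψ r j) ∂μ := by
      rw [← integral_sub (Stmt14Aux.pair_integrable (hu_int t') hφm hφR)
        (Stmt14Aux.pair_integrable (hu_int t') hψm hψR)]
      refine integral_congr_ae (Filter.Eventually.of_forall fun r => ?_)
      simp [mul_sub, Finset.sum_sub_distrib]
    have key : (∫ r, ∑ j, u t r j * φ r j ∂μ) - (∫ r, ∑ j, u t' r j * ψ r j ∂μ)
        = ((∫ r, ∑ j, u t r j * φ r j ∂μ) - (∫ r, ∑ j, u t' r j * φ r j ∂μ))
          + (((∫ r, ∑ j, u t' r j * (φ r j - ψ r j) ∂μ)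
              - (∫ r, ∑ j, u τ r j * (φ r j - ψ r j) ∂μ))
          + (((∫ r, ∑ j, u τ r j * (φ r j - ψ r j) ∂μ)
              - (∫ r, ∑ j, ug r j * (φ r j - ψ r j) ∂μ))
          + (∫ r, ∑ j, ug r j * (φ r j - ψ r j) ∂μ))) := by
      rw [← hsplit]; ring
    have habs4 : ∀ a b c d : ℝ, |a + (b + (c + d))| ≤ |a| + |b| + |c| + |d| := by
      intro a b c d
      calc |a + (b + (c + d))| ≤ |a| + |b + (c + d)| := abs_add_le _ _
        _ ≤ |a| + (|b| + |c + d|) := by linarith [abs_add_le b (c + d)]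
        _ ≤ |a| + (|b| + (|c| + |d|)) := by linarith [abs_add_le c d]
        _ = |a| + |b| + |c| + |d| := by ring
    rw [key]
    refine lt_of_le_of_lt (habs4 _ _ _ _) ?_
    linarith
end

section
/- Let f satisfy: for every R, T > 0 there exists L such that |f(t,φ¹) − f(t,φ²)| ≤ L‖φ¹−φ²‖_∞ for all φ¹,φ² in the sup-norm ball of radius R and almost every t ∈ [0,T]; f(·,0) locally essentially bounded; and t ↦ f(t,(φ⋄_{t0}x)_t) measurable for continuous x. Then for every t0 ≥ 0 and bounded measurable initial history φ there exists α > t0 such that the integral operator (Py)(t) = φ(0) + ∫_{t0}^t f(s, (φ⋄_{t0}y)_s) ds is a contraction on a suitable closed ball of C([t0,α],ℝⁿ), and hence the delay differential equation ẋ(t) = f(t,(φ⋄_{t0}x)_t), x(t0) = φ(0), has a unique local solution. -/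
open MeasureTheory Set Filter

/-- The segment at time `t` (as a function of `u ∈ [−θ,0]`) of the concatenation
`φ ⋄_{t0} x`. -/
noncomputable def seg15 (n : ℕ) (t0 : ℝ) (φ x : ℝ → (Fin n → ℝ)) (t u : ℝ) : Fin n → ℝ :=
  if t + u < t0 then φ (t + u - t0) else x (t + u)

set_option maxHeartbeats 1000000 in
/-- Local existence and uniqueness for the delay differential equation
`ẋ(t) = f(t, (φ ⋄_{t0} x)_t)`, `x(t0) = φ(0)`: under local Lipschitz continuity of `f`
in the history (sup norm), local essential boundedness of `f(·,0)` and measurability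
along continuous trajectories, the Picard operator
`(Py)(t) = φ(0) + ∫_{t0}^t f(s,(φ⋄_{t0}y)_s) ds` is a contraction on a suitable closed
ball of `C([t0,α],ℝⁿ)` and the equation has a unique local solution there. -/
theorem stmt_15 (n : ℕ) (θ : ℝ) (hθ : 0 < θ)
    (f : ℝ → (ℝ → (Fin n → ℝ)) → (Fin n → ℝ))
    (hLip : ∀ R > (0 : ℝ), ∀ T > (0 : ℝ), ∃ L ≥ (0 : ℝ),
      ∀ᵐ t ∂(volume.restrict (Set.Icc 0 T)), ∀ ψ1 ψ2 : ℝ → (Fin n → ℝ),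
        (∀ u ∈ Set.Icc (-θ) 0, ‖ψ1 u‖ ≤ R) → (∀ u ∈ Set.Icc (-θ) 0, ‖ψ2 u‖ ≤ R) →
        ‖f t ψ1 - f t ψ2‖ ≤ L * sSup ((fun u => ‖ψ1 u - ψ2 u‖) '' Set.Icc (-θ) 0))
    (hf0 : ∀ T > (0 : ℝ), ∃ C : ℝ, ∀ᵐ t ∂(volume.restrict (Set.Icc 0 T)), ‖f t 0‖ ≤ C)
    (hfmeas : ∀ t0 ≥ (0 : ℝ), ∀ T > t0, ∀ φ : ℝ → (Fin n → ℝ), Measurable φ →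
      (∃ C : ℝ, ∀ u, ‖φ u‖ ≤ C) → ∀ x : ℝ → (Fin n → ℝ), ContinuousOn x (Set.Icc t0 T) →
      AEMeasurable (fun t => f t (seg15 n t0 φ x t)) (volume.restrict (Set.Icc t0 T)))
    (t0 : ℝ) (ht0 : 0 ≤ t0) (φ : ℝ → (Fin n → ℝ)) (hφm : Measurable φ)
    (hφb : ∃ C : ℝ, ∀ u, ‖φ u‖ ≤ C) :
    ∃ α > t0, ∃ R > (0 : ℝ), ∃ κ ∈ Set.Ico (0 : ℝ) 1,
      -- the Picard operator maps the closed ball of radius R into itself ...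
      (∀ y : ℝ → (Fin n → ℝ), ContinuousOn y (Set.Icc t0 α) →
        (∀ t ∈ Set.Icc t0 α, ‖y t‖ ≤ R) →
        ∀ t ∈ Set.Icc t0 α,
          ‖φ 0 + ∫ s in t0..t, f s (seg15 n t0 φ y s)‖ ≤ R) ∧
      -- ... and is a contraction there ...
      (∀ y z : ℝ → (Fin n → ℝ), ContinuousOn y (Set.Icc t0 α) →
        ContinuousOn z (Set.Icc t0 α) →
        (∀ t ∈ Set.Icc t0 α, ‖y t‖ ≤ R) → (∀ t ∈ Set.Icc t0 α, ‖z t‖ ≤ R) →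
        ∀ t ∈ Set.Icc t0 α,
          ‖(φ 0 + ∫ s in t0..t, f s (seg15 n t0 φ y s)) -
              (φ 0 + ∫ s in t0..t, f s (seg15 n t0 φ z s))‖ ≤
            κ * sSup ((fun r => ‖y r - z r‖) '' Set.Icc t0 α)) ∧
      -- ... hence the equation has a unique local solution.
      ∃ x : ℝ → (Fin n → ℝ), ContinuousOn x (Set.Icc t0 α) ∧
        (∀ t ∈ Set.Icc t0 α, x t = φ 0 + ∫ s in t0..t, f s (seg15 n t0 φ x s)) ∧
        ∀ y : ℝ → (Fin n → ℝ), ContinuousOn y (Set.Icc t0 α) →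
          (∀ t ∈ Set.Icc t0 α, y t = φ 0 + ∫ s in t0..t, f s (seg15 n t0 φ y s)) →
          ∀ t ∈ Set.Icc t0 α, y t = x t := by
  classical
  obtain ⟨Cφ, hCφ⟩ := hφb
  have hCφ0 : 0 ≤ Cφ := le_trans (norm_nonneg _) (hCφ 0)
  set R : ℝ := Cφ + 1 with hRdef
  have hR0 : 0 < R := by positivity
  obtain ⟨L, hL0, hLae0⟩ := hLip R hR0 (t0 + 1) (by linarith)
  obtain ⟨C0, hC0ae0⟩ := hf0 (t0 + 1) (by linarith)
  set M : ℝ := max C0 0 + L * R with hMdef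
  have hM0 : 0 ≤ M := add_nonneg (le_max_right _ _) (mul_nonneg hL0 hR0.le)
  set ε : ℝ := min 1 (min (1 / (2 * (L + 1))) (1 / (M + 1))) with hεdef
  have hε0 : 0 < ε := lt_min one_pos (lt_min (by positivity) (by positivity))
  have hε1 : ε ≤ 1 := min_le_left _ _
  have hCφR : ∀ u, ‖φ u‖ ≤ R := fun u => le_trans (hCφ u) (by simp only [hRdef]; linarith)
  have hεL : L * ε ≤ 1 / 2 := by
    have h1 : ε ≤ 1 / (2 * (L + 1)) := le_trans (min_le_right _ _) (min_le_left _ _)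
    have h2 : L * ε ≤ L * (1 / (2 * (L + 1))) := mul_le_mul_of_nonneg_left h1 hL0
    have h3 : L * (1 / (2 * (L + 1))) ≤ 1 / 2 := by
      rw [mul_one_div, div_le_div_iff₀ (by positivity) (by norm_num)]
      nlinarith
    linarith
  have hεM : M * ε ≤ 1 := by
    have h1 : ε ≤ 1 / (M + 1) := le_trans (min_le_right _ _) (min_le_right _ _)
    have h2 : M * ε ≤ M * (1 / (M + 1)) := mul_le_mul_of_nonneg_left h1 hM0
    have h3 : M * (1 / (M + 1)) ≤ 1 := by
      rw [mul_one_div, div_le_one (by positivity)]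
      linarith
    exact le_trans h2 h3
  set α : ℝ := t0 + ε with hαdef
  have hα : t0 < α := by simp only [hαdef]; linarith
  have hαT : α ≤ t0 + 1 := by simp only [hαdef]; linarith
  have hsub : Icc t0 α ⊆ Icc 0 (t0 + 1) := Icc_subset_Icc ht0 hαT
  have hres : ae (volume.restrict (Icc t0 α)) ≤ ae (volume.restrict (Icc 0 (t0 + 1))) :=
    ae_mono (Measure.restrict_mono hsub le_rfl)
  have hLae : ∀ᵐ t ∂(volume.restrict (Icc t0 α)), ∀ ψ1 ψ2 : ℝ → (Fin n → ℝ),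
      (∀ u ∈ Icc (-θ) 0, ‖ψ1 u‖ ≤ R) → (∀ u ∈ Icc (-θ) 0, ‖ψ2 u‖ ≤ R) →
      ‖f t ψ1 - f t ψ2‖ ≤ L * sSup ((fun u => ‖ψ1 u - ψ2 u‖) '' Icc (-θ) 0) :=
    hLae0.filter_mono hres
  have hC0ae : ∀ᵐ t ∂(volume.restrict (Icc t0 α)), ‖f t 0‖ ≤ max C0 0 :=
    (hC0ae0.mono fun t ht => le_trans ht (le_max_left _ _)).filter_mono hres
  -- segments stay in the ball
  have hseg : ∀ (ρ : ℝ) (y : ℝ → Fin n → ℝ), (∀ u, ‖φ u‖ ≤ ρ) →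
      (∀ t ∈ Icc t0 α, ‖y t‖ ≤ ρ) →
      ∀ s ∈ Icc t0 α, ∀ u ∈ Icc (-θ) 0, ‖seg15 n t0 φ y s u‖ ≤ ρ := by
    intro ρ y hφρ hyρ s hs u hu
    by_cases h : s + u < t0
    · simpa [seg15, h] using hφρ (s + u - t0)
    · have hm : s + u ∈ Icc t0 α := ⟨not_lt.1 h, by linarith [hs.2, hu.2]⟩
      simpa [seg15, h] using hyρ _ hm
  -- a.e. norm bound for the integrand
  have haeb : ∀ (ρ Lρ Cρ : ℝ), 0 ≤ ρ → 0 ≤ Lρ →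
      (∀ᵐ t ∂(volume.restrict (Icc t0 α)), ∀ ψ1 ψ2 : ℝ → (Fin n → ℝ),
        (∀ u ∈ Icc (-θ) 0, ‖ψ1 u‖ ≤ ρ) → (∀ u ∈ Icc (-θ) 0, ‖ψ2 u‖ ≤ ρ) →
        ‖f t ψ1 - f t ψ2‖ ≤ Lρ * sSup ((fun u => ‖ψ1 u - ψ2 u‖) '' Icc (-θ) 0)) →
      (∀ᵐ t ∂(volume.restrict (Icc t0 α)), ‖f t 0‖ ≤ Cρ) →
      ∀ y : ℝ → Fin n → ℝ, (∀ u, ‖φ u‖ ≤ ρ) → (∀ t ∈ Icc t0 α, ‖y t‖ ≤ ρ) →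
      ∀ᵐ s ∂(volume.restrict (Icc t0 α)), ‖f s (seg15 n t0 φ y s)‖ ≤ Cρ + Lρ * ρ := by
    intro ρ Lρ Cρ hρ0 hLρ hlip hC0b y hφρ hyρ
    filter_upwards [hlip, hC0b, ae_restrict_mem measurableSet_Icc] with s hs1 hs2 hsmem
    have h1 : ‖f s (seg15 n t0 φ y s) - f s 0‖ ≤ Lρ * ρ := by
      have h0 := hs1 (seg15 n t0 φ y s) 0 (fun u hu => hseg ρ y hφρ hyρ s hsmem u hu)
        (fun u _ => by simpa using hρ0)
      refine le_trans h0 (mul_le_mul_of_nonneg_left ?_ hLρ)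
      refine Real.sSup_le ?_ hρ0
      rintro v ⟨u, hu, rfl⟩
      simpa using hseg ρ y hφρ hyρ s hsmem u hu
    have h2 : f s (seg15 n t0 φ y s) = (f s (seg15 n t0 φ y s) - f s 0) + f s 0 := by abel
    rw [h2]
    exact le_trans (norm_add_le _ _) (by linarith)
  -- integrability
  have hinteg : ∀ (ρ Lρ Cρ : ℝ), 0 ≤ ρ → 0 ≤ Lρ →
      (∀ᵐ t ∂(volume.restrict (Icc t0 α)), ∀ ψ1 ψ2 : ℝ → (Fin n → ℝ),
        (∀ u ∈ Icc (-θ) 0, ‖ψ1 u‖ ≤ ρ) → (∀ u ∈ Icc (-θ) 0, ‖ψ2 u‖ ≤ ρ) →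
        ‖f t ψ1 - f t ψ2‖ ≤ Lρ * sSup ((fun u => ‖ψ1 u - ψ2 u‖) '' Icc (-θ) 0)) →
      (∀ᵐ t ∂(volume.restrict (Icc t0 α)), ‖f t 0‖ ≤ Cρ) →
      ∀ y : ℝ → Fin n → ℝ, ContinuousOn y (Icc t0 α) → (∀ u, ‖φ u‖ ≤ ρ) →
      (∀ t ∈ Icc t0 α, ‖y t‖ ≤ ρ) →
      IntegrableOn (fun s => f s (seg15 n t0 φ y s)) (Icc t0 α) := by
    intro ρ Lρ Cρ hρ0 hLρ hlip hC0b y hyc hφρ hyρ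
    have hmeas := hfmeas t0 ht0 α hα φ hφm ⟨Cφ, hCφ⟩ y hyc
    have hb := haeb ρ Lρ Cρ hρ0 hLρ hlip hC0b y hφρ hyρ
    exact Integrable.mono' (integrableOn_const (C := Cρ + Lρ * ρ) measure_Icc_lt_top.ne)
      hmeas.aestronglyMeasurable hb
  -- interval integrability on subintervals
  have hII : ∀ g : ℝ → Fin n → ℝ, IntegrableOn g (Icc t0 α) →
      ∀ a b, t0 ≤ a → b ≤ α → a ≤ b → IntervalIntegrable g volume a b := by
    intro g hg a b ha hb hab
    have h1 : IntegrableOn g (uIcc a b) :=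
      hg.mono_set (by rw [uIcc_of_le hab]; exact Icc_subset_Icc ha hb)
    exact h1.intervalIntegrable
  -- integral norm bound
  have hIb : ∀ (g : ℝ → Fin n → ℝ) (Kb : ℝ),
      (∀ᵐ s ∂(volume.restrict (Icc t0 α)), ‖g s‖ ≤ Kb) →
      ∀ a b, t0 ≤ a → b ≤ α → a ≤ b → ‖∫ s in a..b, g s‖ ≤ Kb * (b - a) := by
    intro g Kb hb a b ha hbα hab
    have h0 := (ae_restrict_iff' measurableSet_Icc).1 hb
    have h1 : ∀ᵐ s ∂volume, s ∈ Set.uIoc a b → ‖g s‖ ≤ Kb := by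
      filter_upwards [h0] with s hs hmem
      rw [uIoc_of_le hab] at hmem
      exact hs ⟨le_trans ha hmem.1.le, le_trans hmem.2 hbα⟩
    have h2 := intervalIntegral.norm_integral_le_of_norm_le_const_ae h1
    rwa [abs_of_nonneg (by linarith)] at h2
  -- a.e. bound for the difference of integrands
  have haediff : ∀ (ρ Lρ : ℝ), 0 ≤ Lρ →
      (∀ᵐ t ∂(volume.restrict (Icc t0 α)), ∀ ψ1 ψ2 : ℝ → (Fin n → ℝ),
        (∀ u ∈ Icc (-θ) 0, ‖ψ1 u‖ ≤ ρ) → (∀ u ∈ Icc (-θ) 0, ‖ψ2 u‖ ≤ ρ) →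
        ‖f t ψ1 - f t ψ2‖ ≤ Lρ * sSup ((fun u => ‖ψ1 u - ψ2 u‖) '' Icc (-θ) 0)) →
      ∀ y z : ℝ → Fin n → ℝ, (∀ u, ‖φ u‖ ≤ ρ) → (∀ t ∈ Icc t0 α, ‖y t‖ ≤ ρ) →
      (∀ t ∈ Icc t0 α, ‖z t‖ ≤ ρ) →
      ∀ D : ℝ, 0 ≤ D → (∀ r ∈ Icc t0 α, ‖y r - z r‖ ≤ D) →
      ∀ᵐ s ∂(volume.restrict (Icc t0 α)),
        ‖f s (seg15 n t0 φ y s) - f s (seg15 n t0 φ z s)‖ ≤ Lρ * D := by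
    intro ρ Lρ hLρ hlip y z hφρ hyρ hzρ D hD0 hDle
    filter_upwards [hlip, ae_restrict_mem measurableSet_Icc] with s hs1 hsmem
    refine le_trans (hs1 _ _ (fun u hu => hseg ρ y hφρ hyρ s hsmem u hu)
      (fun u hu => hseg ρ z hφρ hzρ s hsmem u hu)) (mul_le_mul_of_nonneg_left ?_ hLρ)
    refine Real.sSup_le ?_ hD0
    rintro v ⟨u, hu, rfl⟩
    by_cases h : s + u < t0
    · simpa [seg15, h] using hD0
    · have hm : s + u ∈ Icc t0 α := ⟨not_lt.1 h, by linarith [hsmem.2, hu.2]⟩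
      simpa [seg15, h] using hDle _ hm
  -- bullet A : self-map
  have bulletA : ∀ y : ℝ → Fin n → ℝ, ContinuousOn y (Icc t0 α) →
      (∀ t ∈ Icc t0 α, ‖y t‖ ≤ R) →
      ∀ t ∈ Icc t0 α, ‖φ 0 + ∫ s in t0..t, f s (seg15 n t0 φ y s)‖ ≤ R := by
    intro y _ hyb t ht
    have hb := haeb R L (max C0 0) hR0.le hL0 hLae hC0ae y hCφR hyb
    have h2 := hIb _ M hb t0 t le_rfl ht.2 ht.1
    have htε : t - t0 ≤ ε := by have := ht.2; simp only [hαdef] at this; linarith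
    have h3 : M * (t - t0) ≤ 1 := by nlinarith
    calc ‖φ 0 + ∫ s in t0..t, f s (seg15 n t0 φ y s)‖
        ≤ ‖φ 0‖ + ‖∫ s in t0..t, f s (seg15 n t0 φ y s)‖ := norm_add_le _ _
      _ ≤ Cφ + M * (t - t0) := add_le_add (hCφ 0) h2
      _ ≤ Cφ + 1 := by linarith
  -- bullet B : contraction estimate
  have bulletB : ∀ y z : ℝ → Fin n → ℝ, ContinuousOn y (Icc t0 α) →
      ContinuousOn z (Icc t0 α) →
      (∀ t ∈ Icc t0 α, ‖y t‖ ≤ R) → (∀ t ∈ Icc t0 α, ‖z t‖ ≤ R) →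
      ∀ t ∈ Icc t0 α,
        ‖(φ 0 + ∫ s in t0..t, f s (seg15 n t0 φ y s)) -
            (φ 0 + ∫ s in t0..t, f s (seg15 n t0 φ z s))‖ ≤
          (L * ε) * sSup ((fun r => ‖y r - z r‖) '' Icc t0 α) := by
    intro y z hyc hzc hyb hzb t ht
    set D := sSup ((fun r => ‖y r - z r‖) '' Icc t0 α) with hDdef
    have hbdd : BddAbove ((fun r => ‖y r - z r‖) '' Icc t0 α) :=
      (isCompact_Icc.image_of_continuousOn ((hyc.sub hzc).norm)).bddAbove
    have ht0m : t0 ∈ Icc t0 α := ⟨le_rfl, hα.le⟩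
    have hD0 : 0 ≤ D := le_trans (norm_nonneg (y t0 - z t0)) (le_csSup hbdd ⟨t0, ht0m, rfl⟩)
    have hDle : ∀ r ∈ Icc t0 α, ‖y r - z r‖ ≤ D := fun r hr => le_csSup hbdd ⟨r, hr, rfl⟩
    have hae := haediff R L hL0 hLae y z hCφR hyb hzb D hD0 hDle
    have hIy := hinteg R L (max C0 0) hR0.le hL0 hLae hC0ae y hyc hCφR hyb
    have hIz := hinteg R L (max C0 0) hR0.le hL0 hLae hC0ae z hzc hCφR hzb
    have heq : (φ 0 + ∫ s in t0..t, f s (seg15 n t0 φ y s)) -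
        (φ 0 + ∫ s in t0..t, f s (seg15 n t0 φ z s)) =
        ∫ s in t0..t, (f s (seg15 n t0 φ y s) - f s (seg15 n t0 φ z s)) := by
      rw [intervalIntegral.integral_sub (hII _ hIy t0 t le_rfl ht.2 ht.1)
        (hII _ hIz t0 t le_rfl ht.2 ht.1)]
      abel
    rw [heq]
    have h2 := hIb _ (L * D) hae t0 t le_rfl ht.2 ht.1
    have htε : t - t0 ≤ ε := by have := ht.2; simp only [hαdef] at this; linarith
    refine le_trans h2 ?_
    have h3 : L * D * (t - t0) ≤ L * D * ε :=
      mul_le_mul_of_nonneg_left htε (mul_nonneg hL0 hD0)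
    nlinarith
  -- Banach fixed point setup
  haveI : Nonempty (Icc t0 α) := ⟨⟨t0, le_rfl, hα.le⟩⟩
  set extd : C(Icc t0 α, Fin n → ℝ) → ℝ → Fin n → ℝ :=
    fun y t => y (projIcc t0 α hα.le t) with hextdef
  have hextc : ∀ y, Continuous (extd y) := fun y => y.continuous.comp continuous_projIcc
  have hexteq : ∀ y t (ht : t ∈ Icc t0 α), extd y t = y ⟨t, ht⟩ := by
    intro y t ht
    simp only [hextdef]
    rw [projIcc_of_mem hα.le ht]
  have hextb : ∀ y : C(Icc t0 α, Fin n → ℝ), ‖y‖ ≤ R → ∀ t ∈ Icc t0 α, ‖extd y t‖ ≤ R := by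
    intro y hy t ht
    rw [hexteq y t ht]
    exact (ContinuousMap.norm_coe_le_norm y _).trans hy
  have key : ∀ y : C(Icc t0 α, Fin n → ℝ), ‖y‖ ≤ R →
      Continuous (fun t : Icc t0 α =>
        φ 0 + ∫ s in t0..(t : ℝ), f s (seg15 n t0 φ (extd y) s)) := by
    intro y hy
    have hint := hinteg R L (max C0 0) hR0.le hL0 hLae hC0ae (extd y)
      (hextc y).continuousOn hCφR (hextb y hy)
    have h1 : ContinuousOn (fun t : ℝ => ∫ s in t0..t, f s (seg15 n t0 φ (extd y) s))
        (Icc t0 α) := by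
      have h2 := intervalIntegral.continuousOn_primitive_interval (μ := volume)
        (a := t0) (b := α) (f := fun s => f s (seg15 n t0 φ (extd y) s))
        (by rwa [uIcc_of_le hα.le])
      simpa [uIcc_of_le hα.le] using h2
    exact continuous_const.add h1.restrict
  set ball : Set C(Icc t0 α, Fin n → ℝ) := Metric.closedBall 0 R with hballdef
  have hmem_iff : ∀ y : C(Icc t0 α, Fin n → ℝ), y ∈ ball ↔ ‖y‖ ≤ R := by
    intro y; simp [hballdef, Metric.mem_closedBall, dist_zero_right]
  haveI : CompleteSpace ball := Metric.isClosed_closedBall.completeSpace_coe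
  haveI : Nonempty ball := ⟨⟨0, Metric.mem_closedBall_self hR0.le⟩⟩
  set P : ball → C(Icc t0 α, Fin n → ℝ) := fun y =>
    ⟨_, key y.1 ((hmem_iff y.1).1 y.2)⟩ with hPdef
  have hPmem : ∀ y : ball, P y ∈ ball := by
    intro y
    rw [hmem_iff]
    rw [ContinuousMap.norm_le _ hR0.le]
    intro t
    exact bulletA (extd y.1) (hextc _).continuousOn
      (hextb _ ((hmem_iff y.1).1 y.2)) t t.2
  set Q : ball → ball := fun y => ⟨P y, hPmem y⟩ with hQdef
  have hκ0 : 0 ≤ L * ε := mul_nonneg hL0 hε0.le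
  have hQcontr : ContractingWith ⟨L * ε, hκ0⟩ Q := by
    constructor
    · refine NNReal.coe_lt_coe.1 (show L * ε < 1 from ?_)
      push_cast
      linarith
    · apply LipschitzWith.of_dist_le_mul
      intro y z
      rw [Subtype.dist_eq]
      show dist (P y) (P z) ≤ (L * ε) * dist y z
      rw [Subtype.dist_eq] at *
      refine (ContinuousMap.dist_le (mul_nonneg hκ0 dist_nonneg)).2 ?_
      intro t
      rw [dist_eq_norm]
      have hDle : ∀ r ∈ Icc t0 α, ‖extd y.1 r - extd z.1 r‖ ≤ dist y.1 z.1 := by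
        intro r hr
        rw [hexteq _ _ hr, hexteq _ _ hr, ← dist_eq_norm]
        exact ContinuousMap.dist_apply_le_dist _
      have hby := hextb y.1 ((hmem_iff y.1).1 y.2)
      have hbz := hextb z.1 ((hmem_iff z.1).1 z.2)
      have hae := haediff R L hL0 hLae (extd y.1) (extd z.1) hCφR hby hbz
        (dist y.1 z.1) dist_nonneg hDle
      have hIy := hinteg R L (max C0 0) hR0.le hL0 hLae hC0ae (extd y.1)
        (hextc _).continuousOn hCφR hby
      have hIz := hinteg R L (max C0 0) hR0.le hL0 hLae hC0ae (extd z.1)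
        (hextc _).continuousOn hCφR hbz
      have heq : P y t - P z t =
          ∫ s in t0..(t : ℝ), (f s (seg15 n t0 φ (extd y.1) s) -
            f s (seg15 n t0 φ (extd z.1) s)) := by
        show (φ 0 + ∫ s in t0..(t : ℝ), f s (seg15 n t0 φ (extd y.1) s)) -
            (φ 0 + ∫ s in t0..(t : ℝ), f s (seg15 n t0 φ (extd z.1) s)) = _
        rw [intervalIntegral.integral_sub (hII _ hIy t0 t le_rfl t.2.2 t.2.1)
          (hII _ hIz t0 t le_rfl t.2.2 t.2.1)]
        abel
      rw [heq]
      have h2 := hIb _ (L * dist y.1 z.1) hae t0 t le_rfl t.2.2 t.2.1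
      have htε : (t : ℝ) - t0 ≤ ε := by have := t.2.2; simp only [hαdef] at this; linarith
      refine le_trans h2 ?_
      nlinarith [mul_nonneg hL0 (dist_nonneg (x := y.1) (y := z.1))]
  set xC : ball := ContractingWith.fixedPoint Q hQcontr with hxCdef
  have hfix : Q xC = xC := hQcontr.fixedPoint_isFixedPt
  set x : ℝ → Fin n → ℝ := extd xC.1 with hxdef
  have hxeq : ∀ t ∈ Icc t0 α, x t = φ 0 + ∫ s in t0..t, f s (seg15 n t0 φ x s) := by
    intro t ht
    have h1 : xC.1 = P xC := (congrArg Subtype.val hfix).symm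
    calc x t = xC.1 ⟨t, ht⟩ := hexteq _ _ ht
      _ = (P xC) ⟨t, ht⟩ := by rw [← h1]
      _ = φ 0 + ∫ s in t0..t, f s (seg15 n t0 φ x s) := rfl
  -- uniqueness
  have huniq : ∀ y z : ℝ → Fin n → ℝ, ContinuousOn y (Icc t0 α) →
      ContinuousOn z (Icc t0 α) →
      (∀ t ∈ Icc t0 α, y t = φ 0 + ∫ s in t0..t, f s (seg15 n t0 φ y s)) →
      (∀ t ∈ Icc t0 α, z t = φ 0 + ∫ s in t0..t, f s (seg15 n t0 φ z s)) →
      ∀ t ∈ Icc t0 α, y t = z t := by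
    intro y z hyc hzc hye hze
    obtain ⟨ty, _, hty⟩ := isCompact_Icc.exists_isMaxOn (nonempty_Icc.2 hα.le) hyc.norm
    obtain ⟨tz, _, htz⟩ := isCompact_Icc.exists_isMaxOn (nonempty_Icc.2 hα.le) hzc.norm
    set ρ : ℝ := max (max ‖y ty‖ ‖z tz‖) Cφ + 1 with hρdef
    have hρ0 : 0 < ρ := by
      have := le_max_right (max ‖y ty‖ ‖z tz‖) Cφ
      simp only [hρdef]; linarith
    have hρφ : ∀ u, ‖φ u‖ ≤ ρ := fun u => by
      have h1 := hCφ u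
      have := le_max_right (max ‖y ty‖ ‖z tz‖) Cφ
      simp only [hρdef]; linarith
    have hρy : ∀ t ∈ Icc t0 α, ‖y t‖ ≤ ρ := fun t ht => by
      have h1 := hty ht
      have h2 := le_max_left ‖y ty‖ ‖z tz‖
      have h3 := le_max_left (max ‖y ty‖ ‖z tz‖) Cφ
      simp only [hρdef]
      simp only [IsMaxOn, IsMaxFilter] at h1
      linarith [show ‖y t‖ ≤ ‖y ty‖ from h1]
    have hρz : ∀ t ∈ Icc t0 α, ‖z t‖ ≤ ρ := fun t ht => by
      have h1 := htz ht
      have h2 := le_max_right ‖y ty‖ ‖z tz‖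
      have h3 := le_max_left (max ‖y ty‖ ‖z tz‖) Cφ
      simp only [hρdef]
      linarith [show ‖z t‖ ≤ ‖z tz‖ from h1]
    obtain ⟨L', hL'0, hL'ae0⟩ := hLip ρ hρ0 α (by linarith)
    obtain ⟨C0', hC0'ae0⟩ := hf0 α (by linarith)
    have hres' : ae (volume.restrict (Icc t0 α)) ≤ ae (volume.restrict (Icc 0 α)) :=
      ae_mono (Measure.restrict_mono (Icc_subset_Icc ht0 le_rfl) le_rfl)
    have hL'ae := hL'ae0.filter_mono hres'
    have hC0'ae := hC0'ae0.filter_mono hres'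
    have hIy := hinteg ρ L' C0' hρ0.le hL'0 hL'ae hC0'ae y hyc hρφ hρy
    have hIz := hinteg ρ L' C0' hρ0.le hL'0 hL'ae hC0'ae z hzc hρφ hρz
    set S : Set ℝ := {t | t ∈ Icc t0 α ∧ ∀ s ∈ Icc t0 t, y s = z s} with hSdef
    have ht0S : t0 ∈ S := by
      refine ⟨⟨le_rfl, hα.le⟩, fun s hs => ?_⟩
      have hst : s = t0 := le_antisymm hs.2 hs.1
      subst hst
      rw [hye s ⟨le_rfl, hα.le⟩, hze s ⟨le_rfl, hα.le⟩,
        intervalIntegral.integral_same, intervalIntegral.integral_same]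
    have hSbdd : BddAbove S := ⟨α, fun t ht => ht.1.2⟩
    set τ : ℝ := sSup S with hτdef
    have hτmem : τ ∈ Icc t0 α :=
      ⟨le_csSup hSbdd ht0S, csSup_le ⟨t0, ht0S⟩ fun t ht => ht.1.2⟩
    have hbefore : ∀ s, t0 ≤ s → s < τ → y s = z s := by
      intro s hs1 hs2
      obtain ⟨t, htS, hst⟩ := exists_lt_of_lt_csSup ⟨t0, ht0S⟩ hs2
      exact htS.2 s ⟨hs1, hst.le⟩
    have hτeq : y τ = z τ := by
      rcases eq_or_lt_of_le hτmem.1 with h0 | h0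
      · rw [← h0]; exact ht0S.2 t0 ⟨le_rfl, le_rfl⟩
      · haveI hne : (nhdsWithin τ (Ico t0 τ)).NeBot := by
          rw [← mem_closure_iff_nhdsWithin_neBot, closure_Ico h0.ne]
          exact ⟨h0.le, le_rfl⟩
        have hsub2 : Ico t0 τ ⊆ Icc t0 α := fun r hr => ⟨hr.1, hr.2.le.trans hτmem.2⟩
        have h1 : Tendsto y (nhdsWithin τ (Ico t0 τ)) (nhds (y τ)) :=
          (hyc τ hτmem).mono hsub2
        have h2 : Tendsto z (nhdsWithin τ (Ico t0 τ)) (nhds (z τ)) :=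
          (hzc τ hτmem).mono hsub2
        have heqf : y =ᶠ[nhdsWithin τ (Ico t0 τ)] z :=
          eventually_nhdsWithin_of_forall fun r hr => hbefore r hr.1 hr.2
        exact tendsto_nhds_unique (h1.congr' heqf) h2
    have hτS : ∀ s ∈ Icc t0 τ, y s = z s := by
      intro s hs
      rcases lt_or_eq_of_le hs.2 with h | h
      · exact hbefore s hs.1 h
      · rw [h]; exact hτeq
    have hτα : α ≤ τ := by
      by_contra hc
      push_neg at hc
      set δ : ℝ := min (α - τ) (1 / (2 * (L' + 1))) with hδdef
      have hδ0 : 0 < δ := lt_min (by linarith) (by positivity)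
      have hδ2 : L' * δ ≤ 1 / 2 := by
        have h1 : δ ≤ 1 / (2 * (L' + 1)) := min_le_right _ _
        have h2 : L' * δ ≤ L' * (1 / (2 * (L' + 1))) := mul_le_mul_of_nonneg_left h1 hL'0
        have h3 : L' * (1 / (2 * (L' + 1))) ≤ 1 / 2 := by
          rw [mul_one_div, div_le_div_iff₀ (by positivity) (by norm_num)]
          nlinarith
        linarith
      set t' : ℝ := τ + δ with ht'def
      have ht'mem : t' ∈ Icc t0 α := by
        constructor
        · have := hτmem.1; simp only [ht'def]; linarith
        · have := min_le_left (α - τ) (1 / (2 * (L' + 1)))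
          simp only [ht'def, hδdef]; linarith
      have hττ' : τ ≤ t' := by simp only [ht'def]; linarith
      have hsub3 : Icc τ t' ⊆ Icc t0 α := Icc_subset_Icc hτmem.1 ht'mem.2
      have hdc : ContinuousOn (fun t => ‖y t - z t‖) (Icc τ t') :=
        ((hyc.mono hsub3).sub (hzc.mono hsub3)).norm
      obtain ⟨tm, htmmem, htmmax⟩ :=
        isCompact_Icc.exists_isMaxOn (nonempty_Icc.2 hττ') hdc
      set dmax : ℝ := ‖y tm - z tm‖ with hdmdef
      have hdm0 : 0 ≤ dmax := norm_nonneg _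
      -- key pointwise estimate on [τ, t']
      have hest : ∀ t ∈ Icc τ t', ‖y t - z t‖ ≤ (L' * dmax) * (t - τ) := by
        intro t ht
        have htΩ : t ∈ Icc t0 α := hsub3 ht
        have hkey : y t - z t = ∫ s in τ..t,
            (f s (seg15 n t0 φ y s) - f s (seg15 n t0 φ z s)) := by
          have hay := intervalIntegral.integral_add_adjacent_intervals
            (hII _ hIy t0 τ le_rfl hτmem.2 hτmem.1) (hII _ hIy τ t hτmem.1 htΩ.2 ht.1)
          have haz := intervalIntegral.integral_add_adjacent_intervals
            (hII _ hIz t0 τ le_rfl hτmem.2 hτmem.1) (hII _ hIz τ t hτmem.1 htΩ.2 ht.1)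
          have e5 : (∫ s in t0..τ, f s (seg15 n t0 φ y s)) =
              ∫ s in t0..τ, f s (seg15 n t0 φ z s) := by
            have e6 : φ 0 + (∫ s in t0..τ, f s (seg15 n t0 φ y s)) =
                φ 0 + ∫ s in t0..τ, f s (seg15 n t0 φ z s) := by
              rw [← hye τ hτmem, ← hze τ hτmem, hτeq]
            exact add_left_cancel e6
          rw [intervalIntegral.integral_sub (hII _ hIy τ t hτmem.1 htΩ.2 ht.1)
            (hII _ hIz τ t hτmem.1 htΩ.2 ht.1)]
          rw [hye t htΩ, hze t htΩ, ← hay, ← haz, e5]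
          abel
        have hvol := (ae_restrict_iff' measurableSet_Icc).1 hL'ae
        have hae2 : ∀ᵐ s ∂volume, s ∈ Set.uIoc τ t →
            ‖f s (seg15 n t0 φ y s) - f s (seg15 n t0 φ z s)‖ ≤ L' * dmax := by
          filter_upwards [hvol] with s hlip hsmem
          rw [uIoc_of_le ht.1] at hsmem
          have hsΩ : s ∈ Icc t0 α :=
            ⟨le_trans hτmem.1 hsmem.1.le, le_trans hsmem.2 htΩ.2⟩
          refine le_trans (hlip hsΩ _ _ (fun u hu => hseg ρ y hρφ hρy s hsΩ u hu)
            (fun u hu => hseg ρ z hρφ hρz s hsΩ u hu))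
            (mul_le_mul_of_nonneg_left ?_ hL'0)
          refine Real.sSup_le ?_ hdm0
          rintro v ⟨u, hu, rfl⟩
          by_cases hc1 : s + u < t0
          · simpa [seg15, hc1] using hdm0
          · have h7 : t0 ≤ s + u := not_lt.1 hc1
            by_cases hc2 : s + u ≤ τ
            · have h8 := hτS (s + u) ⟨h7, hc2⟩
              simp [seg15, hc1, h8, hdm0]
            · have h9 : s + u ∈ Icc τ t' :=
                ⟨(not_le.1 hc2).le, by linarith [hu.2, hsmem.2, ht.2]⟩
              simpa [seg15, hc1] using htmmax h9
        have h6 := intervalIntegral.norm_integral_le_of_norm_le_const_ae hae2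
        rw [hkey]
        rwa [abs_of_nonneg (by linarith [ht.1])] at h6
      have hcontra := hest tm htmmem
      have htmτ : tm - τ ≤ δ := by
        have := htmmem.2; simp only [ht'def] at this; linarith
      have h10 : (L' * dmax) * (tm - τ) ≤ (L' * dmax) * δ :=
        mul_le_mul_of_nonneg_left htmτ (mul_nonneg hL'0 hdm0)
      have h11 : dmax ≤ (L' * δ) * dmax := by
        have : (L' * dmax) * δ = (L' * δ) * dmax := by ring
        rw [← hdmdef] at hcontra
        linarith [hcontra, h10, this ▸ h10]
      have h12 : dmax ≤ 0 := by nlinarith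
      have hdzero : ∀ s ∈ Icc τ t', y s = z s := by
        intro s hs
        have := htmmax hs
        have h13 : ‖y s - z s‖ ≤ 0 := le_trans this h12
        have h14 : ‖y s - z s‖ = 0 := le_antisymm h13 (norm_nonneg _)
        exact sub_eq_zero.1 (norm_eq_zero.1 h14)
      have ht'S : t' ∈ S := by
        refine ⟨ht'mem, fun s hs => ?_⟩
        by_cases hc3 : s ≤ τ
        · exact hτS s ⟨hs.1, hc3⟩
        · exact hdzero s ⟨(not_le.1 hc3).le, hs.2⟩
      have := le_csSup hSbdd ht'S
      simp only [ht'def] at this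
      linarith [this, hδ0]
    intro t ht
    exact hτS t ⟨ht.1, le_trans ht.2 hτα⟩
  refine ⟨α, hα, R, hR0, L * ε, ⟨hκ0, by linarith⟩, bulletA, bulletB, x,
    (hextc xC.1).continuousOn, hxeq, fun y hy hyeq t ht =>
      huniq y x hy (hextc xC.1).continuousOn hyeq hxeq t ht⟩
end

section
/- Under the same local Lipschitz, local boundedness, and measurability assumptions on f, any two maximally defined solutions of ẋ(t) = f(t,(φ⋄_{t0}x)_t) from the same bounded initial history φ coincide: their maximal existence intervals are equal and they agree on it. -/
open MeasureTheory Set Filter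
open scoped ENNReal

/-- Segment at time `t` of the concatenation `φ ⋄_{t0} x`. -/
noncomputable def seg16 (n : ℕ) (t0 : ℝ) (φ x : ℝ → (Fin n → ℝ)) (t u : ℝ) : Fin n → ℝ :=
  if t + u < t0 then φ (t + u - t0) else x (t + u)

/-- `x` is a solution of `ẋ(t) = f(t,(φ⋄_{t0}x)_t)`, `x(t0)=φ(0)`, on `[t0, Tx)`
(`Tx = ⊤` means global existence): it is continuous there and satisfies the
integral equation. -/
def IsSolOn16 (n : ℕ) (f : ℝ → (ℝ → (Fin n → ℝ)) → (Fin n → ℝ)) (t0 : ℝ)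
    (φ x : ℝ → (Fin n → ℝ)) (Tx : ℝ≥0∞) : Prop :=
  ENNReal.ofReal t0 < Tx ∧
  ContinuousOn x {t : ℝ | t0 ≤ t ∧ ENNReal.ofReal t < Tx} ∧
  ∀ t, t0 ≤ t → ENNReal.ofReal t < Tx →
    x t = φ 0 + ∫ s in t0..t, f s (seg16 n t0 φ x s)

lemma key16 (n : ℕ) (θ : ℝ) (hθ : 0 < θ)
    (f : ℝ → (ℝ → (Fin n → ℝ)) → (Fin n → ℝ))
    (hLip : ∀ R > (0 : ℝ), ∀ T > (0 : ℝ), ∃ L ≥ (0 : ℝ),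
      ∀ᵐ t ∂(volume.restrict (Set.Icc 0 T)), ∀ ψ1 ψ2 : ℝ → (Fin n → ℝ),
        (∀ u ∈ Set.Icc (-θ) 0, ‖ψ1 u‖ ≤ R) → (∀ u ∈ Set.Icc (-θ) 0, ‖ψ2 u‖ ≤ R) →
        ‖f t ψ1 - f t ψ2‖ ≤ L * sSup ((fun u => ‖ψ1 u - ψ2 u‖) '' Set.Icc (-θ) 0))
    (hf0 : ∀ T > (0 : ℝ), ∃ C : ℝ, ∀ᵐ t ∂(volume.restrict (Set.Icc 0 T)), ‖f t 0‖ ≤ C)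
    (hfmeas : ∀ t0 ≥ (0 : ℝ), ∀ T > t0, ∀ φ : ℝ → (Fin n → ℝ), Measurable φ →
      (∃ C : ℝ, ∀ u, ‖φ u‖ ≤ C) → ∀ x : ℝ → (Fin n → ℝ), ContinuousOn x (Set.Icc t0 T) →
      AEMeasurable (fun t => f t (seg16 n t0 φ x t)) (volume.restrict (Set.Icc t0 T)))
    (t0 : ℝ) (ht0 : 0 ≤ t0) (φ : ℝ → (Fin n → ℝ)) (hφm : Measurable φ)
    (hφb : ∃ C : ℝ, ∀ u, ‖φ u‖ ≤ C)
    (x y : ℝ → (Fin n → ℝ)) (Tx Ty : ℝ≥0∞)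
    (hx : IsSolOn16 n f t0 φ x Tx) (hy : IsSolOn16 n f t0 φ y Ty) :
    ∀ t, t0 ≤ t → ENNReal.ofReal t < Tx → ENNReal.ofReal t < Ty → x t = y t := by
  have hx0 : x t0 = φ 0 := by
    have h := hx.2.2 t0 le_rfl hx.1
    simpa [intervalIntegral.integral_same] using h
  have hy0 : y t0 = φ 0 := by
    have h := hy.2.2 t0 le_rfl hy.1
    simpa [intervalIntegral.integral_same] using h
  intro t1 ht1 hTx hTy
  rcases eq_or_lt_of_le ht1 with rfl | ht01
  · rw [hx0, hy0]
  have ht1pos : 0 < t1 := lt_of_le_of_lt ht0 ht01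
  have hmemx : ∀ s ∈ Icc t0 t1, s ∈ {t : ℝ | t0 ≤ t ∧ ENNReal.ofReal t < Tx} :=
    fun s hs => ⟨hs.1, lt_of_le_of_lt (ENNReal.ofReal_le_ofReal hs.2) hTx⟩
  have hmemy : ∀ s ∈ Icc t0 t1, s ∈ {t : ℝ | t0 ≤ t ∧ ENNReal.ofReal t < Ty} :=
    fun s hs => ⟨hs.1, lt_of_le_of_lt (ENNReal.ofReal_le_ofReal hs.2) hTy⟩
  have hxc : ContinuousOn x (Icc t0 t1) := hx.2.1.mono hmemx
  have hyc : ContinuousOn y (Icc t0 t1) := hy.2.1.mono hmemy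
  obtain ⟨Rx, hRx⟩ := isCompact_Icc.exists_bound_of_continuousOn hxc
  obtain ⟨Ry, hRy⟩ := isCompact_Icc.exists_bound_of_continuousOn hyc
  obtain ⟨C, hC⟩ := hφb
  set R : ℝ := max 1 (max C (max Rx Ry)) with hRdef
  have hRpos : (0:ℝ) < R := lt_of_lt_of_le one_pos (le_max_left _ _)
  obtain ⟨L, hL0, hLae⟩ := hLip R hRpos t1 ht1pos
  have hsub01 : Icc t0 t1 ⊆ Icc (0:ℝ) t1 := Icc_subset_Icc ht0 le_rfl
  have hLae' := ae_restrict_of_ae_restrict_of_subset hsub01 hLae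
  -- segment bounds
  have hsegx : ∀ s ∈ Icc t0 t1, ∀ u ∈ Icc (-θ) 0, ‖seg16 n t0 φ x s u‖ ≤ R := by
    intro s hs u hu
    rw [seg16]
    split_ifs with h
    · exact le_trans (hC _) (le_trans (le_trans (le_max_left _ _) (le_max_right 1 _)) le_rfl)
    · have h1 : t0 ≤ s + u := not_lt.1 h
      have h2 : s + u ≤ t1 := le_trans (by linarith [hu.2]) hs.2
      exact le_trans (hRx _ ⟨h1, h2⟩)
        (le_trans (le_trans (le_max_left Rx Ry) (le_max_right C _)) (le_max_right 1 _))
  have hsegy : ∀ s ∈ Icc t0 t1, ∀ u ∈ Icc (-θ) 0, ‖seg16 n t0 φ y s u‖ ≤ R := by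
    intro s hs u hu
    rw [seg16]
    split_ifs with h
    · exact le_trans (hC _) (le_trans (le_trans (le_max_left _ _) (le_max_right 1 _)) le_rfl)
    · have h1 : t0 ≤ s + u := not_lt.1 h
      have h2 : s + u ≤ t1 := le_trans (by linarith [hu.2]) hs.2
      exact le_trans (hRy _ ⟨h1, h2⟩)
        (le_trans (le_trans (le_max_right Rx Ry) (le_max_right C _)) (le_max_right 1 _))
  -- integrands
  set Fx : ℝ → (Fin n → ℝ) := fun s => f s (seg16 n t0 φ x s) with hFxdef
  set Fy : ℝ → (Fin n → ℝ) := fun s => f s (seg16 n t0 φ y s) with hFydef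
  have hFxm : AEMeasurable Fx (volume.restrict (Icc t0 t1)) :=
    hfmeas t0 ht0 t1 ht01 φ hφm ⟨C, hC⟩ x hxc
  have hFym : AEMeasurable Fy (volume.restrict (Icc t0 t1)) :=
    hfmeas t0 ht0 t1 ht01 φ hφm ⟨C, hC⟩ y hyc
  obtain ⟨C0, hC0⟩ := hf0 t1 ht1pos
  have hC0' := ae_restrict_of_ae_restrict_of_subset hsub01 hC0
  have hzero : ∀ u ∈ Icc (-θ) 0, ‖(0 : ℝ → Fin n → ℝ) u‖ ≤ R := by
    intro u hu; simp [hRpos.le]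
  have hsSupR : ∀ (ψ : ℝ → Fin n → ℝ), (∀ u ∈ Icc (-θ) 0, ‖ψ u‖ ≤ R) →
      sSup ((fun u => ‖ψ u - (0 : ℝ → Fin n → ℝ) u‖) '' Icc (-θ) 0) ≤ R := by
    intro ψ hψ
    apply Real.sSup_le _ hRpos.le
    rintro v ⟨u, hu, rfl⟩
    simpa using hψ u hu
  have hFbd : ∀ (F : ℝ → Fin n → ℝ) (z : ℝ → Fin n → ℝ),
      (F = fun s => f s (seg16 n t0 φ z s)) →
      (∀ s ∈ Icc t0 t1, ∀ u ∈ Icc (-θ) 0, ‖seg16 n t0 φ z s u‖ ≤ R) →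
      ∀ᵐ s ∂(volume.restrict (Icc t0 t1)), ‖F s‖ ≤ C0 + L * R := by
    intro F z hFdef hseg
    filter_upwards [hLae', hC0', ae_restrict_mem measurableSet_Icc] with s h1 h2 hsI
    have h3 := h1 (seg16 n t0 φ z s) 0 (hseg s hsI) hzero
    have h4 : ‖F s‖ ≤ ‖f s 0‖ + ‖f s (seg16 n t0 φ z s) - f s 0‖ := by
      rw [hFdef]
      exact norm_le_insert' _ _
    calc ‖F s‖ ≤ ‖f s 0‖ + ‖f s (seg16 n t0 φ z s) - f s 0‖ := h4
      _ ≤ C0 + L * R := by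
          gcongr
          exact h3.trans (mul_le_mul_of_nonneg_left (hsSupR _ (hseg s hsI)) hL0)
  have hFxint : IntegrableOn Fx (Icc t0 t1) volume := by
    refine Integrable.mono' (integrableOn_const measure_Icc_lt_top.ne)
      hFxm.aestronglyMeasurable (hFbd Fx x hFxdef hsegx)
  have hFyint : IntegrableOn Fy (Icc t0 t1) volume := by
    refine Integrable.mono' (integrableOn_const measure_Icc_lt_top.ne)
      hFym.aestronglyMeasurable (hFbd Fy y hFydef hsegy)
  -- the deviation and its running supremum
  set Δ : ℝ → ℝ := fun s => ‖x s - y s‖ with hΔdef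
  set g : ℝ → ℝ := fun s => sSup (Δ '' Icc t0 (min s t1)) with hgdef
  have hΔc : ContinuousOn Δ (Icc t0 t1) := (hxc.sub hyc).norm
  have hbdd : BddAbove (Δ '' Icc t0 t1) :=
    (isCompact_Icc.image_of_continuousOn hΔc).bddAbove
  have hgnn : ∀ s, 0 ≤ g s := by
    intro s
    apply Real.sSup_nonneg
    rintro v ⟨r, hr, rfl⟩
    exact norm_nonneg _
  have hbdd' : ∀ s, BddAbove (Δ '' Icc t0 (min s t1)) := by
    intro s
    exact hbdd.mono (image_mono (Icc_subset_Icc le_rfl (min_le_right _ _)))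
  have hgmono : Monotone g := by
    intro a b hab
    by_cases hne : t0 ≤ min a t1
    · exact csSup_le_csSup (hbdd' b) ⟨Δ t0, ⟨t0, ⟨le_rfl, hne⟩, rfl⟩⟩
        (image_mono (Icc_subset_Icc le_rfl (min_le_min hab le_rfl)))
    · have : Icc t0 (min a t1) = ∅ := Icc_eq_empty hne
      rw [hgdef]
      simp only [this, image_empty, Real.sSup_empty]
      exact hgnn b
  have hΔle : ∀ s ∈ Icc t0 t1, Δ s ≤ g s := by
    intro s hs
    rw [hgdef]
    simp only [min_eq_left hs.2]
    exact le_csSup (by simpa [min_eq_left hs.2] using hbdd' s)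
      (mem_image_of_mem Δ ⟨hs.1, le_rfl⟩)
  have hgii : ∀ a b : ℝ, IntervalIntegrable (fun s => L * g s) volume a b :=
    fun a b => (hgmono.intervalIntegrable).const_mul L
  -- main Gronwall-type estimate
  have hmain : ∀ t ∈ Icc t0 t1, Δ t ≤ ∫ s in t0..t, L * g s := by
    intro t ht
    have hxt := hx.2.2 t ht.1 (hmemx t ht).2
    have hyt := hy.2.2 t ht.1 (hmemy t ht).2
    have hFxii : IntervalIntegrable Fx volume t0 t :=
      (intervalIntegrable_iff_integrableOn_Icc_of_le ht.1).2
        (hFxint.mono_set (Icc_subset_Icc le_rfl ht.2))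
    have hFyii : IntervalIntegrable Fy volume t0 t :=
      (intervalIntegrable_iff_integrableOn_Icc_of_le ht.1).2
        (hFyint.mono_set (Icc_subset_Icc le_rfl ht.2))
    have heq : x t - y t = ∫ s in t0..t, (Fx s - Fy s) := by
      rw [intervalIntegral.integral_sub hFxii hFyii, hxt, hyt]
      abel
    have hptae : ∀ᵐ s ∂(volume.restrict (Icc t0 t1)), ‖Fx s - Fy s‖ ≤ L * g s := by
      filter_upwards [hLae', ae_restrict_mem measurableSet_Icc] with s h1 hsI
      have h2 := h1 (seg16 n t0 φ x s) (seg16 n t0 φ y s) (hsegx s hsI) (hsegy s hsI)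
      refine h2.trans (mul_le_mul_of_nonneg_left ?_ hL0)
      apply Real.sSup_le _ (hgnn s)
      rintro v ⟨u, hu, rfl⟩
      simp only [seg16]
      by_cases hc : s + u < t0
      · simp only [if_pos hc, sub_self, norm_zero]
        exact hgnn s
      · simp only [if_neg hc]
        have h1' : t0 ≤ s + u := not_lt.1 hc
        have h2' : s + u ≤ min s t1 := le_min (by linarith [hu.2]) (le_trans (by linarith [hu.2]) hsI.2)
        exact le_csSup (hbdd' s) (mem_image_of_mem Δ ⟨h1', h2'⟩)
    calc Δ t = ‖∫ s in t0..t, (Fx s - Fy s)‖ := by rw [hΔdef]; simp only [heq]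
      _ ≤ ∫ s in t0..t, ‖Fx s - Fy s‖ := intervalIntegral.norm_integral_le_integral_norm ht.1
      _ ≤ ∫ s in t0..t, L * g s := by
          refine intervalIntegral.integral_mono_ae_restrict ht.1 (hFxii.sub hFyii).norm
            (hgii t0 t) ?_
          exact ae_restrict_of_ae_restrict_of_subset (Icc_subset_Icc le_rfl ht.2) hptae
  have hgmain : ∀ t ∈ Icc t0 t1, g t ≤ ∫ s in t0..t, L * g s := by
    intro t ht
    rw [hgdef]
    simp only [min_eq_left ht.2]
    apply Real.sSup_le
    · rintro v ⟨r, hr, rfl⟩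
      calc Δ r ≤ ∫ s in t0..r, L * g s := hmain r ⟨hr.1, hr.2.trans ht.2⟩
        _ ≤ ∫ s in t0..t, L * g s := by
            refine intervalIntegral.integral_mono_interval le_rfl hr.1 hr.2 ?_ (hgii t0 t)
            exact Eventually.of_forall fun s => mul_nonneg hL0 (hgnn s)
    · exact intervalIntegral.integral_nonneg ht.1 fun s _ => mul_nonneg hL0 (hgnn s)
  -- iterate the inequality
  have hpowint : ∀ (k : ℕ) (t : ℝ), ∫ s in t0..t, (s - t0)^k = (t - t0)^(k+1) / (k+1) := by
    intro k t
    rw [intervalIntegral.integral_comp_sub_right (fun u => u ^ k) t0]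
    simp [integral_pow]
  have hiter : ∀ k : ℕ, ∀ t ∈ Icc t0 t1, g t ≤ g t1 * ((L * (t - t0))^k / (k.factorial : ℝ)) := by
    intro k
    induction k with
    | zero =>
      intro t ht
      simpa using hgmono ht.2
    | succ k ih =>
      intro t ht
      have h1 : g t ≤ ∫ s in t0..t, L * g s := hgmain t ht
      have hcont : IntervalIntegrable
          (fun s => L * (g t1 * ((L * (s - t0))^k / (k.factorial : ℝ)))) volume t0 t := by
        apply Continuous.intervalIntegrable
        exact continuous_const.mul (continuous_const.mul
          (((continuous_const.mul (continuous_id.sub continuous_const)).pow k).div_const _))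
      have h2 : (∫ s in t0..t, L * g s) ≤
          ∫ s in t0..t, L * (g t1 * ((L * (s - t0))^k / (k.factorial : ℝ))) := by
        refine intervalIntegral.integral_mono_on ht.1 (hgii t0 t) hcont ?_
        intro s hs
        exact mul_le_mul_of_nonneg_left (ih s ⟨hs.1, hs.2.trans ht.2⟩) hL0
      have h3 : (∫ s in t0..t, L * (g t1 * ((L * (s - t0))^k / (k.factorial : ℝ))))
          = g t1 * ((L * (t - t0))^(k+1) / ((k+1).factorial : ℝ)) := by
        have hfe : (fun s => L * (g t1 * ((L * (s - t0))^k / (k.factorial : ℝ))))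
            = fun s => (L^(k+1) * g t1 / (k.factorial : ℝ)) * (s - t0)^k := by
          funext s
          rw [mul_pow]
          ring
        rw [hfe, intervalIntegral.integral_const_mul, hpowint k t, Nat.factorial_succ,
          mul_pow]
        have hk0 : (k.factorial : ℝ) ≠ 0 := Nat.cast_ne_zero.2 k.factorial_ne_zero
        have hk1 : ((k:ℝ) + 1) ≠ 0 := by positivity
        push_cast
        field_simp
      exact h1.trans (h2.trans_eq h3)
  -- take the limit
  have htend : Tendsto (fun k : ℕ => g t1 * ((L * (t1 - t0))^k / (k.factorial : ℝ)))
      atTop (nhds 0) := by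
    have := (FloorSemiring.tendsto_pow_div_factorial_atTop (K := ℝ) (L * (t1 - t0))).const_mul (g t1)
    simpa using this
  have hg0 : g t1 ≤ 0 :=
    ge_of_tendsto' htend (fun k => hiter k t1 ⟨ht1, le_rfl⟩)
  have hΔz : Δ t1 = 0 := le_antisymm ((hΔle t1 ⟨ht1, le_rfl⟩).trans hg0) (norm_nonneg _)
  have : ‖x t1 - y t1‖ = 0 := hΔz
  rw [norm_eq_zero, sub_eq_zero] at this
  exact this

/-- A maximally defined solution: a solution that admits no strict extension. -/
def IsMaxSolOn16 (n : ℕ) (f : ℝ → (ℝ → (Fin n → ℝ)) → (Fin n → ℝ)) (t0 : ℝ)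
    (φ x : ℝ → (Fin n → ℝ)) (Tx : ℝ≥0∞) : Prop :=
  IsSolOn16 n f t0 φ x Tx ∧
  ∀ y : ℝ → (Fin n → ℝ), ∀ Ty : ℝ≥0∞, IsSolOn16 n f t0 φ y Ty →
    (∀ t, t0 ≤ t → ENNReal.ofReal t < Tx → y t = x t) → Ty ≤ Tx

/-- Uniqueness of maximally defined solutions: two maximal solutions from the same
bounded initial history have the same existence interval and coincide on it. -/
theorem stmt_16 (n : ℕ) (θ : ℝ) (hθ : 0 < θ)
    (f : ℝ → (ℝ → (Fin n → ℝ)) → (Fin n → ℝ))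
    (hLip : ∀ R > (0 : ℝ), ∀ T > (0 : ℝ), ∃ L ≥ (0 : ℝ),
      ∀ᵐ t ∂(volume.restrict (Set.Icc 0 T)), ∀ ψ1 ψ2 : ℝ → (Fin n → ℝ),
        (∀ u ∈ Set.Icc (-θ) 0, ‖ψ1 u‖ ≤ R) → (∀ u ∈ Set.Icc (-θ) 0, ‖ψ2 u‖ ≤ R) →
        ‖f t ψ1 - f t ψ2‖ ≤ L * sSup ((fun u => ‖ψ1 u - ψ2 u‖) '' Set.Icc (-θ) 0))
    (hf0 : ∀ T > (0 : ℝ), ∃ C : ℝ, ∀ᵐ t ∂(volume.restrict (Set.Icc 0 T)), ‖f t 0‖ ≤ C)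
    (hfmeas : ∀ t0 ≥ (0 : ℝ), ∀ T > t0, ∀ φ : ℝ → (Fin n → ℝ), Measurable φ →
      (∃ C : ℝ, ∀ u, ‖φ u‖ ≤ C) → ∀ x : ℝ → (Fin n → ℝ), ContinuousOn x (Set.Icc t0 T) →
      AEMeasurable (fun t => f t (seg16 n t0 φ x t)) (volume.restrict (Set.Icc t0 T)))
    (t0 : ℝ) (ht0 : 0 ≤ t0) (φ : ℝ → (Fin n → ℝ)) (hφm : Measurable φ)
    (hφb : ∃ C : ℝ, ∀ u, ‖φ u‖ ≤ C)
    (x y : ℝ → (Fin n → ℝ)) (Tx Ty : ℝ≥0∞)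
    (hx : IsMaxSolOn16 n f t0 φ x Tx) (hy : IsMaxSolOn16 n f t0 φ y Ty) :
    Tx = Ty ∧ ∀ t, t0 ≤ t → ENNReal.ofReal t < Tx → x t = y t := by
  have key := key16 n θ hθ f hLip hf0 hfmeas t0 ht0 φ hφm hφb x y Tx Ty hx.1 hy.1
  rcases le_total Tx Ty with hle | hle
  · have hagree : ∀ t, t0 ≤ t → ENNReal.ofReal t < Tx → y t = x t :=
      fun t h1 h2 => (key t h1 h2 (h2.trans_le hle)).symm
    have h1 : Ty ≤ Tx := hx.2 y Ty hy.1 hagree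
    exact ⟨le_antisymm hle h1, fun t ha hb => key t ha hb (hb.trans_le hle)⟩
  · have hagree : ∀ t, t0 ≤ t → ENNReal.ofReal t < Ty → x t = y t :=
      fun t h1 h2 => key t h1 (h2.trans_le hle) h2
    have h1 : Tx ≤ Ty := hy.2 x Tx hx.1 hagree
    exact ⟨le_antisymm h1 hle, fun t ha hb => key t ha hb (hb.trans_le h1)⟩
end

section
/- Under the same assumptions on f, if x : [t0, T_x) → ℝⁿ is a maximally defined solution with sup_{t0 ≤ t < T_x} |x(t)| < ∞, then T_x = ∞; i.e., bounded maximal solutions exist globally. -/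
open MeasureTheory Set Filter Topology
open scoped ENNReal

/-- Segment at time `t` of the concatenation `φ ⋄_{t0} x`. -/
noncomputable def seg17 (n : ℕ) (t0 : ℝ) (φ x : ℝ → (Fin n → ℝ)) (t u : ℝ) : Fin n → ℝ :=
  if t + u < t0 then φ (t + u - t0) else x (t + u)

/-- `x` is a solution of `ẋ(t) = f(t,(φ⋄_{t0}x)_t)`, `x(t0)=φ(0)`, on `[t0, Tx)`. -/
def IsSolOn17 (n : ℕ) (f : ℝ → (ℝ → (Fin n → ℝ)) → (Fin n → ℝ)) (t0 : ℝ)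
    (φ x : ℝ → (Fin n → ℝ)) (Tx : ℝ≥0∞) : Prop :=
  ENNReal.ofReal t0 < Tx ∧
  ContinuousOn x {t : ℝ | t0 ≤ t ∧ ENNReal.ofReal t < Tx} ∧
  ∀ t, t0 ≤ t → ENNReal.ofReal t < Tx →
    x t = φ 0 + ∫ s in t0..t, f s (seg17 n t0 φ x s)

/-- A maximally defined solution: a solution admitting no strict extension. -/
def IsMaxSolOn17 (n : ℕ) (f : ℝ → (ℝ → (Fin n → ℝ)) → (Fin n → ℝ)) (t0 : ℝ)
    (φ x : ℝ → (Fin n → ℝ)) (Tx : ℝ≥0∞) : Prop :=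
  IsSolOn17 n f t0 φ x Tx ∧
  ∀ y : ℝ → (Fin n → ℝ), ∀ Ty : ℝ≥0∞, IsSolOn17 n f t0 φ y Ty →
    (∀ t, t0 ≤ t → ENNReal.ofReal t < Tx → y t = x t) → Ty ≤ Tx

set_option maxHeartbeats 2000000 in
/-- A bounded maximally defined solution exists for all future times: if
`sup_{t0 ≤ t < Tx} |x(t)| < ∞` then `Tx = ∞`. -/
theorem stmt_17 (n : ℕ) (θ : ℝ) (hθ : 0 < θ)
    (f : ℝ → (ℝ → (Fin n → ℝ)) → (Fin n → ℝ))
    (hLip : ∀ R > (0 : ℝ), ∀ T > (0 : ℝ), ∃ L ≥ (0 : ℝ),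
      ∀ᵐ t ∂(volume.restrict (Set.Icc 0 T)), ∀ ψ1 ψ2 : ℝ → (Fin n → ℝ),
        (∀ u ∈ Set.Icc (-θ) 0, ‖ψ1 u‖ ≤ R) → (∀ u ∈ Set.Icc (-θ) 0, ‖ψ2 u‖ ≤ R) →
        ‖f t ψ1 - f t ψ2‖ ≤ L * sSup ((fun u => ‖ψ1 u - ψ2 u‖) '' Set.Icc (-θ) 0))
    (hf0 : ∀ T > (0 : ℝ), ∃ C : ℝ, ∀ᵐ t ∂(volume.restrict (Set.Icc 0 T)), ‖f t 0‖ ≤ C)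
    (hfmeas : ∀ t0 ≥ (0 : ℝ), ∀ T > t0, ∀ φ : ℝ → (Fin n → ℝ), Measurable φ →
      (∃ C : ℝ, ∀ u, ‖φ u‖ ≤ C) → ∀ x : ℝ → (Fin n → ℝ), ContinuousOn x (Set.Icc t0 T) →
      AEMeasurable (fun t => f t (seg17 n t0 φ x t)) (volume.restrict (Set.Icc t0 T)))
    (t0 : ℝ) (ht0 : 0 ≤ t0) (φ : ℝ → (Fin n → ℝ)) (hφm : Measurable φ)
    (hφb : ∃ C : ℝ, ∀ u, ‖φ u‖ ≤ C)
    (x : ℝ → (Fin n → ℝ)) (Tx : ℝ≥0∞)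
    (hx : IsMaxSolOn17 n f t0 φ x Tx)
    (hbdd : ∃ C : ℝ, ∀ t, t0 ≤ t → ENNReal.ofReal t < Tx → ‖x t‖ ≤ C) :
    Tx = ⊤ := by
  classical
  by_contra hTop
  obtain ⟨⟨hT0x, hxc, hxeq⟩, hmax⟩ := hx
  set T : ℝ := Tx.toReal with hTdef
  have hTx : Tx = ENNReal.ofReal T := (ENNReal.ofReal_toReal hTop).symm
  have ht0T : t0 < T := by
    by_contra h
    push_neg at h
    rw [hTx] at hT0x
    exact absurd (ENNReal.ofReal_le_ofReal h) (not_le.2 hT0x)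
  have hT0 : (0 : ℝ) < T := lt_of_le_of_lt ht0 ht0T
  have hTlt : ∀ t : ℝ, ENNReal.ofReal t < Tx ↔ t < T := by
    intro t
    rw [hTx]
    exact ENNReal.ofReal_lt_ofReal_iff hT0
  have hset : {t : ℝ | t0 ≤ t ∧ ENNReal.ofReal t < Tx} = Ico t0 T := by
    ext t
    simp only [mem_setOf_eq, mem_Ico, hTlt t]
  have hxc' : ContinuousOn x (Ico t0 T) := hset ▸ hxc
  set g : ℝ → (Fin n → ℝ) := fun s => f s (seg17 n t0 φ x s) with hgdef
  have hxeq' : ∀ t, t0 ≤ t → t < T → x t = φ 0 + ∫ s in t0..t, g s := fun t h1 h2 =>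
    hxeq t h1 ((hTlt t).2 h2)
  obtain ⟨Cx, hCx⟩ := hbdd
  obtain ⟨Cφ, hCφ⟩ := hφb
  have hCx' : ∀ r ∈ Ico t0 T, ‖x r‖ ≤ Cx := fun r hr => hCx r hr.1 ((hTlt r).2 hr.2)
  set R0 : ℝ := max Cx Cφ with hR0def
  have hCφ0 : 0 ≤ Cφ := (norm_nonneg _).trans (hCφ 0)
  have hR00 : 0 ≤ R0 := le_trans hCφ0 (le_max_right _ _)
  set R : ℝ := R0 + 1 with hRdef
  have hR : 0 < R := by positivity
  have hCxR : Cx ≤ R := by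
    have := le_max_left Cx Cφ
    simp only [hRdef]
    linarith
  have hCφR : Cφ ≤ R := by
    have := le_max_right Cx Cφ
    simp only [hRdef]
    linarith
  set Tb : ℝ := T + 1 with hTbdef
  obtain ⟨L, hL0, hLae⟩ := hLip R hR Tb (by linarith)
  obtain ⟨C, hCae⟩ := hf0 Tb (by linarith)
  have hmaster : ∀ᵐ s : ℝ, s ∈ Icc (0 : ℝ) Tb →
      ((∀ ψ1 ψ2 : ℝ → (Fin n → ℝ),
        (∀ u ∈ Set.Icc (-θ) 0, ‖ψ1 u‖ ≤ R) → (∀ u ∈ Set.Icc (-θ) 0, ‖ψ2 u‖ ≤ R) →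
        ‖f s ψ1 - f s ψ2‖ ≤ L * sSup ((fun u => ‖ψ1 u - ψ2 u‖) '' Set.Icc (-θ) 0)) ∧
        ‖f s 0‖ ≤ C) := by
    have h1 := (ae_restrict_iff' measurableSet_Icc).1 hLae
    have h2 := (ae_restrict_iff' measurableSet_Icc).1 hCae
    filter_upwards [h1, h2] with s hs1 hs2 hmem
    exact ⟨hs1 hmem, hs2 hmem⟩
  set M : ℝ := C + L * R with hMdef
  set M' : ℝ := max M 0 with hM'def
  have hM'0 : 0 ≤ M' := le_max_right _ _
  have hMM' : M ≤ M' := le_max_left _ _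
  -- pointwise: segments of trajectories bounded by R are bounded by R
  have hsegbd : ∀ (w : ℝ → (Fin n → ℝ)) (s : ℝ), t0 ≤ s →
      (∀ r ∈ Icc t0 s, ‖w r‖ ≤ R) → ∀ u ∈ Icc (-θ) 0, ‖seg17 n t0 φ w s u‖ ≤ R := by
    intro w s hs hw u hu
    simp only [seg17]
    split_ifs with h
    · exact (hCφ _).trans hCφR
    · push_neg at h
      exact hw _ ⟨h, by linarith [hu.2]⟩
  -- pointwise: bound on f along a segment
  have hfb : ∀ (s : ℝ) (ψ : ℝ → (Fin n → ℝ)),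
      (∀ ψ1 ψ2 : ℝ → (Fin n → ℝ),
        (∀ u ∈ Set.Icc (-θ) 0, ‖ψ1 u‖ ≤ R) → (∀ u ∈ Set.Icc (-θ) 0, ‖ψ2 u‖ ≤ R) →
        ‖f s ψ1 - f s ψ2‖ ≤ L * sSup ((fun u => ‖ψ1 u - ψ2 u‖) '' Set.Icc (-θ) 0)) →
      ‖f s 0‖ ≤ C → (∀ u ∈ Icc (-θ) 0, ‖ψ u‖ ≤ R) → ‖f s ψ‖ ≤ M := by
    intro s ψ hlip hc hψ
    have h0 : ∀ u ∈ Icc (-θ) 0, ‖(0 : ℝ → Fin n → ℝ) u‖ ≤ R := by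
      intro u _
      simp only [Pi.zero_apply, norm_zero]
      exact hR.le
    have h1 := hlip ψ 0 hψ h0
    have hsup : sSup ((fun u => ‖ψ u - (0 : ℝ → Fin n → ℝ) u‖) '' Icc (-θ) 0) ≤ R := by
      refine Real.sSup_le ?_ hR.le
      rintro _ ⟨u, hu, rfl⟩
      simpa using hψ u hu
    have h2 : L * sSup ((fun u => ‖ψ u - (0 : ℝ → Fin n → ℝ) u‖) '' Icc (-θ) 0) ≤ L * R :=
      mul_le_mul_of_nonneg_left hsup hL0
    have h3 : ‖f s ψ‖ - ‖f s 0‖ ≤ ‖f s ψ - f s 0‖ := norm_sub_norm_le _ _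
    simp only [hMdef]
    linarith
  -- pointwise: f only depends on the segment restricted to [-θ,0]
  have hfeq : ∀ (s : ℝ) (ψ1 ψ2 : ℝ → (Fin n → ℝ)),
      (∀ ψ1 ψ2 : ℝ → (Fin n → ℝ),
        (∀ u ∈ Set.Icc (-θ) 0, ‖ψ1 u‖ ≤ R) → (∀ u ∈ Set.Icc (-θ) 0, ‖ψ2 u‖ ≤ R) →
        ‖f s ψ1 - f s ψ2‖ ≤ L * sSup ((fun u => ‖ψ1 u - ψ2 u‖) '' Set.Icc (-θ) 0)) →
      (∀ u ∈ Icc (-θ) 0, ‖ψ1 u‖ ≤ R) → (∀ u ∈ Icc (-θ) 0, ‖ψ2 u‖ ≤ R) →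
      (∀ u ∈ Icc (-θ) 0, ψ1 u = ψ2 u) → f s ψ1 = f s ψ2 := by
    intro s ψ1 ψ2 hlip h1 h2 heq
    have h := hlip ψ1 ψ2 h1 h2
    have hsup : sSup ((fun u => ‖ψ1 u - ψ2 u‖) '' Icc (-θ) 0) ≤ 0 := by
      refine Real.sSup_le ?_ le_rfl
      rintro _ ⟨u, hu, rfl⟩
      simp [heq u hu]
    have h2' : L * sSup ((fun u => ‖ψ1 u - ψ2 u‖) '' Icc (-θ) 0) ≤ 0 := by
      have := mul_le_mul_of_nonneg_left hsup hL0
      simpa using this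
    have : ‖f s ψ1 - f s ψ2‖ ≤ 0 := h.trans h2'
    have := norm_le_zero_iff.1 this
    exact sub_eq_zero.1 this
  -- a.e. bound for the integrand along a bounded trajectory
  have hgbd : ∀ (w : ℝ → (Fin n → ℝ)) (b : ℝ), t0 ≤ b → b ≤ Tb →
      (∀ r ∈ Icc t0 b, ‖w r‖ ≤ R) →
      ∀ᵐ s : ℝ, s ∈ Icc t0 b → ‖f s (seg17 n t0 φ w s)‖ ≤ M := by
    intro w b hb hbTb hw
    filter_upwards [hmaster] with s hs hsmem
    have h0 : s ∈ Icc (0 : ℝ) Tb := ⟨le_trans ht0 hsmem.1, le_trans hsmem.2 hbTb⟩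
    refine hfb s _ (hs h0).1 (hs h0).2 (hsegbd w s hsmem.1 ?_)
    intro r hr
    exact hw r ⟨hr.1, hr.2.trans hsmem.2⟩
  -- a.e. equality of integrands for trajectories agreeing on [t0,b)
  have hgeq : ∀ (w1 w2 : ℝ → (Fin n → ℝ)) (b : ℝ), b ≤ Tb →
      (∀ r ∈ Ico t0 b, ‖w1 r‖ ≤ R) → (∀ r ∈ Ico t0 b, ‖w2 r‖ ≤ R) →
      (∀ r, t0 ≤ r → r < b → w1 r = w2 r) →
      ∀ᵐ s : ℝ, s ∈ Ico t0 b → f s (seg17 n t0 φ w1 s) = f s (seg17 n t0 φ w2 s) := by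
    intro w1 w2 b hbTb hw1 hw2 hagree
    filter_upwards [hmaster] with s hs hsmem
    have h0 : s ∈ Icc (0 : ℝ) Tb := ⟨le_trans ht0 hsmem.1, hsmem.2.le.trans hbTb⟩
    have hb1 : ∀ r ∈ Icc t0 s, ‖w1 r‖ ≤ R := fun r hr => hw1 r ⟨hr.1, lt_of_le_of_lt hr.2 hsmem.2⟩
    have hb2 : ∀ r ∈ Icc t0 s, ‖w2 r‖ ≤ R := fun r hr => hw2 r ⟨hr.1, lt_of_le_of_lt hr.2 hsmem.2⟩
    refine hfeq s _ _ (hs h0).1 (hsegbd w1 s hsmem.1 hb1) (hsegbd w2 s hsmem.1 hb2) ?_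
    intro u hu
    simp only [seg17]
    split_ifs with h
    · rfl
    · push_neg at h
      exact hagree _ h (by linarith [hu.2, hsmem.2])
  -- integrability of the integrand along a bounded continuous trajectory
  have hIntOn : ∀ (w : ℝ → (Fin n → ℝ)) (b : ℝ), t0 < b → b ≤ Tb →
      ContinuousOn w (Icc t0 b) → (∀ r ∈ Icc t0 b, ‖w r‖ ≤ R) →
      IntegrableOn (fun s => f s (seg17 n t0 φ w s)) (Icc t0 b) := by
    intro w b hb hbTb hwc hw
    have hmeas := hfmeas t0 ht0 b hb φ hφm ⟨Cφ, hCφ⟩ w hwc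
    refine Integrable.mono' (g := fun _ => M)
      ((integrableOn_const_iff (C := M)).2 (Or.inr measure_Icc_lt_top)) hmeas.aestronglyMeasurable ?_
    filter_upwards [ae_restrict_of_ae (hgbd w b hb.le hbTb hw), ae_restrict_mem measurableSet_Icc]
      with s hs hsmem
    exact hs hsmem
  -- x is Lipschitz on [t0, T)
  have hxlip : ∀ a b : ℝ, t0 ≤ a → a ≤ b → b < T → ‖x b - x a‖ ≤ M' * (b - a) := by
    intro a b ha hab hbT
    rcases eq_or_lt_of_le hab with rfl | hab'
    · simp
    have hb : t0 < b := lt_of_le_of_lt ha hab'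
    have hInt : IntegrableOn g (Icc t0 b) := by
      refine hIntOn x b hb (by linarith) (hxc'.mono ?_) ?_
      · exact fun r hr => ⟨hr.1, lt_of_le_of_lt hr.2 hbT⟩
      · exact fun r hr => (hCx' r ⟨hr.1, lt_of_le_of_lt hr.2 hbT⟩).trans hCxR
    have hib : IntervalIntegrable g volume t0 b := by
      refine (hInt.mono_set ?_).intervalIntegrable
      rw [uIcc_of_le hb.le]
    have hia : IntervalIntegrable g volume t0 a := by
      refine (hInt.mono_set ?_).intervalIntegrable
      rw [uIcc_of_le ha]
      exact Icc_subset_Icc le_rfl hab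
    have hsub : x b - x a = ∫ s in a..b, g s := by
      rw [hxeq' b hb.le hbT, hxeq' a ha (lt_of_le_of_lt hab hbT), add_sub_add_left_eq_sub,
        intervalIntegral.integral_interval_sub_left hib hia]
    rw [hsub]
    have hbnd : ‖∫ s in a..b, g s‖ ≤ M * |b - a| := by
      refine intervalIntegral.norm_integral_le_of_norm_le_const_ae ?_
      filter_upwards [hgbd x b hb.le (by linarith)
        (fun r hr => (hCx' r ⟨hr.1, lt_of_le_of_lt hr.2 hbT⟩).trans hCxR)] with s hs hι
      rw [uIoc_of_le hab] at hι
      exact hs ⟨ha.trans hι.1.le, hι.2⟩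
    calc ‖∫ s in a..b, g s‖ ≤ M * |b - a| := hbnd
      _ ≤ M' * |b - a| := mul_le_mul_of_nonneg_right hMM' (abs_nonneg _)
      _ = M' * (b - a) := by rw [abs_of_nonneg (by linarith)]
  -- the limit of x at T exists
  have hcauchy : Cauchy (map x (𝓝[<] T)) := by
    refine Metric.cauchy_iff.2 ⟨map_neBot, fun ε' hε' => ?_⟩
    set δ : ℝ := min (ε' / (2 * (M' + 1))) (T - t0) with hδdef
    have hδ0 : 0 < δ := lt_min (by positivity) (by linarith)
    refine ⟨x '' Ioo (T - δ) T, image_mem_map (Ioo_mem_nhdsLT_of_mem ⟨by linarith, le_rfl⟩), ?_⟩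
    have key : ∀ a b : ℝ, a ∈ Ioo (T - δ) T → b ∈ Ioo (T - δ) T → a ≤ b →
        dist (x a) (x b) < ε' := by
      intro a b ha hb hab
      have hδt0 : T - δ ≥ t0 := by
        have := min_le_right (ε' / (2 * (M' + 1))) (T - t0)
        simp only [hδdef] at *
        linarith
      have h1 : ‖x b - x a‖ ≤ M' * (b - a) := hxlip a b (by linarith [ha.1]) hab hb.2
      have h2 : b - a < δ := by linarith [ha.1, hb.2]
      have h3 : M' * (b - a) ≤ M' * δ := mul_le_mul_of_nonneg_left h2.le hM'0
      have h4 : δ ≤ ε' / (2 * (M' + 1)) := min_le_left _ _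
      have h5 : M' * δ ≤ M' * (ε' / (2 * (M' + 1))) := mul_le_mul_of_nonneg_left h4 hM'0
      have h6 : M' * (ε' / (2 * (M' + 1))) < ε' := by
        have hpos : (0 : ℝ) < 2 * (M' + 1) := by linarith
        rw [← mul_div_assoc, div_lt_iff₀ hpos]
        nlinarith [mul_nonneg hε'.le hM'0]
      rw [dist_eq_norm, norm_sub_rev]
      linarith
    rintro _ ⟨a, ha, rfl⟩ _ ⟨b, hb, rfl⟩
    rcases le_total a b with h | h
    · exact key a b ha hb h
    · rw [dist_comm]; exact key b a hb ha h
  obtain ⟨xT, hxT⟩ := CompleteSpace.complete hcauchy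
  have hxT : Tendsto x (𝓝[<] T) (𝓝 xT) := hxT
  have hxTb : ‖xT‖ ≤ R0 := by
    refine le_of_tendsto hxT.norm ?_
    filter_upwards [Ioo_mem_nhdsLT_of_mem (show T ∈ Ioc t0 T from ⟨ht0T, le_rfl⟩)] with b hb
    exact (hCx' b ⟨hb.1.le, hb.2⟩).trans (le_max_left _ _)
  -- choose the extension length ε
  set ε : ℝ := min 1 (min (1 / (M' + 1)) (1 / (2 * (L + 1)))) with hεdef
  have hε : 0 < ε := by
    refine lt_min one_pos (lt_min (by positivity) (by positivity))
  have hε1 : ε ≤ 1 := min_le_left _ _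
  have hεM' : M' * ε ≤ 1 := by
    have h1 : ε ≤ 1 / (M' + 1) := le_trans (min_le_right _ _) (min_le_left _ _)
    have h2 : M' * (1 / (M' + 1)) ≤ 1 := by
      rw [mul_one_div]
      exact (div_le_one (by linarith)).2 (by linarith)
    exact (mul_le_mul_of_nonneg_left h1 hM'0).trans h2
  have hεL : L * ε ≤ 1 / 2 := by
    have h1 : ε ≤ 1 / (2 * (L + 1)) := le_trans (min_le_right _ _) (min_le_right _ _)
    have h2 : L * (1 / (2 * (L + 1))) ≤ 1 / 2 := by
      rw [mul_one_div]
      rw [div_le_iff₀ (by linarith)]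
      linarith
    exact (mul_le_mul_of_nonneg_left h1 hL0).trans h2
  set T' : ℝ := T + ε with hT'def
  have hTT' : T ≤ T' := by simp only [hT'def]; linarith
  have hT'pos : 0 < T' := by simp only [hT'def]; linarith
  have hT'Tb : T' ≤ Tb := by simp only [hT'def, hTbdef]; linarith
  have ht0T' : t0 < T' := by simp only [hT'def]; linarith
  have hTmem : T ∈ Icc T T' := left_mem_Icc.2 hTT'
  set pt : ↥(Icc T T') := ⟨T, hTmem⟩ with hptdef
  -- the glued trajectory
  set X : C(↥(Icc T T'), Fin n → ℝ) → ℝ → (Fin n → ℝ) :=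
    fun z r => if r < T then x r else z (Set.projIcc T T' hTT' r) with hXdef
  -- continuity of the glued trajectory
  have hXcont : ∀ z : C(↥(Icc T T'), Fin n → ℝ), z pt = xT →
      ContinuousOn (X z) (Icc t0 T') := by
    intro z hzpt r hr
    have hXT : X z T = xT := by
      show (if T < T then x T else z (Set.projIcc T T' hTT' T)) = xT
      rw [if_neg (lt_irrefl T), Set.projIcc_left]
      exact hzpt
    rcases lt_trichotomy r T with hrT | hrT | hrT
    · have hx' : ContinuousWithinAt x (Ico t0 T) r := hxc' r ⟨hr.1, hrT⟩
      have hsub : Icc t0 T' ∩ Iio T ⊆ Ico t0 T := fun s hs => ⟨hs.1.1, hs.2⟩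
      have h1 : ContinuousWithinAt (X z) (Icc t0 T' ∩ Iio T) r := by
        refine (hx'.mono hsub).congr ?_ ?_
        · intro s hs
          exact if_pos hs.2
        · exact if_pos hrT
      exact (continuousWithinAt_inter (Iio_mem_nhds hrT)).1 h1
    · subst hrT
      have hsplit : (Icc t0 T' : Set ℝ) ⊆ (Icc t0 T' ∩ Iio T) ∪ (Icc t0 T' ∩ Ici T) := by
        intro s hs
        rcases lt_or_ge s T with h | h
        · exact Or.inl ⟨hs, h⟩
        · exact Or.inr ⟨hs, h⟩
      refine ContinuousWithinAt.mono ?_ hsplit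
      refine ContinuousWithinAt.union ?_ ?_
      · show Tendsto (X z) (𝓝[Icc t0 T' ∩ Iio T] T) (𝓝 (X z T))
        rw [hXT]
        have hmono : 𝓝[Icc t0 T' ∩ Iio T] T ≤ 𝓝[<] T := nhdsWithin_mono T inter_subset_right
        refine Tendsto.congr' ?_ (hxT.mono_left hmono)
        filter_upwards [self_mem_nhdsWithin] with s hs
        exact (if_pos hs.2).symm
      · show Tendsto (X z) (𝓝[Icc t0 T' ∩ Ici T] T) (𝓝 (X z T))
        rw [hXT]
        have hc : Tendsto (fun s => z (Set.projIcc T T' hTT' s)) (𝓝 T) (𝓝 xT) := by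
          have hcz : Continuous fun s => z (Set.projIcc T T' hTT' s) :=
            z.continuous.comp continuous_projIcc
          have := hcz.tendsto T
          rwa [Set.projIcc_left, show (⟨T, left_mem_Icc.2 hTT'⟩ : ↥(Icc T T')) = pt from rfl,
            hzpt] at this
        refine Tendsto.congr' ?_ (hc.mono_left nhdsWithin_le_nhds)
        filter_upwards [self_mem_nhdsWithin] with s hs
        exact (if_neg (not_lt.2 hs.2)).symm
    · have h1 : ContinuousWithinAt (X z) (Icc t0 T' ∩ Ioi T) r := by
        have hc : ContinuousAt (fun s => z (Set.projIcc T T' hTT' s)) r :=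
          (z.continuous.comp continuous_projIcc).continuousAt
        refine hc.continuousWithinAt.congr ?_ ?_
        · intro s hs
          exact if_neg (not_lt.2 hs.2.le)
        · exact if_neg (not_lt.2 hrT.le)
      exact (continuousWithinAt_inter (Ioi_mem_nhds hrT)).1 h1
  -- the invariant set
  set S : Set C(↥(Icc T T'), Fin n → ℝ) :=
    {z | z pt = xT ∧ ∀ p, ‖z p - xT‖ ≤ 1} with hSdef
  have hXbd : ∀ z ∈ S, ∀ r ∈ Icc t0 T', ‖X z r‖ ≤ R := by
    intro z hz r hr
    show ‖if r < T then x r else z (Set.projIcc T T' hTT' r)‖ ≤ R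
    split_ifs with h
    · exact (hCx' r ⟨hr.1, h⟩).trans hCxR
    · have h1 : ‖z (Set.projIcc T T' hTT' r) - xT‖ ≤ 1 := hz.2 _
      have h2 : ‖z (Set.projIcc T T' hTT' r)‖ - ‖xT‖ ≤ ‖z (Set.projIcc T T' hTT' r) - xT‖ :=
        norm_sub_norm_le _ _
      simp only [hRdef]
      linarith [hxTb]
    -- integrability along the glued trajectory
  have hGint : ∀ z ∈ S, IntegrableOn (fun s => f s (seg17 n t0 φ (X z) s)) (Icc t0 T') :=
    fun z hz => hIntOn (X z) T' ht0T' hT'Tb (hXcont z hz.1) (hXbd z hz)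
  -- a.e. bound along the glued trajectory
  have hGbd : ∀ z ∈ S, ∀ᵐ s : ℝ, s ∈ Icc t0 T' → ‖f s (seg17 n t0 φ (X z) s)‖ ≤ M :=
    fun z hz => hgbd (X z) T' ht0T'.le hT'Tb (hXbd z hz)
  -- the Picard operator
  have hΦcont : ∀ z ∈ S, Continuous fun p : ↥(Icc T T') =>
      xT + ∫ s in T..(p : ℝ), f s (seg17 n t0 φ (X z) s) := by
    intro z hz
    have hint : IntegrableOn (fun s => f s (seg17 n t0 φ (X z) s)) (uIcc t0 T') := by
      rw [uIcc_of_le ht0T'.le]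
      exact hGint z hz
    have hc : ContinuousOn (fun b => ∫ s in T..b, f s (seg17 n t0 φ (X z) s)) (uIcc t0 T') :=
      intervalIntegral.continuousOn_primitive_interval' hint.intervalIntegrable
        (by rw [uIcc_of_le ht0T'.le]; exact ⟨ht0T.le, hTT'⟩)
    refine continuous_const.add ?_
    refine hc.comp_continuous continuous_subtype_val ?_
    intro p
    rw [uIcc_of_le ht0T'.le]
    exact ⟨le_trans ht0T.le p.2.1, p.2.2⟩
  set Φ : C(↥(Icc T T'), Fin n → ℝ) → C(↥(Icc T T'), Fin n → ℝ) :=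
    fun z => if h : z ∈ S then
      ⟨fun p => xT + ∫ s in T..(p : ℝ), f s (seg17 n t0 φ (X z) s), hΦcont z h⟩
    else z with hΦdef
  have hΦapp : ∀ z, z ∈ S → ∀ p : ↥(Icc T T'),
      (Φ z) p = xT + ∫ s in T..(p : ℝ), f s (seg17 n t0 φ (X z) s) := by
    intro z hz p
    simp only [hΦdef, dif_pos hz]
    rfl
  -- basic norm bound for the Picard increment
  have hincr : ∀ z ∈ S, ∀ p : ↥(Icc T T'),
      ‖∫ s in T..(p : ℝ), f s (seg17 n t0 φ (X z) s)‖ ≤ M' * ε := by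
    intro z hz p
    have h1 : ‖∫ s in T..(p : ℝ), f s (seg17 n t0 φ (X z) s)‖ ≤ M * |(p : ℝ) - T| := by
      refine intervalIntegral.norm_integral_le_of_norm_le_const_ae ?_
      filter_upwards [hGbd z hz] with s hs hι
      rw [uIoc_of_le p.2.1] at hι
      exact hs ⟨le_trans ht0T.le hι.1.le, hι.2.trans p.2.2⟩
    have habs : |(p : ℝ) - T| ≤ ε := by
      rw [abs_of_nonneg (by linarith [p.2.1])]
      have := p.2.2
      simp only [hT'def] at this
      linarith
    calc ‖∫ s in T..(p : ℝ), f s (seg17 n t0 φ (X z) s)‖ ≤ M * |(p : ℝ) - T| := h1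
      _ ≤ M' * |(p : ℝ) - T| := mul_le_mul_of_nonneg_right hMM' (abs_nonneg _)
      _ ≤ M' * ε := mul_le_mul_of_nonneg_left habs hM'0
  have hmaps : MapsTo Φ S S := by
    intro z hz
    constructor
    · rw [hΦapp z hz pt]
      show xT + ∫ s in T..T, f s (seg17 n t0 φ (X z) s) = xT
      rw [intervalIntegral.integral_same, add_zero]
    · intro p
      rw [hΦapp z hz p, add_sub_cancel_left]
      exact (hincr z hz p).trans hεM'
  -- S is complete
  have hSclosed : IsClosed S := by
    have h1 : IsClosed {z : C(↥(Icc T T'), Fin n → ℝ) | z pt = xT} := by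
      have : Continuous fun z : C(↥(Icc T T'), Fin n → ℝ) => z pt := continuous_eval_const pt
      exact isClosed_singleton.preimage this
    have h2 : IsClosed {z : C(↥(Icc T T'), Fin n → ℝ) | ∀ p, ‖z p - xT‖ ≤ 1} := by
      have heq : {z : C(↥(Icc T T'), Fin n → ℝ) | ∀ p, ‖z p - xT‖ ≤ 1} =
          ⋂ p, {z : C(↥(Icc T T'), Fin n → ℝ) | ‖z p - xT‖ ≤ 1} := by
        ext w
        simp only [mem_setOf_eq, mem_iInter]
      rw [heq]
      refine isClosed_iInter fun p => ?_
      have hc : Continuous fun z : C(↥(Icc T T'), Fin n → ℝ) => ‖z p - xT‖ :=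
        ((continuous_eval_const p).sub continuous_const).norm
      exact isClosed_le hc continuous_const
    exact h1.inter h2
  -- the Picard operator is a contraction on S
  have hcontract : ∀ z1 ∈ S, ∀ z2 ∈ S, dist (Φ z1) (Φ z2) ≤ (1 / 2) * dist z1 z2 := by
    intro z1 hz1 z2 hz2
    have hd0 : (0 : ℝ) ≤ (1 / 2) * dist z1 z2 := by positivity
    rw [ContinuousMap.dist_le hd0]
    intro p
    rw [hΦapp z1 hz1 p, hΦapp z2 hz2 p, dist_eq_norm, add_sub_add_left_eq_sub]
    have hi1 : IntervalIntegrable (fun s => f s (seg17 n t0 φ (X z1) s)) volume T (p : ℝ) := by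
      refine ((hGint z1 hz1).mono_set ?_).intervalIntegrable
      exact uIcc_subset_Icc ⟨ht0T.le, hTT'⟩ ⟨le_trans ht0T.le p.2.1, p.2.2⟩
    have hi2 : IntervalIntegrable (fun s => f s (seg17 n t0 φ (X z2) s)) volume T (p : ℝ) := by
      refine ((hGint z2 hz2).mono_set ?_).intervalIntegrable
      exact uIcc_subset_Icc ⟨ht0T.le, hTT'⟩ ⟨le_trans ht0T.le p.2.1, p.2.2⟩
    rw [← intervalIntegral.integral_sub hi1 hi2]
    have hb : ‖∫ s in T..(p : ℝ),
        (f s (seg17 n t0 φ (X z1) s) - f s (seg17 n t0 φ (X z2) s))‖ ≤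
        (L * dist z1 z2) * |(p : ℝ) - T| := by
      refine intervalIntegral.norm_integral_le_of_norm_le_const_ae ?_
      filter_upwards [hmaster] with s hs hι
      rw [uIoc_of_le p.2.1] at hι
      have hsI : s ∈ Icc t0 T' := ⟨le_trans ht0T.le hι.1.le, hι.2.trans p.2.2⟩
      have h0 : s ∈ Icc (0 : ℝ) Tb := ⟨le_trans ht0 hsI.1, hsI.2.trans hT'Tb⟩
      have hb1 : ∀ u ∈ Icc (-θ) 0, ‖seg17 n t0 φ (X z1) s u‖ ≤ R :=
        hsegbd (X z1) s hsI.1 fun r hr => hXbd z1 hz1 r ⟨hr.1, hr.2.trans hsI.2⟩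
      have hb2 : ∀ u ∈ Icc (-θ) 0, ‖seg17 n t0 φ (X z2) s u‖ ≤ R :=
        hsegbd (X z2) s hsI.1 fun r hr => hXbd z2 hz2 r ⟨hr.1, hr.2.trans hsI.2⟩
      refine ((hs h0).1 _ _ hb1 hb2).trans ?_
      refine mul_le_mul_of_nonneg_left ?_ hL0
      refine Real.sSup_le ?_ dist_nonneg
      rintro _ ⟨u, hu, rfl⟩
      show ‖seg17 n t0 φ (X z1) s u - seg17 n t0 φ (X z2) s u‖ ≤ dist z1 z2
      simp only [seg17]
      split_ifs with h
      · simp [dist_nonneg]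
      · show ‖X z1 (s + u) - X z2 (s + u)‖ ≤ dist z1 z2
        show ‖(if s + u < T then x (s + u) else z1 (Set.projIcc T T' hTT' (s + u))) -
          (if s + u < T then x (s + u) else z2 (Set.projIcc T T' hTT' (s + u)))‖ ≤ dist z1 z2
        split_ifs with h2
        · simp [dist_nonneg]
        · rw [← dist_eq_norm]
          exact ContinuousMap.dist_apply_le_dist _
    refine hb.trans ?_
    have habs : |(p : ℝ) - T| ≤ ε := by
      rw [abs_of_nonneg (by linarith [p.2.1])]
      have := p.2.2
      simp only [hT'def] at this
      linarith
    calc (L * dist z1 z2) * |(p : ℝ) - T| ≤ (L * dist z1 z2) * ε :=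
        mul_le_mul_of_nonneg_left habs (mul_nonneg hL0 dist_nonneg)
      _ = (L * ε) * dist z1 z2 := by ring
      _ ≤ (1 / 2) * dist z1 z2 := mul_le_mul_of_nonneg_right hεL dist_nonneg
  -- fixed point
  have hcontracting : ContractingWith (1 / 2 : NNReal) (hmaps.restrict Φ S S) := by
    constructor
    · rw [← NNReal.coe_lt_coe]
      norm_num
    · refine LipschitzWith.of_dist_le_mul fun z1 z2 => ?_
      have h1 : dist (hmaps.restrict Φ S S z1) (hmaps.restrict Φ S S z2) =
          dist (Φ (z1 : C(↥(Icc T T'), Fin n → ℝ))) (Φ (z2 : C(↥(Icc T T'), Fin n → ℝ))) := rfl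
      have h2 : dist z1 z2 = dist (z1 : C(↥(Icc T T'), Fin n → ℝ))
          (z2 : C(↥(Icc T T'), Fin n → ℝ)) := rfl
      rw [h1, h2]
      have : ((1 / 2 : NNReal) : ℝ) = 1 / 2 := by norm_num
      rw [this]
      exact hcontract _ z1.2 _ z2.2
  have hSne : (ContinuousMap.const (↥(Icc T T')) xT) ∈ S := by
    constructor
    · rfl
    · intro p
      simp
  obtain ⟨z, hzS, hzfix, -, -⟩ := hcontracting.exists_fixedPoint' hSclosed.isComplete hmaps
    hSne (edist_ne_top _ _)
  -- the fixed point equation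
  have hfixeq : ∀ p : ↥(Icc T T'),
      z p = xT + ∫ s in T..(p : ℝ), f s (seg17 n t0 φ (X z) s) := by
    intro p
    exact (DFunLike.congr_fun hzfix p).symm.trans (hΦapp z hzS p)
  -- the extended trajectory
  set y : ℝ → (Fin n → ℝ) := X z with hydef
  have hycont : ContinuousOn y (Icc t0 T') := hXcont z hzS.1
  have hyR : ∀ r ∈ Icc t0 T', ‖y r‖ ≤ R := hXbd z hzS
  have hyx : ∀ r, r < T → y r = x r := by
    intro r hr
    show (if r < T then x r else z (Set.projIcc T T' hTT' r)) = x r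
    exact if_pos hr
  set G : ℝ → (Fin n → ℝ) := fun s => f s (seg17 n t0 φ y s) with hGdef
  have hGint' : IntegrableOn G (Icc t0 T') := hGint z hzS
  -- a.e. on [t0, T), the two integrands agree
  have hGg : ∀ᵐ s : ℝ, s ∈ Ico t0 T → G s = g s := by
    refine hgeq y x T (by simp only [hTbdef]; linarith) ?_ ?_ ?_
    · intro r hr
      exact hyR r ⟨hr.1, hr.2.le.trans hTT'⟩
    · intro r hr
      exact (hCx' r hr).trans hCxR
    · intro r _ hr
      exact hyx r hr
  -- interval integrals of G and g agree up to any b ≤ T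
  have hGgint : ∀ b, t0 ≤ b → b ≤ T → (∫ s in t0..b, G s) = ∫ s in t0..b, g s := by
    intro b hb hbT
    refine intervalIntegral.integral_congr_ae ?_
    have hTne : ∀ᵐ s : ℝ, s ≠ T := by
      have : (volume : Measure ℝ) {T} = 0 := measure_singleton T
      rw [ae_iff]
      convert this using 2
      ext s
      simp
    filter_upwards [hGg, hTne] with s hs hsne hι
    rw [uIoc_of_le hb] at hι
    exact hs ⟨hι.1.le, lt_of_le_of_ne (hι.2.trans hbT) hsne⟩
  -- xT equals the integral up to T
  have hxTeq : xT = φ 0 + ∫ s in t0..T, G s := by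
    have hGi : IntegrableOn G (uIcc t0 T') := by
      rw [uIcc_of_le ht0T'.le]
      exact hGint'
    have hGc : ContinuousOn (fun b => ∫ s in t0..b, G s) (uIcc t0 T') :=
      intervalIntegral.continuousOn_primitive_interval' hGi.intervalIntegrable left_mem_uIcc
    have hTmem' : T ∈ uIcc t0 T' := by
      rw [uIcc_of_le ht0T'.le]
      exact ⟨ht0T.le, hTT'⟩
    have h1 : Tendsto (fun b => φ 0 + ∫ s in t0..b, G s) (𝓝[<] T)
        (𝓝 (φ 0 + ∫ s in t0..T, G s)) := by
      have hcw : ContinuousWithinAt (fun b => ∫ s in t0..b, G s) (Ioo t0 T) T := by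
        refine (hGc T hTmem').mono ?_
        intro s hs
        rw [uIcc_of_le ht0T'.le]
        exact ⟨hs.1.le, hs.2.le.trans hTT'⟩
      have := hcw
      rw [ContinuousWithinAt, nhdsWithin_Ioo_eq_nhdsLT ht0T] at this
      exact tendsto_const_nhds.add this
    have h2 : ∀ᶠ b in 𝓝[<] T, (fun b => φ 0 + ∫ s in t0..b, G s) b = x b := by
      filter_upwards [Ioo_mem_nhdsLT_of_mem (show T ∈ Ioc t0 T from ⟨ht0T, le_rfl⟩)] with b hb
      rw [hxeq' b hb.1.le hb.2, hGgint b hb.1.le hb.2.le]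
    exact tendsto_nhds_unique hxT (h1.congr' h2)
  -- y is a solution on [t0, T')
  have hsol : IsSolOn17 n f t0 φ y (ENNReal.ofReal T') := by
    refine ⟨(ENNReal.ofReal_lt_ofReal_iff hT'pos).2 ht0T', ?_, ?_⟩
    · have hset' : {t : ℝ | t0 ≤ t ∧ ENNReal.ofReal t < ENNReal.ofReal T'} = Ico t0 T' := by
        ext t
        simp only [mem_setOf_eq, mem_Ico, ENNReal.ofReal_lt_ofReal_iff hT'pos]
      rw [hset']
      exact hycont.mono Ico_subset_Icc_self
    · intro t ht htT'
      have htT' : t < T' := (ENNReal.ofReal_lt_ofReal_iff hT'pos).1 htT'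
      rcases lt_or_ge t T with htT | htT
      · rw [hyx t htT, hxeq' t ht htT]
        congr 1
        exact (hGgint t ht htT.le).symm
      · have hty : y t = z ⟨t, ⟨htT, htT'.le⟩⟩ := by
          show (if t < T then x t else z (Set.projIcc T T' hTT' t)) = _
          rw [if_neg (not_lt.2 htT), Set.projIcc_of_mem hTT' ⟨htT, htT'.le⟩]
        rw [hty, hfixeq ⟨t, ⟨htT, htT'.le⟩⟩]
        show xT + ∫ s in T..t, G s = φ 0 + ∫ s in t0..t, G s
        rw [hxTeq, add_assoc]
        congr 1
        refine intervalIntegral.integral_add_adjacent_intervals ?_ ?_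
        · refine (hGint'.mono_set ?_).intervalIntegrable
          exact uIcc_subset_Icc ⟨le_rfl, ht0T'.le⟩ ⟨ht0T.le, hTT'⟩
        · refine (hGint'.mono_set ?_).intervalIntegrable
          exact uIcc_subset_Icc ⟨ht0T.le, hTT'⟩ ⟨ht0T.le.trans htT, htT'.le⟩
  -- y agrees with x on [t0, Tx), contradicting maximality
  have hagree : ∀ t, t0 ≤ t → ENNReal.ofReal t < Tx → y t = x t := by
    intro t _ htx
    exact hyx t ((hTlt t).1 htx)
  have hle := hmax y (ENNReal.ofReal T') hsol hagree
  rw [hTx] at hle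
  have : T' ≤ T := (ENNReal.ofReal_le_ofReal_iff hT0.le).1 hle
  simp only [hT'def] at this
  linarith
end

section
/- Let f(t, ξ_{0:ℓ}, φ) be locally Lipschitz in (ξ_{0:ℓ}, φ) (with L^∞ norm on φ) uniformly for a.e. t in compacts. If φ¹, φ² ∈ 𝓛^∞([−θ,0],ℝⁿ) are bounded, satisfy ‖φ¹ − φ²‖ = 0 (equal almost everywhere) and φ¹(0) = φ²(0), then the corresponding maximal solutions of ẋ(t) = f(t, 𝗑(t−τ₀),…,𝗑(t−τ_ℓ), 𝗑_t) with 𝗑 = φⁱ ⋄_{t0} x, τ₀ = 0, coincide. -/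
open MeasureTheory Set Filter
open scoped ENNReal

/-- Concatenation `φ ⋄_{t0} x` of an initial history `φ` (shifted to `[t0−θ,t0)`)
with a trajectory `x`. -/
noncomputable def conc18 (n : ℕ) (t0 : ℝ) (φ x : ℝ → (Fin n → ℝ)) (t : ℝ) : Fin n → ℝ :=
  if t < t0 then φ (t - t0) else x t

/-- `x` solves `ẋ(t) = f(t, 𝗑(t−τ₀),…,𝗑(t−τ_ℓ), 𝗑_t)` with `𝗑 = φ ⋄_{t0} x`,
`x(t0) = φ(0)`, on `[t0,Tx)` (integral-equation form). -/
def IsSolOn18 (n ℓ : ℕ)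
    (f : ℝ → (Fin (ℓ + 1) → (Fin n → ℝ)) → (ℝ → (Fin n → ℝ)) → (Fin n → ℝ))
    (τ : Fin (ℓ + 1) → ℝ) (t0 : ℝ) (φ x : ℝ → (Fin n → ℝ)) (Tx : ℝ≥0∞) : Prop :=
  ENNReal.ofReal t0 < Tx ∧
  ContinuousOn x {t : ℝ | t0 ≤ t ∧ ENNReal.ofReal t < Tx} ∧
  ∀ t, t0 ≤ t → ENNReal.ofReal t < Tx →
    x t = φ 0 + ∫ s in t0..t,
      f s (fun i => conc18 n t0 φ x (s - τ i)) (fun u => conc18 n t0 φ x (s + u))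

/-- A maximally defined solution. -/
def IsMaxSolOn18 (n ℓ : ℕ)
    (f : ℝ → (Fin (ℓ + 1) → (Fin n → ℝ)) → (ℝ → (Fin n → ℝ)) → (Fin n → ℝ))
    (τ : Fin (ℓ + 1) → ℝ) (t0 : ℝ) (φ x : ℝ → (Fin n → ℝ)) (Tx : ℝ≥0∞) : Prop :=
  IsSolOn18 n ℓ f τ t0 φ x Tx ∧
  ∀ y : ℝ → (Fin n → ℝ), ∀ Ty : ℝ≥0∞, IsSolOn18 n ℓ f τ t0 φ y Ty →
    (∀ t, t0 ≤ t → ENNReal.ofReal t < Tx → y t = x t) → Ty ≤ Tx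

-- helper: bound on conc18 values
lemma conc18_bound {n : ℕ} {t0 T R : ℝ} {φ x : ℝ → (Fin n → ℝ)}
    (hφ : ∀ u, ‖φ u‖ ≤ R) (hx : ∀ r ∈ Set.Icc t0 T, ‖x r‖ ≤ R)
    {v : ℝ} (hv : v ≤ T) : ‖conc18 n t0 φ x v‖ ≤ R := by
  unfold conc18
  split_ifs with h
  · exact hφ _
  · exact hx v ⟨le_of_not_gt h, hv⟩

-- helper: measurability of the history segment
lemma hist_aesm {n : ℕ} (t0 T θ s : ℝ) (φ x : ℝ → (Fin n → ℝ)) (hφ : Measurable φ)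
    (hx : ContinuousOn x (Set.Icc t0 T)) (hs : s ∈ Set.Icc t0 T) :
    AEStronglyMeasurable (fun u => conc18 n t0 φ x (s + u))
      (volume.restrict (Set.Icc (-θ) 0)) := by
  have hdec : Set.Icc (-θ) 0 =
      (Set.Icc (-θ) 0 ∩ Set.Iio (t0 - s)) ∪ (Set.Icc (-θ) 0 ∩ Set.Ici (t0 - s)) := by
    rw [← Set.inter_union_distrib_left, Set.Iio_union_Ici, Set.inter_univ]
  rw [hdec, aestronglyMeasurable_union_iff]
  constructor
  · have hm : Measurable fun u : ℝ => φ (s + u - t0) :=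
      hφ.comp (by fun_prop)
    refine hm.aestronglyMeasurable.congr ?_
    filter_upwards [self_mem_ae_restrict (measurableSet_Icc.inter measurableSet_Iio)] with u hu
    have h : s + u < t0 := by have := hu.2; simp only [Set.mem_Iio] at this; linarith
    simp [conc18, if_pos h]
  · have hcont : ContinuousOn (fun u => x (s + u))
        (Set.Icc (-θ) 0 ∩ Set.Ici (t0 - s)) := by
      refine hx.comp ((continuous_const.add continuous_id).continuousOn) ?_
      intro u hu
      have h1 : t0 - s ≤ u := hu.2
      have h2 : u ≤ 0 := hu.1.2
      exact ⟨by linarith, by linarith [hs.2]⟩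
    refine (hcont.aestronglyMeasurable (measurableSet_Icc.inter measurableSet_Ici)).congr ?_
    filter_upwards [self_mem_ae_restrict (measurableSet_Icc.inter measurableSet_Ici)] with u hu
    have h : ¬ (s + u < t0) := by have := hu.2; simp only [Set.mem_Ici] at this; linarith
    simp [conc18, if_neg h]


lemma Fint18 {n ℓ : ℕ} {θ : ℝ}
    {τ : Fin (ℓ + 1) → ℝ} (hτnn : ∀ i, 0 ≤ τ i)
    {f : ℝ → (Fin (ℓ + 1) → (Fin n → ℝ)) → (ℝ → (Fin n → ℝ)) → (Fin n → ℝ)}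
    (hLip : ∀ R > (0 : ℝ), ∀ T > (0 : ℝ), ∃ L ≥ (0 : ℝ),
      ∀ᵐ t ∂(volume.restrict (Set.Icc 0 T)),
        ∀ ξ ζ : Fin (ℓ + 1) → (Fin n → ℝ), (∀ i, ‖ξ i‖ ≤ R) → (∀ i, ‖ζ i‖ ≤ R) →
        ∀ φ ψ : ℝ → (Fin n → ℝ),
          AEStronglyMeasurable φ (volume.restrict (Set.Icc (-θ) 0)) →
          AEStronglyMeasurable ψ (volume.restrict (Set.Icc (-θ) 0)) →
          eLpNorm φ ⊤ (volume.restrict (Set.Icc (-θ) 0)) ≤ ENNReal.ofReal R →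
          eLpNorm ψ ⊤ (volume.restrict (Set.Icc (-θ) 0)) ≤ ENNReal.ofReal R →
          ‖f t ξ φ - f t ζ ψ‖ ≤ L * max (⨆ i, ‖ξ i - ζ i‖)
            (eLpNorm (fun s => φ s - ψ s) ⊤ (volume.restrict (Set.Icc (-θ) 0))).toReal)
    (hf0 : ∀ T > (0 : ℝ), ∃ C : ℝ, ∀ᵐ t ∂(volume.restrict (Set.Icc 0 T)),
      ‖f t (fun _ => 0) 0‖ ≤ C)
    (hfmeas : ∀ t0 ≥ (0 : ℝ), ∀ T > t0, ∀ φ : ℝ → (Fin n → ℝ), Measurable φ →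
      (∃ C : ℝ, ∀ u, ‖φ u‖ ≤ C) → ∀ x : ℝ → (Fin n → ℝ), ContinuousOn x (Set.Icc t0 T) →
      AEMeasurable (fun t => f t (fun i => conc18 n t0 φ x (t - τ i))
        (fun u => conc18 n t0 φ x (t + u))) (volume.restrict (Set.Icc t0 T)))
    {t0 T R : ℝ} (ht0 : 0 ≤ t0) (hT : t0 < T) (hR : 0 < R)
    {φ x : ℝ → (Fin n → ℝ)} (hφm : Measurable φ) (hφR : ∀ u, ‖φ u‖ ≤ R)
    (hxc : ContinuousOn x (Set.Icc t0 T)) (hxR : ∀ r ∈ Set.Icc t0 T, ‖x r‖ ≤ R) :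
    Integrable (fun s => f s (fun i => conc18 n t0 φ x (s - τ i))
      (fun u => conc18 n t0 φ x (s + u))) (volume.restrict (Set.Icc t0 T)) := by
  have hTpos : 0 < T := lt_of_le_of_lt ht0 hT
  obtain ⟨L, hL0, hLae⟩ := hLip R hR T hTpos
  obtain ⟨C0, hC0ae⟩ := hf0 T hTpos
  have hsub : Set.Icc t0 T ⊆ Set.Icc 0 T := Set.Icc_subset_Icc_left ht0
  have haesm : AEStronglyMeasurable (fun s => f s (fun i => conc18 n t0 φ x (s - τ i))
      (fun u => conc18 n t0 φ x (s + u))) (volume.restrict (Set.Icc t0 T)) :=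
    (hfmeas t0 ht0 T hT φ hφm ⟨R, hφR⟩ x hxc).aestronglyMeasurable
  refine Integrable.mono' (integrable_const (L * R + C0)) haesm ?_
  filter_upwards [ae_restrict_of_ae_restrict_of_subset hsub hLae,
    ae_restrict_of_ae_restrict_of_subset hsub hC0ae,
    self_mem_ae_restrict measurableSet_Icc] with s hsL hsC hsmem
  have hξ : ∀ i, ‖conc18 n t0 φ x (s - τ i)‖ ≤ R := by
    intro i
    exact conc18_bound hφR hxR (by linarith [hτnn i, hsmem.2])
  have hhist : ∀ u ∈ Set.Icc (-θ) (0:ℝ), ‖conc18 n t0 φ x (s + u)‖ ≤ R := by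
    intro u hu
    exact conc18_bound hφR hxR (by linarith [hu.2, hsmem.2])
  have heL : eLpNorm (fun u => conc18 n t0 φ x (s + u)) ⊤
      (volume.restrict (Set.Icc (-θ) 0)) ≤ ENNReal.ofReal R := by
    rw [eLpNorm_exponent_top]
    refine eLpNormEssSup_le_of_ae_bound (C := R) ?_
    filter_upwards [self_mem_ae_restrict measurableSet_Icc] with u hu
    exact hhist u hu
  have key := hsL (fun i => conc18 n t0 φ x (s - τ i)) (fun _ => 0) hξ
      (fun i => by simpa using hR.le)
      (fun u => conc18 n t0 φ x (s + u)) 0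
      (hist_aesm t0 T θ s φ x hφm hxc hsmem) aestronglyMeasurable_const
      heL (by simpa [eLpNorm_zero] using (zero_le _))
  have hmax : max (⨆ i, ‖conc18 n t0 φ x (s - τ i) - 0‖)
      (eLpNorm (fun u => conc18 n t0 φ x (s + u) - (0 : ℝ → Fin n → ℝ) u) ⊤
        (volume.restrict (Set.Icc (-θ) 0))).toReal ≤ R := by
    refine max_le (ciSup_le fun i => by simpa using hξ i) ?_
    refine ENNReal.toReal_le_of_le_ofReal hR.le ?_
    simpa using heL
  calc ‖f s (fun i => conc18 n t0 φ x (s - τ i)) (fun u => conc18 n t0 φ x (s + u))‖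
      ≤ ‖f s (fun i => conc18 n t0 φ x (s - τ i)) (fun u => conc18 n t0 φ x (s + u))
          - f s (fun _ => 0) 0‖ + ‖f s (fun _ => 0) 0‖ := by
        have := norm_sub_norm_le (f s (fun i => conc18 n t0 φ x (s - τ i))
          (fun u => conc18 n t0 φ x (s + u))) (f s (fun _ => 0) 0)
        linarith
    _ ≤ L * R + C0 := by
        refine add_le_add (le_trans key ?_) hsC
        exact mul_le_mul_of_nonneg_left hmax hL0

lemma uniq18 {n ℓ : ℕ} {θ : ℝ}
    {τ : Fin (ℓ + 1) → ℝ} (hτnn : ∀ i, 0 ≤ τ i)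
    {f : ℝ → (Fin (ℓ + 1) → (Fin n → ℝ)) → (ℝ → (Fin n → ℝ)) → (Fin n → ℝ)}
    (hclass : ∀ t : ℝ, ∀ ξ : Fin (ℓ + 1) → (Fin n → ℝ), ∀ φ ψ : ℝ → (Fin n → ℝ),
      φ =ᵐ[volume.restrict (Set.Icc (-θ) 0)] ψ → f t ξ φ = f t ξ ψ)
    (hLip : ∀ R > (0 : ℝ), ∀ T > (0 : ℝ), ∃ L ≥ (0 : ℝ),
      ∀ᵐ t ∂(volume.restrict (Set.Icc 0 T)),
        ∀ ξ ζ : Fin (ℓ + 1) → (Fin n → ℝ), (∀ i, ‖ξ i‖ ≤ R) → (∀ i, ‖ζ i‖ ≤ R) →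
        ∀ φ ψ : ℝ → (Fin n → ℝ),
          AEStronglyMeasurable φ (volume.restrict (Set.Icc (-θ) 0)) →
          AEStronglyMeasurable ψ (volume.restrict (Set.Icc (-θ) 0)) →
          eLpNorm φ ⊤ (volume.restrict (Set.Icc (-θ) 0)) ≤ ENNReal.ofReal R →
          eLpNorm ψ ⊤ (volume.restrict (Set.Icc (-θ) 0)) ≤ ENNReal.ofReal R →
          ‖f t ξ φ - f t ζ ψ‖ ≤ L * max (⨆ i, ‖ξ i - ζ i‖)
            (eLpNorm (fun s => φ s - ψ s) ⊤ (volume.restrict (Set.Icc (-θ) 0))).toReal)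
    (hf0 : ∀ T > (0 : ℝ), ∃ C : ℝ, ∀ᵐ t ∂(volume.restrict (Set.Icc 0 T)),
      ‖f t (fun _ => 0) 0‖ ≤ C)
    (hfmeas : ∀ t0 ≥ (0 : ℝ), ∀ T > t0, ∀ φ : ℝ → (Fin n → ℝ), Measurable φ →
      (∃ C : ℝ, ∀ u, ‖φ u‖ ≤ C) → ∀ x : ℝ → (Fin n → ℝ), ContinuousOn x (Set.Icc t0 T) →
      AEMeasurable (fun t => f t (fun i => conc18 n t0 φ x (t - τ i))
        (fun u => conc18 n t0 φ x (t + u))) (volume.restrict (Set.Icc t0 T)))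
    {t0 : ℝ} (ht0 : 0 ≤ t0)
    {φ : ℝ → (Fin n → ℝ)} (hφm : Measurable φ) (hφb : ∃ C : ℝ, ∀ u, ‖φ u‖ ≤ C)
    {x y : ℝ → (Fin n → ℝ)} {Tx Ty : ℝ≥0∞}
    (hx : IsSolOn18 n ℓ f τ t0 φ x Tx) (hy : IsSolOn18 n ℓ f τ t0 φ y Ty) :
    ∀ t, t0 ≤ t → ENNReal.ofReal t < Tx → ENNReal.ofReal t < Ty → x t = y t := by
  intro T hT0 hTx hTy
  -- the value at t0
  have hxt0 : x t0 = φ 0 := by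
    have := hx.2.2 t0 le_rfl hx.1
    simpa using this
  have hyt0 : y t0 = φ 0 := by
    have := hy.2.2 t0 le_rfl hy.1
    simpa using this
  rcases eq_or_lt_of_le hT0 with rfl | hlt
  · rw [hxt0, hyt0]
  have hTpos : 0 < T := lt_of_le_of_lt ht0 hlt
  -- continuity on Icc t0 T
  have hxc : ContinuousOn x (Set.Icc t0 T) := by
    refine hx.2.1.mono fun r hr => ⟨hr.1, lt_of_le_of_lt ?_ hTx⟩
    exact ENNReal.ofReal_le_ofReal hr.2
  have hyc : ContinuousOn y (Set.Icc t0 T) := by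
    refine hy.2.1.mono fun r hr => ⟨hr.1, lt_of_le_of_lt ?_ hTy⟩
    exact ENNReal.ofReal_le_ofReal hr.2
  -- bound R
  obtain ⟨Cx, hCx⟩ := isCompact_Icc.exists_bound_of_continuousOn hxc
  obtain ⟨Cy, hCy⟩ := isCompact_Icc.exists_bound_of_continuousOn hyc
  obtain ⟨Cφ, hCφ⟩ := hφb
  set R : ℝ := max 1 (max Cx (max Cy Cφ)) with hRdef
  have hR : 0 < R := lt_of_lt_of_le one_pos (le_max_left _ _)
  have hφR : ∀ u, ‖φ u‖ ≤ R := fun u =>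
    (hCφ u).trans ((le_max_right _ _).trans ((le_max_right _ _).trans (le_max_right _ _)))
  have hxR : ∀ r ∈ Set.Icc t0 T, ‖x r‖ ≤ R := fun r hr =>
    (hCx r hr).trans ((le_max_left _ _).trans (le_max_right _ _))
  have hyR : ∀ r ∈ Set.Icc t0 T, ‖y r‖ ≤ R := fun r hr =>
    (hCy r hr).trans (((le_max_left _ _).trans (le_max_right _ _)).trans (le_max_right _ _))
  obtain ⟨L, hL0, hLae⟩ := hLip R hR T hTpos
  set ε : ℝ := 1 / (2 * (L + 1)) with hεdef
  have hε : 0 < ε := by positivity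
  have hLε : L * ε ≤ 1 / 2 := by
    rw [hεdef, mul_one_div, div_le_div_iff₀ (by positivity) (by norm_num : (0:ℝ) < 2)]
    nlinarith
  -- integrability
  have hFx : Integrable (fun s => f s (fun i => conc18 n t0 φ x (s - τ i))
      (fun u => conc18 n t0 φ x (s + u))) (volume.restrict (Set.Icc t0 T)) :=
    Fint18 hτnn hLip hf0 hfmeas ht0 hlt hR hφm hφR hxc hxR
  have hFy : Integrable (fun s => f s (fun i => conc18 n t0 φ y (s - τ i))
      (fun u => conc18 n t0 φ y (s + u))) (volume.restrict (Set.Icc t0 T)) :=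
    Fint18 hτnn hLip hf0 hfmeas ht0 hlt hR hφm hφR hyc hyR
  have hFxI : ∀ a b, t0 ≤ a → a ≤ b → b ≤ T →
      IntervalIntegrable (fun s => f s (fun i => conc18 n t0 φ x (s - τ i))
        (fun u => conc18 n t0 φ x (s + u))) volume a b := by
    intro a b ha hab hb
    rw [intervalIntegrable_iff]
    refine IntegrableOn.mono_set hFx ?_
    rw [Set.uIoc_of_le hab]
    exact fun r hr => ⟨le_trans ha hr.1.le, le_trans hr.2 hb⟩
  have hFyI : ∀ a b, t0 ≤ a → a ≤ b → b ≤ T →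
      IntervalIntegrable (fun s => f s (fun i => conc18 n t0 φ y (s - τ i))
        (fun u => conc18 n t0 φ y (s + u))) volume a b := by
    intro a b ha hab hb
    rw [intervalIntegrable_iff]
    refine IntegrableOn.mono_set hFy ?_
    rw [Set.uIoc_of_le hab]
    exact fun r hr => ⟨le_trans ha hr.1.le, le_trans hr.2 hb⟩
  -- the key step
  have key : ∀ c, c ∈ Set.Icc t0 T → (∀ r ∈ Set.Icc t0 c, x r = y r) →
      ∀ r ∈ Set.Icc t0 (min (c + ε) T), x r = y r := by
    intro c hc hzero
    set b : ℝ := min (c + ε) T with hbdef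
    have hcb : c ≤ b := le_min (by linarith) hc.2
    have hbT : b ≤ T := min_le_right _ _
    have htc : t0 ≤ c := hc.1
    -- maximum of the difference on [c, b]
    have hdc : ContinuousOn (fun r => ‖x r - y r‖) (Set.Icc c b) := by
      refine ((hxc.mono ?_).sub (hyc.mono ?_)).norm <;>
        exact fun r hr => ⟨le_trans htc hr.1, le_trans hr.2 hbT⟩
    obtain ⟨rs, hrsmem, hrsmax⟩ := isCompact_Icc.exists_isMaxOn (Set.nonempty_Icc.2 hcb) hdc
    set M : ℝ := ‖x rs - y rs‖ with hMdef
    have hM0 : 0 ≤ M := norm_nonneg _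
    have hMb : ∀ r ∈ Set.Icc t0 b, ‖x r - y r‖ ≤ M := by
      intro r hr
      rcases le_or_gt r c with h | h
      · rw [hzero r ⟨hr.1, h⟩, sub_self]; simpa using hM0
      · exact hrsmax ⟨h.le, hr.2⟩
    -- equality of the vector fields on [t0, c]
    have hconc_eq : ∀ v ≤ c, conc18 n t0 φ x v = conc18 n t0 φ y v := by
      intro v hv
      unfold conc18
      split_ifs with h
      · rfl
      · exact hzero v ⟨le_of_not_gt h, hv⟩
    have hFeq : ∀ s ∈ Set.Icc t0 c,
        f s (fun i => conc18 n t0 φ x (s - τ i)) (fun u => conc18 n t0 φ x (s + u)) =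
        f s (fun i => conc18 n t0 φ y (s - τ i)) (fun u => conc18 n t0 φ y (s + u)) := by
      intro s hs
      have h1 : (fun i => conc18 n t0 φ x (s - τ i)) = fun i => conc18 n t0 φ y (s - τ i) := by
        funext i
        exact hconc_eq _ (by linarith [hτnn i, hs.2])
      rw [h1]
      refine hclass s _ _ _ ?_
      filter_upwards [self_mem_ae_restrict measurableSet_Icc] with u hu
      exact hconc_eq _ (by linarith [hu.2, hs.2])
    -- the integral bound on [c, b]
    have hbound : ∀ t ∈ Set.Icc c b, ‖x t - y t‖ ≤ L * M * (t - c) := by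
      intro t ht
      have htT : t ≤ T := le_trans ht.2 hbT
      have ht0t : t0 ≤ t := le_trans htc ht.1
      have hxeq := hx.2.2 t ht0t (lt_of_le_of_lt (ENNReal.ofReal_le_ofReal htT) hTx)
      have hyeq := hy.2.2 t ht0t (lt_of_le_of_lt (ENNReal.ofReal_le_ofReal htT) hTy)
      have hsplit : x t - y t = ∫ s in c..t,
          (f s (fun i => conc18 n t0 φ x (s - τ i)) (fun u => conc18 n t0 φ x (s + u))
           - f s (fun i => conc18 n t0 φ y (s - τ i)) (fun u => conc18 n t0 φ y (s + u))) := by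
        rw [hxeq, hyeq]
        have hsub := intervalIntegral.integral_sub (hFxI t0 t le_rfl ht0t htT)
          (hFyI t0 t le_rfl ht0t htT)
        have hadj := intervalIntegral.integral_add_adjacent_intervals
          (f := fun s =>
            (f s (fun i => conc18 n t0 φ x (s - τ i)) (fun u => conc18 n t0 φ x (s + u))
           - f s (fun i => conc18 n t0 φ y (s - τ i)) (fun u => conc18 n t0 φ y (s + u))))
          (μ := volume) (a := t0) (b := c) (c := t)
          ((hFxI t0 c le_rfl htc (le_trans hcb hbT)).sub (hFyI t0 c le_rfl htc (le_trans hcb hbT)))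
          ((hFxI c t htc ht.1 htT).sub (hFyI c t htc ht.1 htT))
        have hzero' : (∫ s in t0..c,
            (f s (fun i => conc18 n t0 φ x (s - τ i)) (fun u => conc18 n t0 φ x (s + u))
           - f s (fun i => conc18 n t0 φ y (s - τ i)) (fun u => conc18 n t0 φ y (s + u)))) = 0 := by
          rw [← intervalIntegral.integral_zero (a := t0) (b := c) (μ := volume) (E := Fin n → ℝ)]
          refine intervalIntegral.integral_congr ?_
          intro s hs
          rw [Set.uIcc_of_le htc] at hs
          show (f s (fun i => conc18 n t0 φ x (s - τ i)) fun u => conc18 n t0 φ x (s + u)) -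
              (f s (fun i => conc18 n t0 φ y (s - τ i)) fun u => conc18 n t0 φ y (s + u)) = 0
          rw [hFeq s hs, sub_self]
        simp only [add_sub_add_left_eq_sub]
        rw [← hsub, ← hadj, hzero', zero_add]
      rw [hsplit]
      have hsubI : Set.uIoc c t ⊆ Set.Icc 0 T := by
        rw [Set.uIoc_of_le ht.1]
        exact fun r hr => ⟨le_trans ht0 (le_trans htc hr.1.le), le_trans hr.2 htT⟩
      have hae : ∀ᵐ s ∂volume.restrict (Set.uIoc c t),
          ‖f s (fun i => conc18 n t0 φ x (s - τ i)) (fun u => conc18 n t0 φ x (s + u))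
           - f s (fun i => conc18 n t0 φ y (s - τ i)) (fun u => conc18 n t0 φ y (s + u))‖
            ≤ L * M := by
        filter_upwards [ae_restrict_of_ae_restrict_of_subset hsubI hLae,
          self_mem_ae_restrict measurableSet_uIoc] with s hsL hsmem
        rw [Set.uIoc_of_le ht.1] at hsmem
        have hsT : s ∈ Set.Icc t0 T := ⟨le_trans htc hsmem.1.le, le_trans hsmem.2 htT⟩
        have hξx : ∀ i, ‖conc18 n t0 φ x (s - τ i)‖ ≤ R := fun i =>
          conc18_bound hφR hxR (by linarith [hτnn i, hsT.2])
        have hξy : ∀ i, ‖conc18 n t0 φ y (s - τ i)‖ ≤ R := fun i =>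
          conc18_bound hφR hyR (by linarith [hτnn i, hsT.2])
        have heLx : eLpNorm (fun u => conc18 n t0 φ x (s + u)) ⊤
            (volume.restrict (Set.Icc (-θ) 0)) ≤ ENNReal.ofReal R := by
          rw [eLpNorm_exponent_top]
          refine eLpNormEssSup_le_of_ae_bound (C := R) ?_
          filter_upwards [self_mem_ae_restrict measurableSet_Icc] with u hu
          exact conc18_bound hφR hxR (by linarith [hu.2, hsT.2])
        have heLy : eLpNorm (fun u => conc18 n t0 φ y (s + u)) ⊤
            (volume.restrict (Set.Icc (-θ) 0)) ≤ ENNReal.ofReal R := by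
          rw [eLpNorm_exponent_top]
          refine eLpNormEssSup_le_of_ae_bound (C := R) ?_
          filter_upwards [self_mem_ae_restrict measurableSet_Icc] with u hu
          exact conc18_bound hφR hyR (by linarith [hu.2, hsT.2])
        have key' := hsL (fun i => conc18 n t0 φ x (s - τ i))
          (fun i => conc18 n t0 φ y (s - τ i)) hξx hξy
          (fun u => conc18 n t0 φ x (s + u)) (fun u => conc18 n t0 φ y (s + u))
          (hist_aesm t0 T θ s φ x hφm hxc hsT) (hist_aesm t0 T θ s φ y hφm hyc hsT)
          heLx heLy
        refine le_trans key' ?_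
        refine mul_le_mul_of_nonneg_left (max_le ?_ ?_) hL0
        · refine ciSup_le fun i => ?_
          show ‖conc18 n t0 φ x (s - τ i) - conc18 n t0 φ y (s - τ i)‖ ≤ M
          unfold conc18
          split_ifs with h
          · simpa using hM0
          · refine hMb _ ⟨le_of_not_gt h, ?_⟩
            have : s ≤ b := le_trans hsmem.2 ht.2
            linarith [hτnn i]
        · refine ENNReal.toReal_le_of_le_ofReal hM0 ?_
          rw [eLpNorm_exponent_top]
          refine eLpNormEssSup_le_of_ae_bound (C := M) ?_
          filter_upwards [self_mem_ae_restrict measurableSet_Icc] with u hu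
          show ‖conc18 n t0 φ x (s + u) - conc18 n t0 φ y (s + u)‖ ≤ M
          unfold conc18
          split_ifs with h
          · simpa using hM0
          · refine hMb _ ⟨le_of_not_gt h, ?_⟩
            have : s ≤ b := le_trans hsmem.2 ht.2
            linarith [hu.2]
      have := intervalIntegral.norm_integral_le_abs_of_norm_le hae
        (intervalIntegrable_const (c := L * M))
      rw [intervalIntegral.integral_const, smul_eq_mul, abs_of_nonneg
        (mul_nonneg (by linarith [ht.1]) (mul_nonneg hL0 hM0))] at this
      calc _ ≤ (t - c) * (L * M) := this
        _ = L * M * (t - c) := by ring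
    -- conclude M = 0
    have hM0' : M = 0 := by
      have h1 : M ≤ L * M * (rs - c) := hbound rs hrsmem
      have h2 : rs - c ≤ ε := by
        have : rs ≤ b := hrsmem.2
        have : b ≤ c + ε := min_le_left _ _
        linarith [hrsmem.2]
      nlinarith [mul_nonneg hL0 hM0]
    intro r hr
    rcases le_or_gt r c with h | h
    · exact hzero r ⟨hr.1, h⟩
    · have : ‖x r - y r‖ ≤ M := hMb r hr
      rw [hM0'] at this
      have := le_antisymm this (norm_nonneg _)
      rwa [norm_eq_zero, sub_eq_zero] at this
  -- induction
  have main : ∀ m : ℕ, ∀ r ∈ Set.Icc t0 (min (t0 + m * ε) T), x r = y r := by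
    intro m
    induction m with
    | zero =>
      intro r hr
      have : min (t0 + (0:ℕ) * ε) T = t0 := by
        simp [min_eq_left, hlt.le]
      rw [this] at hr
      have : r = t0 := le_antisymm hr.2 hr.1
      rw [this, hxt0, hyt0]
    | succ m ih =>
      set c : ℝ := min (t0 + m * ε) T with hcdef
      have hcmem : c ∈ Set.Icc t0 T :=
        ⟨le_min (le_add_of_nonneg_right (mul_nonneg (Nat.cast_nonneg m) hε.le)) hlt.le,
          min_le_right _ _⟩
      have hstep := key c hcmem ih
      intro r hr
      refine hstep r ⟨hr.1, le_trans hr.2 ?_⟩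
      refine le_min ?_ (min_le_right _ _)
      have h1 : min (t0 + ((m:ℕ)+1 : ℕ) * ε) T ≤ min (t0 + (m:ℝ) * ε + ε) (T + ε) :=
        min_le_min (le_of_eq (by push_cast; ring)) (by linarith)
      rwa [min_add_add_right] at h1
  obtain ⟨m, hm⟩ := exists_nat_ge ((T - t0) / ε)
  have hTm : T ≤ t0 + m * ε := by
    rw [div_le_iff₀ hε] at hm
    linarith
  have := main m T ⟨hlt.le, le_min hTm le_rfl⟩
  exact this

lemma conv18 {n ℓ : ℕ} {θ : ℝ}
    {τ : Fin (ℓ + 1) → ℝ} (hτnn : ∀ i, 0 ≤ τ i) (hτθ : ∀ i, τ i ≤ θ)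
    {f : ℝ → (Fin (ℓ + 1) → (Fin n → ℝ)) → (ℝ → (Fin n → ℝ)) → (Fin n → ℝ)}
    (hclass : ∀ t : ℝ, ∀ ξ : Fin (ℓ + 1) → (Fin n → ℝ), ∀ φ ψ : ℝ → (Fin n → ℝ),
      φ =ᵐ[volume.restrict (Set.Icc (-θ) 0)] ψ → f t ξ φ = f t ξ ψ)
    {t0 : ℝ} {φ1 φ2 : ℝ → (Fin n → ℝ)}
    (hae : φ1 =ᵐ[volume.restrict (Set.Icc (-θ) 0)] φ2) (h0 : φ1 0 = φ2 0)
    {x : ℝ → (Fin n → ℝ)} {Tx : ℝ≥0∞}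
    (h : IsSolOn18 n ℓ f τ t0 φ1 x Tx) : IsSolOn18 n ℓ f τ t0 φ2 x Tx := by
  obtain ⟨h1, h2, h3⟩ := h
  refine ⟨h1, h2, fun t ht htx => ?_⟩
  rw [h3 t ht htx, h0]
  congr 1
  -- the null set where the histories differ
  set N : Set ℝ := {v | φ1 v ≠ φ2 v} ∩ Set.Icc (-θ) 0 with hNdef
  have hN : volume N = 0 := by
    have h' : (volume.restrict (Set.Icc (-θ) 0)) {v | ¬ φ1 v = φ2 v} = 0 := hae
    rwa [Measure.restrict_apply' measurableSet_Icc] at h'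
  have hbad : ∀ᵐ s ∂(volume : Measure ℝ), ∀ i, ¬ (s - (τ i + t0)) ∈ N := by
    rw [ae_all_iff]
    intro i
    have hp := (measurePreserving_sub_right (volume : Measure ℝ)
      (τ i + t0)).quasiMeasurePreserving.preimage_null hN
    rw [ae_iff]
    simp only [not_not]; exact hp
  refine intervalIntegral.integral_congr_ae ?_
  filter_upwards [hbad] with s hs hsI
  rw [Set.uIoc_of_le ht] at hsI
  have hst0 : t0 < s := hsI.1
  -- discrete arguments coincide
  have hξ : (fun i => conc18 n t0 φ1 x (s - τ i)) = fun i => conc18 n t0 φ2 x (s - τ i) := by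
    funext i
    unfold conc18
    split_ifs with hcase
    · have hv : s - τ i - t0 ∉ N := by
        have := hs i
        rwa [show s - (τ i + t0) = s - τ i - t0 by ring] at this
      have hvmem : s - τ i - t0 ∈ Set.Icc (-θ) 0 :=
        ⟨by linarith [hτθ i], by linarith⟩
      by_contra hne
      exact hv ⟨fun hc => hne (by rw [hc]), hvmem⟩
    · rfl
  rw [hξ]
  -- distributed argument a.e. equal
  refine hclass s _ _ _ ?_
  have hpre : ∀ᵐ u ∂(volume : Measure ℝ), ¬ (s + u - t0) ∈ N := by
    have hp := (measurePreserving_add_right (volume : Measure ℝ)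
      (s - t0)).quasiMeasurePreserving.preimage_null hN
    rw [ae_iff]
    refine measure_mono_null ?_ hp
    intro u hu
    simp only [Set.mem_setOf_eq, not_not] at hu
    show u + (s - t0) ∈ N
    rwa [show u + (s - t0) = s + u - t0 by ring]
  filter_upwards [ae_restrict_of_ae hpre, self_mem_ae_restrict measurableSet_Icc] with u hu huI
  unfold conc18
  split_ifs with hcase
  · have hvmem : s + u - t0 ∈ Set.Icc (-θ) 0 := ⟨by linarith [huI.1], by linarith⟩
    by_contra hne
    exact hu ⟨fun hc => hne (by rw [hc]), hvmem⟩
  · rfl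

/-- Insensitivity to modifications of the initial history on null sets: if
`φ¹ = φ²` a.e. on `[−θ,0]` and `φ¹(0) = φ²(0)`, the corresponding maximal solutions
of the mixed discrete/distributed delay system coincide. -/
theorem stmt_18 (n ℓ : ℕ) (θ : ℝ) (hθ : 0 < θ)
    (τ : Fin (ℓ + 1) → ℝ) (hτ0 : τ 0 = 0) (hτmono : StrictMono τ)
    (hτlast : τ (Fin.last ℓ) = θ)
    (f : ℝ → (Fin (ℓ + 1) → (Fin n → ℝ)) → (ℝ → (Fin n → ℝ)) → (Fin n → ℝ))
    -- the distributed-delay argument of `f` only depends on the a.e. class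
    (hclass : ∀ t : ℝ, ∀ ξ : Fin (ℓ + 1) → (Fin n → ℝ), ∀ φ ψ : ℝ → (Fin n → ℝ),
      φ =ᵐ[volume.restrict (Set.Icc (-θ) 0)] ψ → f t ξ φ = f t ξ ψ)
    -- local Lipschitz continuity in `(ξ_{0:ℓ}, φ)` (with `L^∞` norm on `φ`),
    -- uniformly for a.e. `t` in compacts
    (hLip : ∀ R > (0 : ℝ), ∀ T > (0 : ℝ), ∃ L ≥ (0 : ℝ),
      ∀ᵐ t ∂(volume.restrict (Set.Icc 0 T)),
        ∀ ξ ζ : Fin (ℓ + 1) → (Fin n → ℝ), (∀ i, ‖ξ i‖ ≤ R) → (∀ i, ‖ζ i‖ ≤ R) →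
        ∀ φ ψ : ℝ → (Fin n → ℝ),
          AEStronglyMeasurable φ (volume.restrict (Set.Icc (-θ) 0)) →
          AEStronglyMeasurable ψ (volume.restrict (Set.Icc (-θ) 0)) →
          eLpNorm φ ⊤ (volume.restrict (Set.Icc (-θ) 0)) ≤ ENNReal.ofReal R →
          eLpNorm ψ ⊤ (volume.restrict (Set.Icc (-θ) 0)) ≤ ENNReal.ofReal R →
          ‖f t ξ φ - f t ζ ψ‖ ≤ L * max (⨆ i, ‖ξ i - ζ i‖)
            (eLpNorm (fun s => φ s - ψ s) ⊤ (volume.restrict (Set.Icc (-θ) 0))).toReal)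
    (hf0 : ∀ T > (0 : ℝ), ∃ C : ℝ, ∀ᵐ t ∂(volume.restrict (Set.Icc 0 T)),
      ‖f t (fun _ => 0) 0‖ ≤ C)
    (hfmeas : ∀ t0 ≥ (0 : ℝ), ∀ T > t0, ∀ φ : ℝ → (Fin n → ℝ), Measurable φ →
      (∃ C : ℝ, ∀ u, ‖φ u‖ ≤ C) → ∀ x : ℝ → (Fin n → ℝ), ContinuousOn x (Set.Icc t0 T) →
      AEMeasurable (fun t => f t (fun i => conc18 n t0 φ x (t - τ i))
        (fun u => conc18 n t0 φ x (t + u))) (volume.restrict (Set.Icc t0 T)))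
    (t0 : ℝ) (ht0 : 0 ≤ t0)
    (φ1 φ2 : ℝ → (Fin n → ℝ)) (hφ1m : Measurable φ1) (hφ2m : Measurable φ2)
    (hφ1b : ∃ C : ℝ, ∀ u, ‖φ1 u‖ ≤ C) (hφ2b : ∃ C : ℝ, ∀ u, ‖φ2 u‖ ≤ C)
    (hae : φ1 =ᵐ[volume.restrict (Set.Icc (-θ) 0)] φ2) (h0 : φ1 0 = φ2 0)
    (x1 x2 : ℝ → (Fin n → ℝ)) (T1 T2 : ℝ≥0∞)
    (hx1 : IsMaxSolOn18 n ℓ f τ t0 φ1 x1 T1)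
    (hx2 : IsMaxSolOn18 n ℓ f τ t0 φ2 x2 T2) :
    T1 = T2 ∧ ∀ t, t0 ≤ t → ENNReal.ofReal t < T1 → x1 t = x2 t := by
  have hτnn : ∀ i, 0 ≤ τ i := fun i => by
    have := hτmono.monotone (Fin.zero_le i)
    rw [hτ0] at this; exact this
  have hτθ : ∀ i, τ i ≤ θ := fun i => by
    have := hτmono.monotone (Fin.le_last i)
    rw [hτlast] at this; exact this
  have s1 : IsSolOn18 n ℓ f τ t0 φ2 x1 T1 := conv18 hτnn hτθ hclass hae h0 hx1.1
  have s2 : IsSolOn18 n ℓ f τ t0 φ1 x2 T2 := conv18 hτnn hτθ hclass hae.symm h0.symm hx2.1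
  have huniq : ∀ t, t0 ≤ t → ENNReal.ofReal t < T1 → ENNReal.ofReal t < T2 → x1 t = x2 t :=
    uniq18 hτnn hclass hLip hf0 hfmeas ht0 hφ2m hφ2b s1 hx2.1
  have hTeq : T1 = T2 := by
    rcases le_total T1 T2 with hle | hle
    · refine le_antisymm hle ?_
      exact hx1.2 x2 T2 s2 fun t ht h1 => (huniq t ht h1 (lt_of_lt_of_le h1 hle)).symm
    · refine le_antisymm ?_ hle
      exact hx2.2 x1 T1 s1 fun t ht h2 => huniq t ht (lt_of_lt_of_le h2 hle) h2
  exact ⟨hTeq, fun t ht h1 => huniq t ht h1 (hTeq ▸ h1)⟩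
end
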